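/- arXiv:2112.11896 — 4 statements merged into one kernel-verified Lean document; each statement's English description precedes it below -/
import Mathlib

section
/- Let q be a prime power, let F_q ⊆ F_{q²} be the finite fields with q and q² elements, and let α_1, …, α_{q+1} be the (q+1) distinct (q+1)-st roots of unity in F_{q²}. If k is odd with 1 ≤ k ≤ q, then the code C = {(h(α_1)+h(α_1)^q, …, h(α_{q+1})+h(α_{q+1})^q) : h ∈ F_{q²}[X], deg h ≤ (k−1)/2} is a k-dimensional F_q-linear subspace of F_q^{q+1} with minimum distance q+2−k (i.e. a [q+1,k,q+2−k]_q MDS code), and moreover C is a generalised Reed–Solomon code over F_q. -/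
set_option maxHeartbeats 1600000

open Polynomial

/-- A generalised Reed–Solomon code of length `q+1` and dimension `k`, with symbols from the
field `F` of `q` elements, viewed inside the `F`-algebra `K` via `algebraMap`:
the set of words `(θ₁ f(a₁), …, θ_q f(a_q), θ_{q+1} f_{k-1})` where `f` ranges over the
polynomials in `F[X]` of degree at most `k-1`, `a : Fin q → F` is an enumeration of the
elements of `F`, `f_{k-1}` is the coefficient of `X^(k-1)` in `f`, and the `θ i` are fixed
nonzero elements of `F`. -/
def IsGRSCode (q k : ℕ) (F K : Type*) [Field F] [CommRing K] [Algebra F K]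
    (Code : Set (Fin (q + 1) → K)) : Prop :=
  ∃ (a : Fin q → F) (θ : Fin (q + 1) → F),
    Function.Bijective a ∧ (∀ i, θ i ≠ 0) ∧
    Code = { w | ∃ f : Polynomial F, f.degree ≤ (k - 1 : ℕ) ∧
      w = fun i => algebraMap F K
        (θ i * (Fin.snoc (fun j : Fin q => f.eval (a j)) (f.coeff (k - 1)) : Fin (q + 1) → F) i) }

section GRSAux

open Finset

set_option linter.unusedSectionVars false
set_option maxHeartbeats 1000000

lemma aux_card_le_natDegree {K : Type*} [Field K] [DecidableEq K]
    (p : K[X]) (hp : p ≠ 0) {ι : Type*} (s : Finset ι) (f : ι → K)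
    (hinj : Set.InjOn f s) (hroot : ∀ i ∈ s, p.eval (f i) = 0) : s.card ≤ p.natDegree := by
  calc s.card = (s.image f).card := (Finset.card_image_of_injOn hinj).symm
    _ ≤ p.roots.toFinset.card := by
        apply Finset.card_le_card
        intro x hx
        simp only [Finset.mem_image] at hx
        obtain ⟨i, hi, rfl⟩ := hx
        simp only [Multiset.mem_toFinset, mem_roots hp, IsRoot.def]
        exact hroot i hi
    _ ≤ Multiset.card p.roots := p.roots.toFinset_card_le
    _ ≤ p.natDegree := p.card_roots'

lemma aux_Xq_sub_X_natDegree {K : Type*} [Field K] {q : ℕ} (hq : 2 ≤ q) (c : K) (hc : c ≠ 0) :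
    ((X : K[X]) ^ q - C c * X ≠ 0) ∧ ((X : K[X]) ^ q - C c * X).natDegree = q := by
  have hdeg : ((C c * X : K[X])).degree < ((X : K[X]) ^ q).degree := by
    rw [degree_C_mul hc, degree_X, degree_X_pow]
    exact_mod_cast hq
  have h1 : ((X : K[X]) ^ q - C c * X).degree = (q : WithBot ℕ) := by
    rw [degree_sub_eq_left_of_degree_lt hdeg, degree_X_pow]
  constructor
  · intro h0
    rw [h0, degree_zero] at h1
    exact (by simp at h1)
  · exact natDegree_eq_of_degree_eq_some h1

lemma aux_exists_frob {q : ℕ} (F K : Type*) [Field F] [Fintype F] [Field K] [Fintype K]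
    [Algebra F K] (hF : Fintype.card F = q) :
    ∃ σ : K →+* K, ∀ x, σ x = x ^ q := by
  set p := ringChar F with hpdef
  haveI : CharP F p := ringChar.charP F
  haveI : Fact p.Prime := ⟨CharP.char_is_prime F p⟩
  obtain ⟨n, hp, hcard⟩ := FiniteField.card F p
  haveI : CharP K p := charP_of_injective_algebraMap (algebraMap F K).injective p
  refine ⟨iterateFrobenius K p n, fun x => ?_⟩
  rw [iterateFrobenius_def, ← hF, hcard]

section C
variable {q : ℕ} {F K : Type*} [Field F] [Fintype F] [Field K] [Fintype K]
    [DecidableEq K] [Algebra F K]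
variable (hF : Fintype.card F = q) (hK : Fintype.card K = q ^ 2)

include hF in
lemma aux_q2 : 2 ≤ q := hF ▸ Fintype.one_lt_card

include hF in
lemma aux_alg_pow (a : F) : (algebraMap F K a) ^ q = algebraMap F K a := by
  rw [← map_pow, ← hF, FiniteField.pow_card]

include hK in
lemma aux_pow_q2 (x : K) : (x ^ q) ^ q = x := by
  rw [← pow_mul, ← sq, ← hK, FiniteField.pow_card]

include hF hK in
lemma aux_fix (x : K) (hx : x ^ q = x) : ∃ a : F, algebraMap F K a = x := by
  by_contra hcon
  push_neg at hcon
  have hq2 : 2 ≤ q := aux_q2 hF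
  obtain ⟨hp0, hpd⟩ := aux_Xq_sub_X_natDegree (K := K) hq2 1 one_ne_zero
  set s : Finset K := insert x (Finset.univ.image (algebraMap F K)) with hs
  have hcard : s.card = q + 1 := by
    rw [hs, Finset.card_insert_of_notMem, Finset.card_image_of_injective _
      (algebraMap F K).injective, Finset.card_univ, hF]
    intro hmem
    simp only [Finset.mem_image, Finset.mem_univ, true_and] at hmem
    obtain ⟨a, ha⟩ := hmem
    exact hcon a ha
  have := aux_card_le_natDegree ((X : K[X]) ^ q - C 1 * X) hp0 s id (Set.injOn_id _) ?_
  · rw [hcard, hpd] at this; omega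
  · intro y hy
    simp only [eval_sub, eval_mul, eval_pow, eval_X, eval_C, id, one_mul, sub_eq_zero]
    rw [hs] at hy
    simp only [Finset.mem_insert, Finset.mem_image, Finset.mem_univ, true_and] at hy
    rcases hy with rfl | ⟨a, rfl⟩
    · exact hx
    · exact aux_alg_pow hF a
end C

noncomputable def Gpoly {K : Type*} [Field K] (σ : K →+* K) (m : ℕ) (h : K[X]) : K[X] :=
  ∑ j ∈ range (m+1), (C (h.coeff j) * X^(m+j) + C (σ (h.coeff j)) * X^(m-j))

section D
variable {q m : ℕ} {K : Type*} [Field K] [Fintype K] [DecidableEq K]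
  (σ : K →+* K) (hσ : ∀ x, σ x = x ^ q)

lemma aux_root_ne_zero {β : K} (hβ : β ^ (q+1) = 1) : β ≠ 0 := by
  intro h0; rw [h0, zero_pow (Nat.succ_ne_zero q)] at hβ; exact zero_ne_one hβ

include hσ in
lemma aux_sigma_root {β : K} (hβ : β ^ (q+1) = 1) : σ β = β⁻¹ := by
  have hβ0 : β ≠ 0 := aux_root_ne_zero hβ
  field_simp
  rw [hσ, ← pow_succ]
  exact hβ

include hσ in
lemma Gpoly_eval (h : K[X]) (hdeg : h.natDegree ≤ m) {β : K} (hβ : β ^ (q+1) = 1) :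
    (Gpoly σ m h).eval β = β ^ m * (h.eval β + σ (h.eval β)) := by
  have hβ0 : β ≠ 0 := aux_root_ne_zero hβ
  have hσβ : σ β = β⁻¹ := aux_sigma_root σ hσ hβ
  have he : h.eval β = ∑ j ∈ range (m+1), h.coeff j * β ^ j :=
    eval_eq_sum_range' (lt_of_le_of_lt hdeg (lt_add_one m)) β
  have hse : σ (h.eval β) = ∑ j ∈ range (m+1), σ (h.coeff j) * (β⁻¹) ^ j := by
    rw [he, map_sum]
    refine Finset.sum_congr rfl fun j _ => ?_
    rw [map_mul, map_pow, hσβ]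
  rw [Gpoly, eval_finset_sum, hse, he, mul_add, Finset.mul_sum, Finset.mul_sum,
    ← Finset.sum_add_distrib]
  refine Finset.sum_congr rfl fun j hj => ?_
  have hjm : j ≤ m := by simp at hj; omega
  simp only [eval_add, eval_mul, eval_C, eval_pow, eval_X]
  rw [pow_add, pow_sub₀ β hβ0 hjm, ← inv_pow]
  ring

include hσ in
lemma Gpoly_coeff_high (h : K[X]) {j : ℕ} (hj1 : 1 ≤ j) (hjm : j ≤ m) :
    (Gpoly σ m h).coeff (m+j) = h.coeff j := by
  rw [Gpoly, finset_sum_coeff]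
  rw [Finset.sum_eq_single_of_mem j (by simp; omega)]
  · simp only [coeff_add, coeff_C_mul, coeff_X_pow]
    rw [if_neg (show ¬(m+j = m-j) by omega)]
    simp
  · intro b hb hbj
    simp only [coeff_add, coeff_C_mul, coeff_X_pow]
    simp only [Finset.mem_range] at hb
    rw [if_neg (show ¬(m+j = m+b) by omega), if_neg (show ¬(m+j = m-b) by omega)]
    simp

include hσ in
lemma Gpoly_coeff_mid (h : K[X]) :
    (Gpoly σ m h).coeff m = h.coeff 0 + σ (h.coeff 0) := by
  rw [Gpoly, finset_sum_coeff]
  rw [Finset.sum_eq_single_of_mem 0 (by simp)]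
  · simp only [coeff_add, coeff_C_mul, coeff_X_pow]
    rw [if_pos (show m = m+0 by omega), if_pos (show m = m-0 by omega)]
    simp
  · intro b hb hbj
    simp only [coeff_add, coeff_C_mul, coeff_X_pow]
    simp only [Finset.mem_range] at hb
    rw [if_neg (show ¬(m = m+b) by omega), if_neg (show ¬(m = m-b) by omega)]
    simp

lemma Gpoly_natDegree (h : K[X]) : (Gpoly σ m h).natDegree ≤ 2*m := by
  apply natDegree_sum_le_of_forall_le
  intro j hj
  simp only [Finset.mem_range] at hj
  apply le_trans (natDegree_add_le _ _)
  apply max_le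
  · exact le_trans (natDegree_C_mul_X_pow_le _ _) (by omega)
  · exact le_trans (natDegree_C_mul_X_pow_le _ _) (by omega)

include hσ in
lemma Gpoly_zero (h : K[X]) (hdeg : h.natDegree ≤ m) (hG : Gpoly σ m h = 0) :
    h = C (h.coeff 0) ∧ h.coeff 0 + σ (h.coeff 0) = 0 := by
  have hcoeffs : ∀ j, 1 ≤ j → h.coeff j = 0 := by
    intro j hj1
    rcases le_or_gt j m with hjm | hjm
    · rw [← Gpoly_coeff_high σ hσ h hj1 hjm, hG, coeff_zero]
    · exact coeff_eq_zero_of_natDegree_lt (lt_of_le_of_lt hdeg hjm)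
  constructor
  · have : h.natDegree = 0 := by
      by_contra hne
      have h1 : 1 ≤ h.natDegree := Nat.one_le_iff_ne_zero.mpr hne
      have := hcoeffs h.natDegree h1
      exact (leadingCoeff_ne_zero.mpr (fun h0 => by simp [h0] at h1)) this
    exact (eq_C_of_natDegree_le_zero (le_of_eq this))
  · rw [← Gpoly_coeff_mid σ hσ h, hG, coeff_zero]
end D

lemma finsum_poly_coeff {R : Type*} [Semiring R] {N : ℕ} (c : Fin N → R) (t : ℕ) :
    (∑ j : Fin N, C (c j) * X^(j:ℕ)).coeff t = if ht : t < N then c ⟨t, ht⟩ else 0 := by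
  rw [finset_sum_coeff]
  split_ifs with ht
  · rw [Finset.sum_eq_single_of_mem (⟨t, ht⟩ : Fin N) (Finset.mem_univ _)]
    · simp [coeff_C_mul, coeff_X_pow]
    · intro b _ hb
      simp only [coeff_C_mul, coeff_X_pow]
      rw [if_neg (fun he => hb (by apply Fin.ext; simp [← he]))]
      simp
  · apply Finset.sum_eq_zero
    intro b _
    simp only [coeff_C_mul, coeff_X_pow]
    rw [if_neg (show ¬ t = (b:ℕ) from fun he => ht (he ▸ b.isLt))]
    simp

lemma finsum_poly_natDegree {R : Type*} [Semiring R] {N : ℕ} (c : Fin N → R) :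
    (∑ j : Fin N, C (c j) * X^(j:ℕ)).natDegree ≤ N - 1 := by
  apply natDegree_sum_le_of_forall_le
  intro j _
  exact le_trans (natDegree_C_mul_X_pow_le _ _) (by omega)

lemma finsum_poly_eval {R : Type*} [CommSemiring R] {N : ℕ} (c : Fin N → R) (x : R) :
    (∑ j : Fin N, C (c j) * X^(j:ℕ)).eval x = ∑ j : Fin N, c j * x^(j:ℕ) := by
  rw [eval_finset_sum]
  exact Finset.sum_congr rfl fun j _ => by simp

section E
variable {q m : ℕ} {F K : Type*} [Field F] [Fintype F] [Field K] [Fintype K]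
    [DecidableEq K] [Algebra F K]

lemma aux_monic_coeff (δ' δ'' : K) (c : K) {e1 e2 n : ℕ} (he : e1 + e2 = n) :
    (C c * ((X + C δ') ^ e1 * (X + C δ'') ^ e2)).coeff n = c := by
  have hm : ((X + C δ') ^ e1 * (X + C δ'') ^ e2).Monic :=
    ((monic_X_add_C δ').pow _).mul ((monic_X_add_C δ'').pow _)
  have hnd : ((X + C δ') ^ e1 * (X + C δ'') ^ e2).natDegree = n := by
    rw [Monic.natDegree_mul ((monic_X_add_C δ').pow _) ((monic_X_add_C δ'').pow _),
      Monic.natDegree_pow (monic_X_add_C δ'), Monic.natDegree_pow (monic_X_add_C δ''),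
      natDegree_X_add_C, natDegree_X_add_C]
    omega
  rw [coeff_C_mul, ← hnd, Monic.coeff_natDegree hm, mul_one]

lemma aux_P (σ : K →+* K) (hσ : ∀ x, σ x = x ^ q) (hσσ : ∀ x, σ (σ x) = x)
    (hfix : ∀ x : K, σ x = x → ∃ a : F, algebraMap F K a = x)
    {δ αL : K} (hL : αL ^ (q+1) = 1)
    (h : K[X]) (hdeg : h.natDegree ≤ m) :
    ∃ f : F[X], f.degree ≤ (2*m : ℕ) ∧
      algebraMap F K (f.coeff (2*m)) = h.eval αL + σ (h.eval αL) ∧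
      ∀ (x β u : K), β ^ (q+1) = 1 → u ≠ 0 → x + δ = β * u → x + σ δ = αL * u →
        (f.map (algebraMap F K)).eval x
          = ((x + δ) * (x + σ δ)) ^ m * (h.eval β + σ (h.eval β)) := by
  have hσroot : ∀ β : K, β ^ (q+1) = 1 → σ β = β⁻¹ := by
    intro β hβ
    have hβ0 : β ≠ 0 := aux_root_ne_zero hβ
    field_simp
    rw [hσ, ← pow_succ]
    exact hβ
  have hαL0 : αL ≠ 0 := aux_root_ne_zero hL
  have hσαL : σ αL = αL⁻¹ := hσroot αL hL
  have hσαLi : σ (αL⁻¹) = αL := by rw [map_inv₀, hσαL, inv_inv]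
  set δq := σ δ with hδq
  set P : K[X] := ∑ j ∈ range (m+1),
    (C (h.coeff j * αL^j) * ((X + C δ) ^ (m+j) * (X + C δq) ^ (m-j))
     + C (σ (h.coeff j) * (αL⁻¹)^j) * ((X + C δ) ^ (m-j) * (X + C δq) ^ (m+j))) with hP
  have hPmap : P.map σ = P := by
    rw [hP, Polynomial.map_sum]
    refine Finset.sum_congr rfl fun j hj => ?_
    simp only [Polynomial.map_add, Polynomial.map_mul, Polynomial.map_pow, map_C, map_X,
      map_mul, map_pow, hσαL, hσαLi, hσσ]
    rw [hδq, hσσ]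
    ring
  have hlift : ∀ n, P.coeff n ∈ Set.range (algebraMap F K) := by
    intro n
    have : σ (P.coeff n) = P.coeff n := by
      conv_rhs => rw [← hPmap]
      rw [coeff_map]
    obtain ⟨a, ha⟩ := hfix _ this
    exact ⟨a, ha⟩
  obtain ⟨f, hfmap, hfdeg⟩ :=
    Polynomial.mem_lifts_and_degree_eq ((Polynomial.lifts_iff_coeff_lifts P).mpr hlift)
  have hPnd : P.natDegree ≤ 2*m := by
    rw [hP]
    apply natDegree_sum_le_of_forall_le
    intro j hj
    simp only [Finset.mem_range] at hj
    apply le_trans (natDegree_add_le _ _)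
    apply max_le
    · apply le_trans (natDegree_mul_le)
      have h1 : (C (h.coeff j * αL^j)).natDegree = 0 := natDegree_C _
      have h2 : ((X + C δ) ^ (m+j) * (X + C δq) ^ (m-j)).natDegree ≤ 2*m := by
        apply le_trans (natDegree_mul_le)
        have := natDegree_pow_le (p := (X + C δ : K[X])) (n := m+j)
        have := natDegree_pow_le (p := (X + C δq : K[X])) (n := m-j)
        rw [natDegree_X_add_C] at *
        omega
      omega
    · apply le_trans (natDegree_mul_le)
      have h2 : ((X + C δ) ^ (m-j) * (X + C δq) ^ (m+j)).natDegree ≤ 2*m := by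
        apply le_trans (natDegree_mul_le)
        have := natDegree_pow_le (p := (X + C δ : K[X])) (n := m-j)
        have := natDegree_pow_le (p := (X + C δq : K[X])) (n := m+j)
        rw [natDegree_X_add_C] at *
        omega
      have h1 : (C (σ (h.coeff j) * (αL⁻¹)^j)).natDegree = 0 := natDegree_C _
      omega
  refine ⟨f, ?_, ?_, ?_⟩
  · rw [hfdeg]
    exact le_trans P.degree_le_natDegree (by exact_mod_cast hPnd)
  · have : algebraMap F K (f.coeff (2*m)) = P.coeff (2*m) := by
      rw [← hfmap, coeff_map]
    rw [this, hP, finset_sum_coeff]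
    have heval : h.eval αL = ∑ j ∈ range (m+1), h.coeff j * αL ^ j :=
      eval_eq_sum_range' (lt_of_le_of_lt hdeg (lt_add_one m)) αL
    have hseval : σ (h.eval αL) = ∑ j ∈ range (m+1), σ (h.coeff j) * (αL⁻¹) ^ j := by
      rw [heval, map_sum]
      exact Finset.sum_congr rfl fun j _ => by rw [map_mul, map_pow, hσαL]
    rw [hseval, heval, ← Finset.sum_add_distrib]
    refine Finset.sum_congr rfl fun j hj => ?_
    simp only [Finset.mem_range] at hj
    rw [coeff_add, aux_monic_coeff _ _ _ (by omega), aux_monic_coeff _ _ _ (by omega)]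
  · intro x β u hβ hu hxδ hxδq
    have hβ0 : β ≠ 0 := aux_root_ne_zero hβ
    have hσβ : σ β = β⁻¹ := hσroot β hβ
    have heval : h.eval β = ∑ j ∈ range (m+1), h.coeff j * β ^ j :=
      eval_eq_sum_range' (lt_of_le_of_lt hdeg (lt_add_one m)) β
    have hseval : σ (h.eval β) = ∑ j ∈ range (m+1), σ (h.coeff j) * (β⁻¹) ^ j := by
      rw [heval, map_sum]
      exact Finset.sum_congr rfl fun j _ => by rw [map_mul, map_pow, hσβ]
    rw [hfmap, hP, eval_finset_sum, hseval, heval, mul_add, Finset.mul_sum, Finset.mul_sum,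
      ← Finset.sum_add_distrib]
    refine Finset.sum_congr rfl fun j hj => ?_
    simp only [Finset.mem_range] at hj
    obtain ⟨j', hj'⟩ : ∃ j', m = j + j' := ⟨m - j, by omega⟩
    have hmj : m - j = j' := by omega
    simp only [eval_add, eval_mul, eval_C, eval_pow, eval_X, hxδ, hxδq, hmj]
    subst hj'
    rw [inv_pow, inv_pow]
    have e1 : (αL ^ j)⁻¹ * αL ^ j = 1 := inv_mul_cancel₀ (pow_ne_zero _ hαL0)
    have e2 : β ^ j * (β ^ j)⁻¹ = 1 := mul_inv_cancel₀ (pow_ne_zero _ hβ0)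
    linear_combination (σ (h.coeff j) * u ^ (2*j+2*j') * β ^ j' * αL ^ (j+j')) * (e1 - e2)
end E

end GRSAux

/-- Let `q` be a prime power, `F = 𝔽_q ⊆ K = 𝔽_{q²}`, and let
`α 1, …, α (q+1)` be the `q+1` distinct `(q+1)`-st roots of unity in `K`.  If `k` is odd
with `1 ≤ k ≤ q`, then the code
`C = {(h(α₁)+h(α₁)^q, …, h(α_{q+1})+h(α_{q+1})^q) : h ∈ K[X], deg h ≤ (k−1)/2}`
is a `k`-dimensional `F`-linear subspace of `F^{q+1}` (embedded in `K^{q+1}`) with minimum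
distance `q+2−k`, i.e. a `[q+1,k,q+2−k]_q` MDS code, and moreover `C` is a generalised
Reed–Solomon code over `F`. -/
theorem grs_of_trace_evaluation_code_odd
    (q k : ℕ) (F K : Type*) [Field F] [Fintype F] [Field K] [Fintype K]
    [DecidableEq K] [Algebra F K]
    (hF : Fintype.card F = q) (hK : Fintype.card K = q ^ 2)
    (hkodd : Odd k) (hk1 : 1 ≤ k) (hkq : k ≤ q)
    (α : Fin (q + 1) → K) (hαinj : Function.Injective α)
    (hαroot : ∀ i, α i ^ (q + 1) = 1)
    (Code : Set (Fin (q + 1) → K))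
    (hCode : Code = { w | ∃ h : Polynomial K, h.degree ≤ ((k - 1) / 2 : ℕ) ∧
      w = fun i => h.eval (α i) + (h.eval (α i)) ^ q }) :
    (∃ V : Submodule F (Fin (q + 1) → K), (V : Set (Fin (q + 1) → K)) = Code ∧
       Module.finrank F V = k) ∧
    (∀ w ∈ Code, w ≠ 0 → q + 2 - k ≤ hammingNorm w) ∧
    IsGRSCode q k F K Code := by
  classical
  obtain ⟨r, hr⟩ := hkodd
  set m := (k - 1) / 2 with hmdef
  have hm : k = 2*m + 1 := by omega
  have hq2 : 2 ≤ q := aux_q2 hF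
  have h2m : 2*m ≤ q - 1 := by omega
  obtain ⟨σ, hσ⟩ := aux_exists_frob F K hF
  have hσσ : ∀ x : K, σ (σ x) = x := fun x => by rw [hσ, hσ, aux_pow_q2 hK]
  have hfix : ∀ x : K, σ x = x → ∃ a : F, algebraMap F K a = x := fun x hx =>
    aux_fix hF hK x (by rw [← hσ x]; exact hx)
  have halg : ∀ a : F, σ (algebraMap F K a) = algebraMap F K a := fun a => by
    rw [hσ]; exact aux_alg_pow hF a
  have hfr2 : Module.finrank F K = 2 := by
    have hc : Fintype.card K = Fintype.card F ^ Module.finrank F K := Module.card_eq_pow_finrank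
    rw [hK, hF] at hc
    exact (Nat.pow_right_injective hq2 hc.symm)
  -- the trace map
  set Tlin : K →ₗ[F] K :=
    { toFun := fun y => y + σ y
      map_add' := fun y z => by simp only [map_add]; ring
      map_smul' := fun s y => by
        simp only [Algebra.smul_def, map_mul, halg, RingHom.id_apply]; ring } with hTlin
  have hTapp : ∀ y : K, Tlin y = y + σ y := fun y => rfl
  -- a nonzero element of trace zero
  have hc₀ : ∃ c₀ : K, c₀ ≠ 0 ∧ c₀ + σ c₀ = 0 := by
    obtain ⟨δ', hδ'⟩ : ∃ δ' : K, σ δ' ≠ δ' := by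
      by_contra hcon
      push_neg at hcon
      have hsurj : Function.Surjective (algebraMap F K) := by
        intro y
        obtain ⟨a, ha⟩ := hfix y (hcon y)
        exact ⟨a, ha⟩
      have := Fintype.card_le_of_surjective _ hsurj
      rw [hF, hK] at this
      nlinarith
    have hnotinj : ¬ Function.Injective (fun y : K => y + σ y) := by
      intro hinj
      obtain ⟨y, hy⟩ := Finite.surjective_of_injective hinj δ'
      apply hδ'
      have h2 : σ (y + σ y) = y + σ y := by rw [map_add, hσσ]; ring
      rw [show y + σ y = δ' from hy] at h2
      rw [h2]
    rw [Function.not_injective_iff] at hnotinj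
    obtain ⟨y, z, hyz, hne⟩ := hnotinj
    have hyz' : y + σ y = z + σ z := hyz
    refine ⟨y - z, sub_ne_zero.mpr hne, ?_⟩
    rw [map_sub]
    linear_combination hyz'
  obtain ⟨c₀, hc₀ne, hc₀tr⟩ := hc₀
  -- the kernel of the trace map is one-dimensional
  have hKT : LinearMap.ker Tlin = Submodule.span F {c₀} := by
    symm
    apply Submodule.eq_of_le_of_finrank_le
    · rw [Submodule.span_singleton_le_iff_mem, LinearMap.mem_ker, hTapp]
      exact hc₀tr
    · rw [finrank_span_singleton hc₀ne]
      -- card of kernel at most q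
      obtain ⟨hp0, hpd⟩ := aux_Xq_sub_X_natDegree (K := K) hq2 (-1) (neg_ne_zero.mpr one_ne_zero)
      have hcard : Fintype.card (LinearMap.ker Tlin) ≤ q := by
        have := aux_card_le_natDegree ((X : K[X]) ^ q - C (-1) * X) hp0
          (Finset.univ : Finset (LinearMap.ker Tlin)) (fun y => (y : K))
          (fun y _ z _ h => Subtype.ext h) ?_
        · rwa [Finset.card_univ, hpd] at this
        · intro y _
          have hy : (y : K) + σ (y : K) = 0 := y.2
          simp only [eval_sub, eval_mul, eval_pow, eval_X, eval_C, neg_mul, one_mul, sub_neg_eq_add]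
          rw [← hσ]
          linear_combination hy
      have hcard2 : Fintype.card (LinearMap.ker Tlin)
          = Fintype.card F ^ Module.finrank F (LinearMap.ker Tlin) := Module.card_eq_pow_finrank
      rw [hcard2, hF] at hcard
      by_contra hgt
      push_neg at hgt
      have : q ^ 2 ≤ q ^ Module.finrank F (LinearMap.ker Tlin) :=
        Nat.pow_le_pow_right (by omega) hgt
      nlinarith
  -- the evaluation map for the trace code
  let evalK : Fin (q+1) → ((Fin (m+1) → K) →ₗ[F] K) := fun i =>
    { toFun := fun c => ∑ j : Fin (m+1), c j * α i ^ (j:ℕ)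
      map_add' := fun c d => by simp [add_mul, Finset.sum_add_distrib]
      map_smul' := fun s c => by simp [Finset.smul_sum, smul_mul_assoc] }
  let Φ₀ : (Fin (m+1) → K) →ₗ[F] (Fin (q+1) → K) :=
    LinearMap.pi (fun i => Tlin.comp (evalK i))
  have happ : ∀ (c : Fin (m+1) → K) (i : Fin (q+1)),
      Φ₀ c i = (∑ j : Fin (m+1), c j * α i ^ (j:ℕ))
        + σ (∑ j : Fin (m+1), c j * α i ^ (j:ℕ)) := fun c i => rfl
  have hword : ∀ (h : K[X]), h.natDegree ≤ m → ∀ i : Fin (q+1),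
      h.eval (α i) = ∑ j : Fin (m+1), h.coeff (j:ℕ) * α i ^ (j:ℕ) := by
    intro h hnd i
    rw [eval_eq_sum_range' (lt_of_le_of_lt hnd (lt_add_one m)), Finset.sum_range]
  have hCodeRange : Code = ↑(LinearMap.range Φ₀) := by
    rw [hCode]
    ext w
    simp only [Set.mem_setOf_eq, SetLike.mem_coe, LinearMap.mem_range]
    constructor
    · rintro ⟨h, hdeg, rfl⟩
      have hnd : h.natDegree ≤ m := natDegree_le_iff_degree_le.mpr hdeg
      refine ⟨fun j => h.coeff (j:ℕ), ?_⟩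
      funext i
      rw [happ, ← hword h hnd i, hσ]
    · rintro ⟨c, rfl⟩
      refine ⟨∑ j : Fin (m+1), C (c j) * X^(j:ℕ), ?_, ?_⟩
      · refine le_trans degree_le_natDegree ?_
        have h3 : (∑ j : Fin (m+1), C (c j) * X^(j:ℕ)).natDegree ≤ m :=
          le_trans (finsum_poly_natDegree c) (by omega)
        exact_mod_cast h3
      · funext i
        rw [happ, finsum_poly_eval, hσ]
  have hsingle_ne : Pi.single (0 : Fin (m+1)) c₀ ≠ (0 : Fin (m+1) → K) := by
    intro h0
    apply hc₀ne
    have := congrFun h0 0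
    simpa using this
  have hker : LinearMap.ker Φ₀ = Submodule.span F {Pi.single (0 : Fin (m+1)) c₀} := by
    apply le_antisymm
    · intro c hc
      rw [LinearMap.mem_ker] at hc
      set h : K[X] := ∑ j : Fin (m+1), C (c j) * X^(j:ℕ) with hh
      have hnd : h.natDegree ≤ m := le_trans (finsum_poly_natDegree c) (by omega)
      have hcoeff : ∀ (j : Fin (m+1)), h.coeff (j:ℕ) = c j := by
        intro j
        rw [hh, finsum_poly_coeff]
        rw [dif_pos j.isLt]
      have hwz : ∀ i, h.eval (α i) + σ (h.eval (α i)) = 0 := by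
        intro i
        have h1 := congrFun hc i
        rw [happ] at h1
        rw [hh, finsum_poly_eval]
        exact h1
      have hG : Gpoly σ m h = 0 := by
        by_contra hGne
        have hnd2 : (Gpoly σ m h).natDegree ≤ 2*m := Gpoly_natDegree σ h
        have hcd := aux_card_le_natDegree (Gpoly σ m h) hGne Finset.univ α hαinj.injOn ?_
        · rw [Finset.card_univ, Fintype.card_fin] at hcd; omega
        · intro i _
          rw [Gpoly_eval σ hσ h hnd (hαroot i), hwz i, mul_zero]
      obtain ⟨hconst, htr⟩ := Gpoly_zero σ hσ h hnd hG
      have hmem : h.coeff 0 ∈ Submodule.span F {c₀} := by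
        rw [← hKT, LinearMap.mem_ker, hTapp]
        exact htr
      rw [Submodule.mem_span_singleton] at hmem
      obtain ⟨s, hs⟩ := hmem
      rw [Submodule.mem_span_singleton]
      refine ⟨s, ?_⟩
      funext j
      by_cases hj : j = 0
      · subst hj
        have : c 0 = h.coeff 0 := (hcoeff 0).symm
        simp only [Pi.smul_apply, Pi.single_eq_same]
        rw [this, ← hs]
      · simp only [Pi.smul_apply, Pi.single_eq_of_ne hj, smul_zero]
        have h1 : c j = h.coeff (j:ℕ) := (hcoeff j).symm
        have h2 : h.coeff (j:ℕ) = 0 := by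
          conv_lhs => rw [hconst]
          rw [coeff_C, if_neg (fun h0 => hj (Fin.ext (by rw [h0, Fin.val_zero])))]
        rw [h1, h2]
    · rw [Submodule.span_singleton_le_iff_mem, LinearMap.mem_ker]
      funext i
      rw [happ]
      have hsum : ∑ j : Fin (m+1), (Pi.single (0 : Fin (m+1)) c₀ : Fin (m+1) → K) j * α i ^ (j:ℕ) = c₀ := by
        rw [Finset.sum_eq_single_of_mem (0 : Fin (m+1)) (Finset.mem_univ _)]
        · simp
        · intro b _ hb
          simp [Pi.single_eq_of_ne hb]
      rw [hsum]
      simpa using hc₀tr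
  have hrank : Module.finrank F (LinearMap.range Φ₀) = k := by
    have h1 := LinearMap.finrank_range_add_finrank_ker Φ₀
    rw [hker, finrank_span_singleton hsingle_ne] at h1
    have h2 : Module.finrank F (Fin (m+1) → K) = 2*(m+1) := by
      rw [Module.finrank_pi_fintype]
      simp [hfr2, Finset.sum_const, mul_comm]
    rw [h2] at h1
    omega
  refine ⟨⟨LinearMap.range Φ₀, hCodeRange.symm, hrank⟩, ?_, ?_⟩
  · -- minimum distance
    rw [hCode]
    rintro w ⟨h, hdeg, rfl⟩ hwne
    have hnd : h.natDegree ≤ m := natDegree_le_iff_degree_le.mpr hdeg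
    have hG : Gpoly σ m h ≠ 0 := by
      intro hG0
      obtain ⟨hconst, htr⟩ := Gpoly_zero σ hσ h hnd hG0
      apply hwne
      funext i
      have he : h.eval (α i) = h.coeff 0 := by
        conv_lhs => rw [hconst]
        rw [eval_C]
      show h.eval (α i) + (h.eval (α i))^q = 0
      rw [← hσ, he, htr]
    have hcard : (Finset.univ.filter
        (fun i => h.eval (α i) + (h.eval (α i))^q = 0)).card ≤ 2*m := by
      refine le_trans (aux_card_le_natDegree (Gpoly σ m h) hG _ α
        (hαinj.injOn) ?_) (Gpoly_natDegree σ h)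
      intro i hi
      rw [Finset.mem_filter] at hi
      rw [Gpoly_eval σ hσ h hnd (hαroot i), hσ, hi.2, mul_zero]
    have hsplit := Finset.card_filter_add_card_filter_not
      (s := (Finset.univ : Finset (Fin (q+1))))
      (p := fun i => h.eval (α i) + (h.eval (α i))^q = 0)
    rw [Finset.card_univ, Fintype.card_fin] at hsplit
    have hnormeq : hammingNorm (fun i => h.eval (α i) + (h.eval (α i))^q)
        = (Finset.univ.filter
          (fun i => ¬ (h.eval (α i) + (h.eval (α i))^q = 0))).card := by
      rw [hammingNorm]
    rw [hnormeq]
    omega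
  · -- GRS
    obtain ⟨δ, hδ⟩ : ∃ δ : K, σ δ ≠ δ := by
      by_contra hcon
      push_neg at hcon
      have hsurj : Function.Surjective (algebraMap F K) := fun y => hfix y (hcon y)
      have := Fintype.card_le_of_surjective _ hsurj
      rw [hF, hK] at this
      nlinarith
    have hδd : δ - σ δ ≠ 0 := sub_ne_zero.mpr (fun hc => hδ hc.symm)
    set αL := α (Fin.last q) with hαLdef
    have hL : αL ^ (q+1) = 1 := hαroot _
    have hαL0 : αL ≠ 0 := aux_root_ne_zero hL
    have hσαL : σ αL = αL⁻¹ := aux_sigma_root σ hσ hL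
    set β : Fin q → K := fun i => α i.castSucc with hβdef
    have hβroot : ∀ i, β i ^ (q+1) = 1 := fun i => hαroot _
    have hβ0 : ∀ i, β i ≠ 0 := fun i => aux_root_ne_zero (hβroot i)
    have hσβ : ∀ i, σ (β i) = (β i)⁻¹ := fun i => aux_sigma_root σ hσ (hβroot i)
    have hβne : ∀ i, β i ≠ αL := fun i hc => (Fin.castSucc_lt_last i).ne (hαinj hc)
    have hden : ∀ i, β i - αL ≠ 0 := fun i => sub_ne_zero.mpr (hβne i)
    set x : Fin q → K := fun i => (αL * δ - β i * σ δ) / (β i - αL) with hxdef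
    set u : Fin q → K := fun i => (δ - σ δ) / (β i - αL) with hudef
    have hu0 : ∀ i, u i ≠ 0 := fun i => div_ne_zero hδd (hden i)
    have hx1 : ∀ i, x i + δ = β i * u i := by
      intro i
      rw [hxdef, hudef]
      simp only
      rw [div_add' _ _ _ (hden i), ← mul_div_assoc, div_eq_div_iff (hden i) (hden i)]
      ring
    have hx2 : ∀ i, x i + σ δ = αL * u i := by
      intro i
      rw [hxdef, hudef]
      simp only
      rw [div_add' _ _ _ (hden i), ← mul_div_assoc, div_eq_div_iff (hden i) (hden i)]
      ring
    have hxfix : ∀ i, σ (x i) = x i := by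
      intro i
      have hdinv : (β i)⁻¹ - αL⁻¹ ≠ 0 :=
        sub_ne_zero.mpr (fun hc => hβne i (inv_injective hc))
      rw [hxdef]
      simp only [map_div₀, map_sub, map_mul, hσαL, hσβ i, hσσ]
      rw [div_eq_div_iff hdinv (hden i)]
      have e1 : (β i)⁻¹ * β i = 1 := inv_mul_cancel₀ (hβ0 i)
      have e2 : αL⁻¹ * αL = 1 := inv_mul_cancel₀ hαL0
      linear_combination (σ δ - δ) * e1 + (δ - σ δ) * e2
    choose a ha using fun i => hfix _ (hxfix i)
    have hainj : Function.Injective a := by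
      intro i i' he
      have hxe : x i = x i' := by rw [← ha i, ← ha i', he]
      have hue : u i = u i' := by
        have h1 : αL * u i = αL * u i' := by rw [← hx2 i, ← hx2 i', hxe]
        exact mul_left_cancel₀ hαL0 h1
      have hbe : β i = β i' := by
        have h1 : β i * u i = β i' * u i := by
          conv_rhs => rw [hue]
          rw [← hx1 i, ← hx1 i', hxe]
        exact mul_right_cancel₀ (hu0 i) h1
      exact Fin.castSucc_injective q (hαinj hbe)
    have habij : Function.Bijective a :=
      (Fintype.bijective_iff_injective_and_card a).mpr
        ⟨hainj, by rw [Fintype.card_fin, hF]⟩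
    set N : Fin q → K := fun i => (x i + δ) * (x i + σ δ) with hNdef
    have hN0 : ∀ i, N i ≠ 0 := by
      intro i
      rw [hNdef]
      simp only
      rw [hx1 i, hx2 i]
      exact mul_ne_zero (mul_ne_zero (hβ0 i) (hu0 i)) (mul_ne_zero hαL0 (hu0 i))
    have hNfix : ∀ i, σ (N i) = N i := by
      intro i
      rw [hNdef]
      simp only [map_mul, map_add, hσσ, hxfix i]
      ring
    choose n hnn using fun i => hfix _ (hNfix i)
    have hn0 : ∀ i, n i ≠ 0 := fun i hc => hN0 i (by rw [← hnn i, hc, map_zero])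
    set θ : Fin (q+1) → F := Fin.snoc (fun i => (n i ^ m)⁻¹) 1 with hθdef
    have hθlast : θ (Fin.last q) = 1 := by rw [hθdef, Fin.snoc_last]
    have hθcast : ∀ j : Fin q, θ (Fin.castSucc j) = (n j ^ m)⁻¹ := by
      intro j
      rw [hθdef, Fin.snoc_castSucc]
    have hθ0 : ∀ i, θ i ≠ 0 := by
      intro i
      refine Fin.lastCases ?_ (fun j => ?_) i
      · rw [hθlast]; exact one_ne_zero
      · rw [hθcast]; exact inv_ne_zero (pow_ne_zero _ (hn0 j))
    have hklt : k - 1 < k := by omega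
    set evalF : Fin q → ((Fin k → F) →ₗ[F] F) := fun j =>
      { toFun := fun c => ∑ t : Fin k, c t * a j ^ (t : ℕ)
        map_add' := fun c d => by simp [add_mul, Finset.sum_add_distrib]
        map_smul' := fun s c => by simp [Finset.mul_sum, mul_assoc] } with hevalF
    set inner : ∀ _ : Fin (q+1), ((Fin k → F) →ₗ[F] F) := fun i =>
      Fin.lastCases (LinearMap.proj (⟨k-1, hklt⟩ : Fin k)) evalF i with hinnerdef
    have hinner_cast : ∀ (j : Fin q), inner (Fin.castSucc j) = evalF j := by
      intro j
      rw [hinnerdef]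
      simp only [Fin.lastCases_castSucc]
    have hinner_last : inner (Fin.last q) = LinearMap.proj (⟨k-1, hklt⟩ : Fin k) := by
      rw [hinnerdef]
      simp only [Fin.lastCases_last]
    set Ψ₀ : (Fin k → F) →ₗ[F] (Fin (q+1) → K) :=
      LinearMap.pi (fun i => (Algebra.linearMap F K).comp (θ i • inner i)) with hΨdef
    have hΨapp : ∀ c i, Ψ₀ c i = algebraMap F K (θ i * inner i c) := fun c i => rfl
    have hkm : 2*m = k - 1 := by omega
    have hGRSrange : { w : Fin (q+1) → K | ∃ f : Polynomial F, f.degree ≤ ((k - 1 : ℕ) : WithBot ℕ) ∧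
        w = fun i => algebraMap F K
          (θ i * (Fin.snoc (fun j : Fin q => f.eval (a j)) (f.coeff (k - 1)) : Fin (q+1) → F) i) }
        = ↑(LinearMap.range Ψ₀) := by
      ext w
      simp only [Set.mem_setOf_eq, SetLike.mem_coe, LinearMap.mem_range]
      constructor
      · rintro ⟨f, hfdeg, rfl⟩
        have hnd : f.natDegree ≤ k-1 := natDegree_le_iff_degree_le.mpr hfdeg
        refine ⟨fun t => f.coeff (t : ℕ), ?_⟩
        funext i
        rw [hΨapp]
        congr 1
        refine Fin.lastCases ?_ (fun j => ?_) i
        · rw [Fin.snoc_last, hinner_last]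
          rfl
        · rw [Fin.snoc_castSucc, hinner_cast]
          congr 1
          have he : f.eval (a j) = ∑ t : Fin k, f.coeff (t:ℕ) * a j ^ (t : ℕ) := by
            rw [eval_eq_sum_range' (n := k) (lt_of_le_of_lt hnd (by omega)) (a j),
              Finset.sum_range]
          rw [he]
          rfl
      · rintro ⟨c, rfl⟩
        refine ⟨∑ t : Fin k, C (c t) * X^(t:ℕ), ?_, ?_⟩
        · refine le_trans degree_le_natDegree ?_
          have h3 : (∑ t : Fin k, C (c t) * X^(t:ℕ)).natDegree ≤ k - 1 :=
            finsum_poly_natDegree c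
          exact_mod_cast h3
        · funext i
          rw [hΨapp]
          congr 1
          refine Fin.lastCases ?_ (fun j => ?_) i
          · rw [Fin.snoc_last, hinner_last]
            congr 1
            rw [finsum_poly_coeff, dif_pos hklt]
            rfl
          · rw [Fin.snoc_castSucc, hinner_cast]
            congr 1
            rw [finsum_poly_eval]
            rfl
    have hΨker : LinearMap.ker Ψ₀ = ⊥ := by
      rw [eq_bot_iff]
      intro c hc
      rw [LinearMap.mem_ker] at hc
      have hfz : ∀ j : Fin q, (∑ t : Fin k, C (c t) * X^(t:ℕ)).eval (a j) = 0 := by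
        intro j
        have h1 := congrFun hc (Fin.castSucc j)
        rw [hΨapp, hinner_cast] at h1
        have h2 : θ (Fin.castSucc j) * (∑ t : Fin k, c t * a j ^ (t : ℕ)) = 0 :=
          (algebraMap F K).injective (by rw [map_zero]; exact h1)
        have h3 : (∑ t : Fin k, c t * a j ^ (t : ℕ)) = 0 := by
          rcases mul_eq_zero.mp h2 with h4 | h4
          · exact absurd h4 (hθ0 _)
          · exact h4
        rw [finsum_poly_eval]
        exact h3
      have hf0 : (∑ t : Fin k, C (c t) * X^(t:ℕ)) = 0 := by
        by_contra hfne
        have hcd := aux_card_le_natDegree (K := F) _ hfne Finset.univ a hainj.injOn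
          (fun j _ => hfz j)
        rw [Finset.card_univ, Fintype.card_fin] at hcd
        have h5 : (∑ t : Fin k, C (c t) * X^(t:ℕ)).natDegree ≤ k - 1 :=
          finsum_poly_natDegree c
        omega
      rw [Submodule.mem_bot]
      funext t
      have := finsum_poly_coeff c (t : ℕ)
      rw [hf0, coeff_zero, dif_pos t.isLt] at this
      simp only [Fin.eta] at this
      rw [Pi.zero_apply, ← this]
    have hΨrank : Module.finrank F (LinearMap.range Ψ₀) = k := by
      have h1 := LinearMap.finrank_range_add_finrank_ker Ψ₀
      rw [hΨker, finrank_bot] at h1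
      rw [Module.finrank_pi, Fintype.card_fin] at h1
      omega
    have hCodeGRS : ∀ w ∈ Code, ∃ f : Polynomial F, f.degree ≤ ((k - 1 : ℕ) : WithBot ℕ) ∧
        w = fun i => algebraMap F K
          (θ i * (Fin.snoc (fun j : Fin q => f.eval (a j)) (f.coeff (k - 1)) : Fin (q+1) → F) i) := by
      rw [hCode]
      rintro w ⟨h, hdeg, rfl⟩
      have hnd : h.natDegree ≤ m := natDegree_le_iff_degree_le.mpr hdeg
      obtain ⟨f, hfdeg, hfcoeff, hfeval⟩ := aux_P (m := m) (δ := δ) σ hσ hσσ hfix hL h hnd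
      refine ⟨f, ?_, ?_⟩
      · rw [hkm] at hfdeg
        exact hfdeg
      · funext i
        refine Fin.lastCases ?_ (fun j => ?_) i
        · rw [Fin.snoc_last, hθlast, one_mul, ← hkm, hfcoeff, ← hαLdef, hσ]
        · rw [Fin.snoc_castSucc, hθcast]
          rw [show α j.castSucc = β j from rfl]
          rw [map_mul, map_inv₀, map_pow, hnn j]
          have h1 : algebraMap F K (f.eval (a j)) = (f.map (algebraMap F K)).eval (x j) := by
            rw [← ha j, eval_map, eval₂_at_apply]
          rw [h1, hfeval (x j) (β j) (u j) (hβroot j) (hu0 j) (hx1 j) (hx2 j)]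
          rw [show (x j + δ) * (x j + σ δ) = N j from rfl,
            inv_mul_cancel_left₀ (pow_ne_zero _ (hN0 j)), hσ]
    have hsub : LinearMap.range Φ₀ ≤ LinearMap.range Ψ₀ := by
      intro w hw
      have hwCode : w ∈ Code := by rw [hCodeRange]; exact hw
      have h6 := hCodeGRS w hwCode
      have : w ∈ (↑(LinearMap.range Ψ₀) : Set (Fin (q+1) → K)) := by
        rw [← hGRSrange]
        exact h6
      exact this
    have heq : LinearMap.range Φ₀ = LinearMap.range Ψ₀ :=
      Submodule.eq_of_le_of_finrank_le hsub (by rw [hΨrank, hrank])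
    refine ⟨a, θ, habij, hθ0, ?_⟩
    rw [hCodeRange, heq, ← hGRSrange]
end

section
/- Let q be a prime power, let F_q ⊆ F_{q²} be the finite fields with q and q² elements, let α_1, …, α_{q+1} be the (q+1) distinct (q+1)-st roots of unity in F_{q²}, and for each i choose ω_i ∈ F_{q²} with α_i = ω_i^{q−1}. If k is even with 1 ≤ k ≤ q, then the code C = {(ω_1^q h(α_1)+ω_1 h(α_1)^q, …, ω_{q+1}^q h(α_{q+1})+ω_{q+1} h(α_{q+1})^q) : h ∈ F_{q²}[X], deg h ≤ k/2 − 1} is a k-dimensional F_q-linear subspace of F_q^{q+1} with minimum distance q+2−k (i.e. a [q+1,k,q+2−k]_q MDS code), and moreover C is a generalised Reed–Solomon code over F_q. -/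
open Polynomial

section AuxGRS
open Finset

open Polynomial Finset

section Helpers

variable {K : Type*} [Field K] [DecidableEq K]

/-- If a nonzero polynomial vanishes on a finset, the finset is small. -/
lemma card_le_natDegree_of_eval_zero {P : K[X]} (hP : P ≠ 0) {s : Finset K}
    (h : ∀ x ∈ s, P.eval x = 0) : s.card ≤ P.natDegree := by
  have hsub : s ⊆ P.roots.toFinset := by
    intro x hx
    rw [Multiset.mem_toFinset, mem_roots hP]
    exact h x hx
  calc s.card ≤ P.roots.toFinset.card := Finset.card_le_card hsub
    _ ≤ Multiset.card P.roots := Multiset.toFinset_card_le _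
    _ ≤ P.natDegree := P.card_roots'

/-- coefficient of an explicit sum of monomials -/
lemma coeff_sum_C_mul_X_pow (N : ℕ) (a : ℕ → K) (n : ℕ) :
    (∑ s ∈ range N, C (a s) * X ^ s).coeff n = if n < N then a n else 0 := by
  rw [finset_sum_coeff]
  simp only [coeff_C_mul, coeff_X_pow]
  by_cases hn : n < N
  · rw [Finset.sum_eq_single n (fun b _ hb => by simp [Ne.symm hb]) (fun h => absurd (mem_range.2 hn) h)]
    simp [hn]
  · rw [if_neg hn, Finset.sum_eq_zero]
    intro b hb
    have : b ≠ n := by rintro rfl; exact hn (mem_range.1 hb)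
    simp [Ne.symm this]

end Helpers


open Polynomial Finset

noncomputable section

/-- The `q`-power map is a ring hom on any field extension of `F_q`. -/
lemma exists_pow_ringHom (F K : Type*) [Field F] [Fintype F] [Field K] [Algebra F K] {q : ℕ}
    (hF : Fintype.card F = q) : ∃ σ : K →+* K, ∀ x, σ x = x ^ q := by
  set p := ringChar F with hp
  haveI : CharP F p := ringChar.charP F
  obtain ⟨n, hprime, hcard⟩ := FiniteField.card F p
  haveI : Fact p.Prime := ⟨hprime⟩
  haveI : CharP K p := charP_of_injective_algebraMap (algebraMap F K).injective p
  refine ⟨iterateFrobenius K p n, fun x => ?_⟩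
  rw [iterateFrobenius_def, ← hcard, hF]

variable {K : Type*} [Field K] [Fintype K] [DecidableEq K]

lemma card_le_natDegree_of_eval_zero' {P : K[X]} (hP : P ≠ 0) {s : Finset K}
    (h : ∀ x ∈ s, P.eval x = 0) : s.card ≤ P.natDegree := by
  have hsub : s ⊆ P.roots.toFinset := by
    intro x hx
    rw [Multiset.mem_toFinset, mem_roots hP]
    exact h x hx
  calc s.card ≤ P.roots.toFinset.card := Finset.card_le_card hsub
    _ ≤ Multiset.card P.roots := Multiset.toFinset_card_le _
    _ ≤ P.natDegree := P.card_roots'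

/-- fixed points of `x ↦ x^q` are exactly the base field. -/
lemma pow_q_fixed_iff (F : Type*) [Field F] [Fintype F] [Algebra F K] {q : ℕ}
    (hF : Fintype.card F = q) (hq : 2 ≤ q) (x : K) :
    x ^ q = x ↔ x ∈ Set.range (algebraMap F K) := by
  have halg : ∀ a : F, (algebraMap F K a) ^ q = algebraMap F K a := by
    intro a
    rw [← map_pow, ← hF, FiniteField.pow_card]
  constructor
  · intro hx
    set P : K[X] := X ^ q - X with hPdef
    have hmon : P.Monic := by
      apply monic_X_pow_sub
      rw [degree_X]
      exact_mod_cast hq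
    have hdeg : P.natDegree = q := by
      rw [hPdef]
      rw [natDegree_sub_eq_left_of_natDegree_lt] <;>
        simp [natDegree_X_pow, natDegree_X]; omega
    set S : Finset K := Finset.univ.image (algebraMap F K) with hS
    have hcardS : S.card = q := by
      rw [hS, Finset.card_image_of_injective _ (algebraMap F K).injective, Finset.card_univ, hF]
    by_contra hxS'
    have hxS : x ∉ S := by
      intro hmem
      obtain ⟨a, _, ha⟩ := Finset.mem_image.1 hmem
      exact hxS' ⟨a, ha⟩
    have : (insert x S).card ≤ P.natDegree := by
      apply card_le_natDegree_of_eval_zero' hmon.ne_zero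
      intro y hy
      simp only [hPdef, eval_sub, eval_pow, eval_X]
      rcases Finset.mem_insert.1 hy with rfl | hyS
      · rw [hx, sub_self]
      · obtain ⟨a, _, ha⟩ := Finset.mem_image.1 hyS
        rw [← ha, halg, sub_self]
    rw [Finset.card_insert_of_notMem hxS, hcardS, hdeg] at this
    omega
  · rintro ⟨a, rfl⟩
    exact halg a

/-- every `(q+1)`-st root of unity is hit by `α`. -/
lemma root_mem_range {q : ℕ} (α : Fin (q + 1) → K) (hαinj : Function.Injective α)
    (hαroot : ∀ i, α i ^ (q + 1) = 1) {x : K} (hx : x ^ (q + 1) = 1) :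
    ∃ i, α i = x := by
  set P : K[X] := X ^ (q + 1) - C 1 with hPdef
  have hP0 : P ≠ 0 := X_pow_sub_C_ne_zero (Nat.succ_pos q) 1
  have hdeg : P.natDegree = q + 1 := natDegree_X_pow_sub_C
  set T : Finset K := Finset.univ.image α with hT
  have hcardT : T.card = q + 1 := by
    rw [hT, Finset.card_image_of_injective _ hαinj, Finset.card_univ, Fintype.card_fin]
  by_contra hxT'
  have hxT : x ∉ T := by
    intro hmem
    obtain ⟨i, _, hi⟩ := Finset.mem_image.1 hmem
    exact hxT' ⟨i, hi⟩
  have : (insert x T).card ≤ P.natDegree := by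
    apply card_le_natDegree_of_eval_zero' hP0
    intro y hy
    simp only [hPdef, eval_sub, eval_pow, eval_X, eval_C]
    rcases Finset.mem_insert.1 hy with rfl | hyT
    · rw [hx, sub_self]
    · obtain ⟨i, _, hi⟩ := Finset.mem_image.1 hyT
      rw [← hi, hαroot, sub_self]
  rw [Finset.card_insert_of_notMem hxT, hcardT, hdeg] at this
  omega

/-- surjectivity of the (q-1)-power map onto (q+1)-st roots of unity. -/
lemma exists_pow_q_sub_one {q : ℕ} (hK : Fintype.card K = q ^ 2) (hq : 2 ≤ q) {v : K}
    (hv : v ≠ 0) (hv1 : v ^ (q + 1) = 1) : ∃ u : K, u ≠ 0 ∧ u ^ (q - 1) = v := by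
  obtain ⟨r, rfl⟩ : ∃ r, q = r + 2 := ⟨q - 2, by omega⟩
  obtain ⟨ζ, hζ⟩ := IsCyclic.exists_generator (α := Kˣ)
  have hcardU : Fintype.card Kˣ = (r + 1) * (r + 3) := by
    rw [Fintype.card_units, hK]
    have : (r + 1) * (r + 3) + 1 = (r + 2) ^ 2 := by ring
    omega
  have horder : orderOf ζ = (r + 1) * (r + 3) := by
    rw [orderOf_eq_card_of_forall_mem_zpowers hζ, Nat.card_eq_fintype_card, hcardU]
  set vu : Kˣ := Units.mk0 v hv with hvu
  obtain ⟨n, hn⟩ : ∃ n : ℕ, ζ ^ n = vu := by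
    have := hζ vu
    rw [← mem_powers_iff_mem_zpowers] at this
    obtain ⟨n, hn⟩ := this
    exact ⟨n, hn⟩
  have hvu1 : vu ^ (r + 2 + 1) = 1 := by
    ext
    push_cast
    exact hv1
  have hdvd : (r + 1) * (r + 3) ∣ n * (r + 3) := by
    rw [← horder]
    apply orderOf_dvd_of_pow_eq_one
    rw [pow_mul, hn, show r + 3 = r + 2 + 1 by omega]
    exact hvu1
  have hdvd' : (r + 1) ∣ n := by
    rwa [Nat.mul_dvd_mul_iff_right (show 0 < r + 3 by omega)] at hdvd
  obtain ⟨s, rfl⟩ := hdvd'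
  refine ⟨(ζ ^ s : Kˣ), Units.ne_zero _, ?_⟩
  have : (ζ ^ s) ^ (r + 2 - 1) = vu := by
    rw [show r + 2 - 1 = r + 1 by omega, ← pow_mul, mul_comm s (r + 1), hn]
  calc ((ζ ^ s : Kˣ) : K) ^ (r + 2 - 1) = (((ζ ^ s) ^ (r + 2 - 1) : Kˣ) : K) := by push_cast; ring
    _ = v := by rw [this, hvu, Units.val_mk0]


open Polynomial Finset

noncomputable section

variable {K : Type*} [Field K]

/-- Möbius substitution into a polynomial of degree ≤ t. -/
def SubstPoly (t : ℕ) (P : K[X]) (a b c : K) : K[X] :=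
  ∑ s ∈ range (t + 1), C (P.coeff s) * (C a * X + C b) ^ s * (X - C c) ^ (t - s)

lemma SubstPoly_natDegree_le (t : ℕ) (P : K[X]) (a b c : K) :
    (SubstPoly t P a b c).natDegree ≤ t := by
  apply natDegree_sum_le_of_forall_le
  intro s hs
  have hs' : s ≤ t := Nat.lt_succ_iff.1 (mem_range.1 hs)
  calc (C (P.coeff s) * (C a * X + C b) ^ s * (X - C c) ^ (t - s)).natDegree
      ≤ (C (P.coeff s) * (C a * X + C b) ^ s).natDegree + ((X - C c) ^ (t - s)).natDegree :=
        natDegree_mul_le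
    _ ≤ ((C (P.coeff s)).natDegree + ((C a * X + C b) ^ s).natDegree) + ((X - C c) ^ (t - s)).natDegree := by
        gcongr; exact natDegree_mul_le
    _ ≤ (0 + s * 1) + (t - s) * 1 := by
        gcongr
        · simp
        · exact (natDegree_pow_le).trans (by gcongr; exact natDegree_linear_le)
        · exact (natDegree_pow_le).trans (by gcongr; exact natDegree_X_sub_C_le c)
    _ ≤ t := by omega

lemma SubstPoly_eval (t : ℕ) (P : K[X]) (hP : P.natDegree ≤ t) (a b c : K) {x : K}
    (hx : x ≠ c) :
    (SubstPoly t P a b c).eval x = (x - c) ^ t * P.eval ((a * x + b) / (x - c)) := by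
  have hxc : x - c ≠ 0 := sub_ne_zero.2 hx
  rw [SubstPoly, eval_finset_sum, eval_eq_sum_range' (Nat.lt_succ_of_le hP), Finset.mul_sum]
  apply Finset.sum_congr rfl
  intro s hs
  have hs' : s ≤ t := Nat.lt_succ_iff.1 (mem_range.1 hs)
  simp only [eval_mul, eval_pow, eval_add, eval_sub, eval_C, eval_X, eval_mul]
  rw [div_pow]
  field_simp
  rw [show (x - c) ^ t = (x - c) ^ s * (x - c) ^ (t - s) by rw [← pow_add]; congr 1; omega]
  ring

lemma SubstPoly_eval_c (t : ℕ) (P : K[X]) (a b c : K) :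
    (SubstPoly t P a b c).eval c = P.coeff t * (a * c + b) ^ t := by
  rw [SubstPoly, eval_finset_sum]
  rw [Finset.sum_eq_single t]
  · simp
  · intro s hs hst
    have : t - s ≠ 0 := by have := mem_range.1 hs; omega
    simp [this, sub_self, zero_pow this]
  · intro h; exact absurd (mem_range.2 (Nat.lt_succ_self t)) h

lemma SubstPoly_coeff_top (t : ℕ) (P : K[X]) (hP : P.natDegree ≤ t) {a : K} (ha : a ≠ 0)
    (b c : K) : (SubstPoly t P a b c).coeff t = P.eval a := by
  rw [SubstPoly, finset_sum_coeff, eval_eq_sum_range' (Nat.lt_succ_of_le hP)]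
  apply Finset.sum_congr rfl
  intro s hs
  have hs' : s ≤ t := Nat.lt_succ_iff.1 (mem_range.1 hs)
  obtain ⟨d, rfl⟩ : ∃ d, t = s + d := ⟨t - s, by omega⟩
  simp only [Nat.add_sub_cancel_left]
  have hlin : (C a * X + C b) = C a * (X + C (b / a)) := by
    rw [mul_add, ← C_mul, mul_div_cancel₀ _ ha]
  have hmon1 : (X + C (b / a)).Monic := monic_X_add_C _
  have hmon2 : ((X + C (b / a)) ^ s).Monic := hmon1.pow s
  have hmon3 : ((X - C c) ^ d).Monic := (monic_X_sub_C c).pow _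
  have hd2 : ((X + C (b / a)) ^ s).natDegree = s := by
    rw [natDegree_pow, natDegree_X_add_C, mul_one]
  have hd3 : ((X - C c) ^ d).natDegree = d := by
    rw [natDegree_pow, natDegree_X_sub_C, mul_one]
  rw [hlin, mul_pow, ← C_pow]
  rw [show C (P.coeff s) * (C (a ^ s) * (X + C (b / a)) ^ s) * (X - C c) ^ d
      = C (P.coeff s * a ^ s) * ((X + C (b / a)) ^ s * (X - C c) ^ d) by
    rw [C_mul]; ring]
  rw [coeff_C_mul]
  rw [coeff_mul_add_eq_of_natDegree_le hd2.le hd3.le]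
  have e2 : ((X + C (b / a)) ^ s).coeff s = 1 := by
    have := hmon2.coeff_natDegree; rwa [hd2] at this
  have e3 : ((X - C c) ^ d).coeff d = 1 := by
    have := hmon3.coeff_natDegree; rwa [hd3] at this
  rw [e2, e3]; ring

end


open Polynomial Finset

variable {K : Type*} [Field K]

/-- Möbius injectivity -/
lemma phi_inj_aux {A B δ : K} (hN : B + A * δ ≠ 0) {x y : K} (hx : x ≠ δ) (hy : y ≠ δ)
    (hxy : (A * x + B) / (x - δ) = (A * y + B) / (y - δ)) : x = y := by
  have hx' := sub_ne_zero.2 hx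
  have hy' := sub_ne_zero.2 hy
  rw [div_eq_div_iff hx' hy'] at hxy
  have h0 : (x - y) * (B + A * δ) = 0 := by linear_combination -hxy
  rcases mul_eq_zero.1 h0 with h | h
  · exact sub_eq_zero.1 h
  · exact absurd h hN

/-- the Möbius image of a norm-one element is fixed by `x ↦ x^q`. -/
lemma phi_fix {q : ℕ} (σ : K →+* K) (hσ : ∀ x, σ x = x ^ q)
    {x δ B : K} (hx0 : x ≠ 0) (hδ0 : δ ≠ 0) (hxδ : x ≠ δ)
    (hxinv : x ^ q * x = 1) (hδinv : δ ^ q * δ = 1) (hB2 : (B ^ q) ^ q = B) :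
    ((-δ * B ^ q * x + B) / (x - δ)) ^ q = (-δ * B ^ q * x + B) / (x - δ) := by
  have hxq : x ^ q = x⁻¹ := eq_inv_of_mul_eq_one_left hxinv
  have hδq : δ ^ q = δ⁻¹ := eq_inv_of_mul_eq_one_left hδinv
  have hxδ' : x - δ ≠ 0 := sub_ne_zero.2 hxδ
  have hnum : (-δ * B ^ q * x + B) ^ q = -δ⁻¹ * B * x⁻¹ + B ^ q := by
    rw [← hσ, map_add, map_mul, map_mul, map_neg, hσ, hσ, hσ, hσ, hB2, hxq, hδq]
  have hden : (x - δ) ^ q = x⁻¹ - δ⁻¹ := by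
    rw [← hσ, map_sub, hσ, hσ, hxq, hδq]
  have hden0 : x⁻¹ - δ⁻¹ ≠ 0 := by
    rw [sub_ne_zero]
    exact fun h => hxδ (inv_injective h)
  rw [div_pow, hnum, hden, div_eq_div_iff hden0 hxδ']
  field_simp
  ring

/-- fixedness ratio for the scaling constants. -/
lemma ratio_fix {q : ℕ} (σ : K →+* K) (hσ : ∀ x, σ x = x ^ q) (m : ℕ)
    {x δ B u N : K} (hx0 : x ≠ 0) (hδ0 : δ ≠ 0) (hxδ : x ≠ δ)
    (hxinv : x ^ q * x = 1) (hδinv : δ ^ q * δ = 1) (hB2 : (B ^ q) ^ q = B)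
    (hu0 : u ≠ 0) (hN0 : N ≠ 0) (hNdef : N = B - δ ^ 2 * B ^ q)
    (huq : u ^ q = u * δ ^ (2 * m + 1)) :
    ((x - δ) ^ (2 * m + 1) / (u * N ^ (2 * m + 1))) ^ q * x ^ (2 * m + 1)
      = (x - δ) ^ (2 * m + 1) / (u * N ^ (2 * m + 1)) := by
  have todd : Odd (2 * m + 1) := ⟨m, rfl⟩
  have hMq1 : (x - δ) ^ q = -(x - δ) * (x ^ q * δ ^ q) := by
    rw [← hσ, map_sub, hσ, hσ]
    linear_combination (δ ^ q) * hxinv - (x ^ q) * hδinv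
  have hNq1 : N ^ q = -N * (δ ^ q) ^ 2 := by
    rw [← hσ, hNdef, map_sub, map_mul, map_pow, hσ, hσ, hσ, hB2]
    linear_combination (-(B ^ q) * (δ ^ q * δ + 1)) * hδinv
  have e1 : ((x - δ) ^ (2 * m + 1)) ^ q
      = -(((x - δ) * (x ^ q * δ ^ q)) ^ (2 * m + 1)) := by
    rw [pow_right_comm, hMq1, neg_mul, todd.neg_pow]
  have e2 : (N ^ (2 * m + 1)) ^ q = -((N * (δ ^ q) ^ 2) ^ (2 * m + 1)) := by
    rw [pow_right_comm, hNq1, neg_mul, todd.neg_pow]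
  have hden1 : u * δ ^ (2 * m + 1) * (N * (δ ^ q) ^ 2) ^ (2 * m + 1) ≠ 0 := by
    have hδq0 : δ ^ q ≠ 0 := fun h => by
      rw [h, zero_mul] at hδinv; exact zero_ne_one hδinv
    exact mul_ne_zero (mul_ne_zero hu0 (pow_ne_zero _ hδ0))
      (pow_ne_zero _ (mul_ne_zero hN0 (pow_ne_zero _ hδq0)))
  have hden2 : u * N ^ (2 * m + 1) ≠ 0 := mul_ne_zero hu0 (pow_ne_zero _ hN0)
  rw [div_pow, mul_pow u (N ^ (2 * m + 1)), e1, e2, huq]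
  rw [show -(((x - δ) * (x ^ q * δ ^ q)) ^ (2 * m + 1)) /
      (u * δ ^ (2 * m + 1) * -((N * (δ ^ q) ^ 2) ^ (2 * m + 1)))
      = ((x - δ) * (x ^ q * δ ^ q)) ^ (2 * m + 1) /
        (u * δ ^ (2 * m + 1) * (N * (δ ^ q) ^ 2) ^ (2 * m + 1)) from by
    rw [mul_neg, div_neg, neg_div, neg_neg]]
  rw [div_mul_eq_mul_div, div_eq_div_iff hden1 hden2]
  have c1 : (x ^ q) ^ (2 * m + 1) * x ^ (2 * m + 1) = 1 := by
    rw [← mul_pow, hxinv, one_pow]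
  have c2 : (δ ^ q) ^ (2 * m + 1) * δ ^ (2 * m + 1) = 1 := by
    rw [← mul_pow, hδinv, one_pow]
  rw [mul_pow (x - δ) (x ^ q * δ ^ q), mul_pow (x ^ q) (δ ^ q), mul_pow N ((δ ^ q) ^ 2)]
  linear_combination ((x - δ) ^ (2 * m + 1) * u * N ^ (2 * m + 1) * (δ ^ q) ^ (2 * m + 1)) * c1
    - ((x - δ) ^ (2 * m + 1) * u * N ^ (2 * m + 1) * (δ ^ q) ^ (2 * m + 1)) * c2

/-- evaluation identity for the forward direction. -/
lemma trace_eval {q : ℕ} (σ : K →+* K) (hσ : ∀ x, σ x = x ^ q) (m : ℕ)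
    (h : K[X]) (hh : h.natDegree ≤ m) {x w : K} (hx : x ^ q * x = 1) (hw : w ^ q = w * x) :
    (w ^ q * h.eval x + w * (h.eval x) ^ q) * x ^ m
      = w * (X ^ (m + 1) * h + ∑ j ∈ range (m + 1), C ((h.coeff j) ^ q) * X ^ (m - j)).eval x := by
  have hev : h.eval x = ∑ j ∈ range (m + 1), h.coeff j * x ^ j :=
    eval_eq_sum_range' (Nat.lt_succ_of_le hh) x
  have hevq : (h.eval x) ^ q = ∑ j ∈ range (m + 1), (h.coeff j) ^ q * (x ^ q) ^ j := by
    rw [← hσ, hev, map_sum]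
    exact Finset.sum_congr rfl fun j hj => by rw [map_mul, map_pow, hσ, hσ]
  have hterm : ∀ j ∈ range (m + 1), (h.coeff j) ^ q * (x ^ q) ^ j * x ^ m
      = (h.coeff j) ^ q * x ^ (m - j) := by
    intro j hj
    have hj' : j ≤ m := Nat.lt_succ_iff.1 (mem_range.1 hj)
    have h2 : (x ^ q) ^ j * x ^ m = x ^ (m - j) := by
      have h1 : (x ^ q) ^ j * x ^ j = 1 := by rw [← mul_pow, hx, one_pow]
      calc (x ^ q) ^ j * x ^ m = ((x ^ q) ^ j * x ^ j) * x ^ (m - j) := by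
            rw [mul_assoc, ← pow_add]; congr 2; omega
        _ = x ^ (m - j) := by rw [h1, one_mul]
    rw [mul_assoc, h2]
  have hsum : (∑ j ∈ range (m + 1), (h.coeff j) ^ q * (x ^ q) ^ j) * x ^ m
      = ∑ j ∈ range (m + 1), (h.coeff j) ^ q * x ^ (m - j) := by
    rw [Finset.sum_mul]
    exact Finset.sum_congr rfl fun j hj => by rw [mul_assoc, ← mul_assoc, hterm j hj]
  rw [eval_add, eval_mul, eval_pow, eval_X, eval_finset_sum]
  simp only [eval_mul, eval_pow, eval_C, eval_X]
  rw [hevq, hw, add_mul, mul_assoc w _ (x ^ m), hsum]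
  ring

/-- evaluation identity for the backward direction. -/
lemma trace_eval' {q : ℕ} (σ : K →+* K) (hσ : ∀ x, σ x = x ^ q) (m : ℕ)
    (gP : K[X]) (hgP : gP.natDegree ≤ 2 * m + 1)
    (hrel : ∀ j, j ≤ m → (gP.coeff (m + 1 + j)) ^ q = gP.coeff (m - j))
    {x w : K} (hx : x ^ q * x = 1) (hw : w ^ q = w * x) :
    (w ^ q * ((∑ j ∈ range (m + 1), C (gP.coeff (m + 1 + j)) * X ^ j).eval x)
      + w * ((∑ j ∈ range (m + 1), C (gP.coeff (m + 1 + j)) * X ^ j).eval x) ^ q) * x ^ m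
      = w * gP.eval x := by
  have hev : (∑ j ∈ range (m + 1), C (gP.coeff (m + 1 + j)) * X ^ j).eval x
      = ∑ j ∈ range (m + 1), gP.coeff (m + 1 + j) * x ^ j := by
    rw [eval_finset_sum]
    exact Finset.sum_congr rfl fun j hj => by rw [eval_mul, eval_pow, eval_C, eval_X]
  have hevq : ((∑ j ∈ range (m + 1), C (gP.coeff (m + 1 + j)) * X ^ j).eval x) ^ q
      = ∑ j ∈ range (m + 1), gP.coeff (m - j) * (x ^ q) ^ j := by
    rw [← hσ, hev, map_sum]
    refine Finset.sum_congr rfl fun j hj => ?_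
    rw [map_mul, map_pow, hσ, hσ, hrel j (Nat.lt_succ_iff.1 (mem_range.1 hj))]
  have hgPev : gP.eval x = ∑ n ∈ range (m + 1 + (m + 1)), gP.coeff n * x ^ n :=
    eval_eq_sum_range' (by omega) x
  have hsplit : gP.eval x = (∑ n ∈ range (m + 1), gP.coeff n * x ^ n)
      + ∑ j ∈ range (m + 1), gP.coeff (m + 1 + j) * x ^ (m + 1 + j) := by
    rw [hgPev, Finset.sum_range_add]
  have hrefl : (∑ n ∈ range (m + 1), gP.coeff n * x ^ n)
      = ∑ j ∈ range (m + 1), gP.coeff (m - j) * x ^ (m - j) := by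
    rw [← Finset.sum_range_reflect]
    exact Finset.sum_congr rfl fun j hj => by
      have : m + 1 - 1 - j = m - j := by omega
      rw [this]
  have hterm : ∀ j ∈ range (m + 1), gP.coeff (m - j) * (x ^ q) ^ j * x ^ m
      = gP.coeff (m - j) * x ^ (m - j) := by
    intro j hj
    have hj' : j ≤ m := Nat.lt_succ_iff.1 (mem_range.1 hj)
    have h1 : (x ^ q) ^ j * x ^ j = 1 := by rw [← mul_pow, hx, one_pow]
    have h2 : (x ^ q) ^ j * x ^ m = x ^ (m - j) := by
      calc (x ^ q) ^ j * x ^ m = ((x ^ q) ^ j * x ^ j) * x ^ (m - j) := by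
            rw [mul_assoc, ← pow_add]; congr 2; omega
        _ = x ^ (m - j) := by rw [h1, one_mul]
    rw [mul_assoc, h2]
  have e1 : (∑ j ∈ range (m + 1), gP.coeff (m - j) * (x ^ q) ^ j) * x ^ m
      = ∑ j ∈ range (m + 1), gP.coeff (m - j) * x ^ (m - j) := by
    rw [Finset.sum_mul]
    exact Finset.sum_congr rfl fun j hj => by rw [mul_assoc, ← mul_assoc, hterm j hj]
  have e2 : (∑ j ∈ range (m + 1), gP.coeff (m + 1 + j) * x ^ j) * (x * x ^ m)
      = ∑ j ∈ range (m + 1), gP.coeff (m + 1 + j) * x ^ (m + 1 + j) := by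
    rw [Finset.sum_mul]
    refine Finset.sum_congr rfl fun j hj => ?_
    rw [mul_assoc, show x ^ j * (x * x ^ m) = x ^ (m + 1 + j) from by
      rw [show x * x ^ m = x ^ (m + 1) from by rw [← pow_succ']
      , ← pow_add]; congr 1; omega]
  rw [hevq, hev, hw, hsplit, hrefl]
  calc (w * x * (∑ j ∈ range (m + 1), gP.coeff (m + 1 + j) * x ^ j)
        + w * ∑ j ∈ range (m + 1), gP.coeff (m - j) * (x ^ q) ^ j) * x ^ m
      = w * ((∑ j ∈ range (m + 1), gP.coeff (m + 1 + j) * x ^ j) * (x * x ^ m))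
        + w * ((∑ j ∈ range (m + 1), gP.coeff (m - j) * (x ^ q) ^ j) * x ^ m) := by ring
    _ = w * (∑ j ∈ range (m + 1), gP.coeff (m + 1 + j) * x ^ (m + 1 + j))
        + w * ∑ j ∈ range (m + 1), gP.coeff (m - j) * x ^ (m - j) := by rw [e1, e2]
    _ = w * ((∑ j ∈ range (m + 1), gP.coeff (m - j) * x ^ (m - j))
        + ∑ j ∈ range (m + 1), gP.coeff (m + 1 + j) * x ^ (m + 1 + j)) := by ring


open Polynomial Finset

noncomputable section

lemma grs_aux (q k : ℕ) (F K : Type*) [Field F] [Fintype F] [Field K] [Fintype K]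
    [DecidableEq K] [Algebra F K]
    (hF : Fintype.card F = q) (hK : Fintype.card K = q ^ 2)
    (hkeven : Even k) (hk1 : 1 ≤ k) (hkq : k ≤ q)
    (α : Fin (q + 1) → K) (hαinj : Function.Injective α)
    (hαroot : ∀ i, α i ^ (q + 1) = 1)
    (ω : Fin (q + 1) → K) (hω : ∀ i, α i = ω i ^ (q - 1))
    (Code : Set (Fin (q + 1) → K))
    (hCode : Code = { w | ∃ h : Polynomial K, h.degree ≤ (k / 2 - 1 : ℕ) ∧
      w = fun i => ω i ^ q * h.eval (α i) + ω i * (h.eval (α i)) ^ q }) :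
    IsGRSCode q k F K Code := by
  classical
  have hk2 : 2 ≤ k := by obtain ⟨l, hl⟩ := hkeven; omega
  have hq2 : 2 ≤ q := le_trans hk2 hkq
  set m : ℕ := k / 2 - 1 with hmdef
  have hkm : k = 2 * m + 2 := by obtain ⟨l, hl⟩ := hkeven; omega
  have htm : k - 1 = 2 * m + 1 := by omega
  have htq : 2 * m + 1 < q := by omega
  obtain ⟨σ, hσ⟩ := exists_pow_ringHom F K hF
  have halginj := (algebraMap F K).injective
  have hq2pow : ∀ x : K, (x ^ q) ^ q = x := by
    intro x; rw [← pow_mul, ← sq, ← hK, FiniteField.pow_card]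
  have hα0 : ∀ i, α i ≠ 0 := by
    intro i h
    have h2 := hαroot i
    rw [h, zero_pow (Nat.succ_ne_zero q)] at h2
    exact zero_ne_one h2
  have hω0 : ∀ i, ω i ≠ 0 := by
    intro i h
    apply hα0 i
    rw [hω i, h, zero_pow (by omega : q - 1 ≠ 0)]
  have hαinv : ∀ i, α i ^ q * α i = 1 := by
    intro i; rw [← pow_succ, hαroot i]
  have hωq : ∀ i, ω i ^ q = ω i * α i := by
    intro i
    conv_lhs => rw [show q = (q - 1) + 1 by omega]
    rw [pow_succ, ← hω i, mul_comm]
  -- fixed field membership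
  have hfix := fun x : K => pow_q_fixed_iff F hF hq2 x
  -- δ
  set δ : K := α (Fin.last q) with hδdef
  have hδroot : δ ^ (q + 1) = 1 := hαroot (Fin.last q)
  have hδ0 : δ ≠ 0 := hα0 _
  have hδinv : δ ^ q * δ = 1 := hαinv _
  have hδq0 : δ ^ q ≠ 0 := fun h => by
    rw [h, zero_mul] at hδinv; exact zero_ne_one hδinv
  have hαδ : ∀ i : Fin (q + 1), i ≠ Fin.last q → α i ≠ δ :=
    fun i hi h => hi (hαinj h)
  have hcastlast : ∀ j : Fin q, j.castSucc ≠ Fin.last q := fun j h => by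
    have := Fin.castSucc_lt_last j
    rw [h] at this
    exact lt_irrefl _ this
  -- choice of B
  obtain ⟨c₀, hc₀⟩ : ∃ c : K, c ^ q ≠ c := by
    by_contra hall
    push_neg at hall
    have hsurj : Function.Surjective (algebraMap F K) := by
      intro x
      exact (hfix x).1 (hall x)
    have hle := Fintype.card_le_of_surjective _ hsurj
    rw [hF, hK, sq] at hle
    have h2q : 2 * q ≤ q * q := Nat.mul_le_mul_right q hq2
    omega
  obtain ⟨B, hB⟩ : ∃ B : K, δ ^ 2 * B ^ q ≠ B := by
    by_cases h1 : δ ^ 2 * (1 : K) ^ q = 1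
    · refine ⟨c₀, fun h => hc₀ ?_⟩
      rw [one_pow, mul_one] at h1
      rwa [h1, one_mul] at h
    · exact ⟨1, h1⟩
  have hB2 : (B ^ q) ^ q = B := hq2pow B
  obtain ⟨A, hAdef⟩ : ∃ A : K, A = -δ * B ^ q := ⟨_, rfl⟩
  obtain ⟨N, hNdef⟩ : ∃ N : K, N = B - δ ^ 2 * B ^ q := ⟨_, rfl⟩
  have hN0 : N ≠ 0 := by rw [hNdef]; exact sub_ne_zero.2 (Ne.symm hB)
  have hNAB : B + A * δ = N := by rw [hAdef, hNdef]; ring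
  -- u
  obtain ⟨u, hu0, huq1⟩ : ∃ u : K, u ≠ 0 ∧ u ^ (q - 1) = δ ^ (2 * m + 1) := by
    apply exists_pow_q_sub_one hK hq2 (pow_ne_zero _ hδ0)
    rw [← pow_mul, mul_comm (2 * m + 1) (q + 1), pow_mul, hδroot, one_pow]
  have huq : u ^ q = u * δ ^ (2 * m + 1) := by
    conv_lhs => rw [show q = (q - 1) + 1 by omega]
    rw [pow_succ, huq1, mul_comm]
  obtain ⟨E, hEdef⟩ : ∃ E : K, E = u * N ^ (2 * m + 1) := ⟨_, rfl⟩
  have hE0 : E ≠ 0 := by rw [hEdef]; exact mul_ne_zero hu0 (pow_ne_zero _ hN0)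
  -- the Möbius map
  obtain ⟨φ, hφdef⟩ : ∃ φ : K → K, φ = fun x => (A * x + B) / (x - δ) := ⟨_, rfl⟩
  have hφeq : ∀ x : K, φ x = (A * x + B) / (x - δ) := fun x => by rw [hφdef]
  have hφfix : ∀ i : Fin (q + 1), i ≠ Fin.last q → (φ (α i)) ^ q = φ (α i) := by
    intro i hi
    rw [hφeq, hAdef]
    exact phi_fix σ hσ (hα0 i) hδ0 (hαδ i hi) (hαinv i) hδinv hB2
  have hφsub : ∀ x : K, x ≠ δ → φ x - A = N / (x - δ) := by
    intro x hx
    rw [hφeq]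
    have hx' : x - δ ≠ 0 := sub_ne_zero.2 hx
    field_simp
    linear_combination hNAB
  have hφnum : ∀ x : K, x ≠ δ → δ * φ x + B = x * N / (x - δ) := by
    intro x hx
    rw [hφeq]
    have hx' : x - δ ≠ 0 := sub_ne_zero.2 hx
    field_simp
    linear_combination x * hNAB
  have hφA : ∀ x : K, x ≠ δ → φ x ≠ A := by
    intro x hx h
    have h2 := hφsub x hx
    rw [h, sub_self] at h2
    have hx' : x - δ ≠ 0 := sub_ne_zero.2 hx
    rcases _root_.div_eq_zero_iff.1 h2.symm with h3 | h3
    · exact hN0 h3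
    · exact hx' h3
  have hφback : ∀ x : K, x ≠ δ → (δ * φ x + B) / (φ x - A) = x := by
    intro x hx
    have hx' : x - δ ≠ 0 := sub_ne_zero.2 hx
    rw [hφsub x hx, hφnum x hx]
    rw [div_div_div_eq]
    field_simp
  have hφinj : ∀ i j : Fin (q + 1), i ≠ Fin.last q → j ≠ Fin.last q →
      φ (α i) = φ (α j) → i = j := by
    intro i j hi hj hij
    apply hαinj
    rw [hφeq, hφeq] at hij
    exact phi_inj_aux (by rw [hNAB]; exact hN0) (hαδ i hi) (hαδ j hj) hij
  -- the evaluation points in F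
  have hchoice : ∀ j : Fin q, ∃ aj : F, algebraMap F K aj = φ (α j.castSucc) := by
    intro j
    apply (hfix _).1
    exact hφfix _ (hcastlast j)
  choose a ha using hchoice
  have hainj : Function.Injective a := by
    intro j1 j2 hj
    have h1 : φ (α j1.castSucc) = φ (α j2.castSucc) := by
      rw [← ha, ← ha, hj]
    exact Fin.castSucc_injective q (hφinj _ _ (hcastlast j1) (hcastlast j2) h1)
  -- the ratio lemma
  have hratio : ∀ i : Fin (q + 1), i ≠ Fin.last q →
      ((α i - δ) ^ (2 * m + 1) / E) ^ q * (α i) ^ (2 * m + 1)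
        = (α i - δ) ^ (2 * m + 1) / E := by
    intro i hi
    rw [hEdef]
    exact ratio_fix σ hσ m (hα0 i) hδ0 (hαδ i hi) (hαinv i) hδinv hB2 hu0 hN0 hNdef huq
  -- scaling constants
  obtain ⟨c, hcdef⟩ : ∃ c : Fin (q + 1) → K, c = fun i =>
      if i = Fin.last q then ω i / (δ ^ m * u)
      else ω i * ((α i - δ) ^ (2 * m + 1) / E) / (α i) ^ m := ⟨_, rfl⟩
  have hclast : c (Fin.last q) = ω (Fin.last q) / (δ ^ m * u) := by
    rw [hcdef]; simp
  have hcne : ∀ i, i ≠ Fin.last q →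
      c i = ω i * ((α i - δ) ^ (2 * m + 1) / E) / (α i) ^ m := by
    intro i hi; rw [hcdef]; simp [hi]
  have hc0 : ∀ i, c i ≠ 0 := by
    intro i
    by_cases hi : i = Fin.last q
    · subst hi
      rw [hclast]
      exact div_ne_zero (hω0 _) (mul_ne_zero (pow_ne_zero _ hδ0) hu0)
    · rw [hcne i hi]
      exact div_ne_zero (mul_ne_zero (hω0 _) (div_ne_zero
        (pow_ne_zero _ (sub_ne_zero.2 (hαδ i hi))) hE0)) (pow_ne_zero _ (hα0 i))
  have hcfix : ∀ i, (c i) ^ q = c i := by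
    intro i
    by_cases hi : i = Fin.last q
    · subst hi
      rw [hclast]
      have hωlq : (ω (Fin.last q)) ^ q = ω (Fin.last q) * δ := hωq (Fin.last q)
      have cm : (δ ^ q) ^ m * δ ^ m = 1 := by rw [← mul_pow, hδinv, one_pow]
      rw [div_pow, mul_pow, pow_right_comm, huq, hωlq]
      rw [div_eq_div_iff (mul_ne_zero (pow_ne_zero _ hδq0)
        (mul_ne_zero hu0 (pow_ne_zero _ hδ0))) (mul_ne_zero (pow_ne_zero _ hδ0) hu0)]
      linear_combination (-(ω (Fin.last q)) * u * δ ^ (m + 1)) * cm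
    · rw [hcne i hi]
      have hαq0 : (α i) ^ q ≠ 0 := fun h => by
        have h2 := hαinv i
        rw [h, zero_mul] at h2
        exact zero_ne_one h2
      have cmx : ((α i) ^ q) ^ m * (α i) ^ m = 1 := by rw [← mul_pow, hαinv, one_pow]
      rw [div_pow, mul_pow, pow_right_comm, hωq i]
      rw [div_eq_div_iff (pow_ne_zero _ hαq0) (pow_ne_zero _ (hα0 i))]
      linear_combination (ω i * ((α i) ^ q) ^ m) * (hratio i hi)
        - (ω i * (((α i - δ) ^ (2 * m + 1) / E) ^ q) * (α i) ^ (m + 1)) * cmx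
  -- the multipliers in F
  have hθex : ∀ i, ∃ t : F, algebraMap F K t = c i := fun i => (hfix (c i)).1 (hcfix i)
  choose θ hθ using hθex
  have hθ0 : ∀ i, θ i ≠ 0 := by
    intro i h
    apply hc0 i
    rw [← hθ i, h, map_zero]
  refine ⟨a, θ, (Fintype.bijective_iff_injective_and_card a).2
    ⟨hainj, by rw [Fintype.card_fin, hF]⟩, hθ0, ?_⟩
  rw [hCode]
  ext w
  simp only [Set.mem_setOf_eq]
  constructor
  · -- forward
    rintro ⟨h, hdeg, rfl⟩
    have hhm : h.natDegree ≤ m := natDegree_le_iff_degree_le.2 hdeg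
    obtain ⟨g, hgdef⟩ : ∃ g : K[X],
        g = X ^ (m + 1) * h + ∑ j ∈ range (m + 1), C ((h.coeff j) ^ q) * X ^ (m - j) :=
      ⟨_, rfl⟩
    have hgnat : g.natDegree ≤ 2 * m + 1 := by
      rw [hgdef]
      refine le_trans (natDegree_add_le _ _) (max_le ?_ ?_)
      · refine le_trans natDegree_mul_le ?_
        rw [natDegree_X_pow]
        omega
      · refine le_trans (natDegree_sum_le_of_forall_le _ _ fun j hj =>
          le_trans (natDegree_C_mul_X_pow_le _ _) (by omega : m - j ≤ 2 * m + 1)) le_rfl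
    have hgeval : ∀ i, (ω i ^ q * h.eval (α i) + ω i * (h.eval (α i)) ^ q) * (α i) ^ m
        = ω i * g.eval (α i) := by
      intro i
      rw [hgdef]
      exact trace_eval σ hσ m h hhm (hαinv i) (hωq i)
    obtain ⟨fK, hfKdef⟩ : ∃ fK : K[X], fK = C u * SubstPoly (2 * m + 1) g δ B A := ⟨_, rfl⟩
    have hfKnat : fK.natDegree ≤ 2 * m + 1 := by
      rw [hfKdef]
      refine le_trans natDegree_mul_le ?_
      rw [natDegree_C, zero_add]
      exact SubstPoly_natDegree_le _ _ _ _ _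
    have hfKeval : ∀ i, i ≠ Fin.last q →
        fK.eval (φ (α i)) * (α i - δ) ^ (2 * m + 1) = E * g.eval (α i) := by
      intro i hi
      have hM0 : (α i - δ) ≠ 0 := sub_ne_zero.2 (hαδ i hi)
      rw [hfKdef, eval_mul, eval_C,
        SubstPoly_eval (2 * m + 1) g hgnat δ B A (hφA _ (hαδ i hi)),
        hφback _ (hαδ i hi), hφsub _ (hαδ i hi), hEdef, div_pow]
      field_simp
    have hwcoord : ∀ i, i ≠ Fin.last q →
        ω i ^ q * h.eval (α i) + ω i * (h.eval (α i)) ^ q = c i * fK.eval (φ (α i)) := by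
      intro i hi
      have hM0 : (α i - δ) ^ (2 * m + 1) ≠ 0 := pow_ne_zero _ (sub_ne_zero.2 (hαδ i hi))
      have hxm0 : (α i) ^ m ≠ 0 := pow_ne_zero _ (hα0 i)
      have h1 : fK.eval (φ (α i)) = E * g.eval (α i) / (α i - δ) ^ (2 * m + 1) := by
        rw [eq_div_iff hM0]
        exact hfKeval i hi
      rw [hcne i hi, h1]
      have h2 := hgeval i
      field_simp
      linear_combination h2
    have hwlast : ω (Fin.last q) ^ q * h.eval δ + ω (Fin.last q) * (h.eval δ) ^ q
        = c (Fin.last q) * fK.coeff (2 * m + 1) := by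
      have hcoefftop : fK.coeff (2 * m + 1) = u * g.eval δ := by
        rw [hfKdef, coeff_C_mul, SubstPoly_coeff_top (2 * m + 1) g hgnat hδ0]
      have h2 := hgeval (Fin.last q)
      rw [hcoefftop, hclast]
      have hδm0 : δ ^ m ≠ 0 := pow_ne_zero _ hδ0
      field_simp
      linear_combination h2
    have hwfixgen : ∀ v y : K, (v ^ q * y + v * y ^ q) ^ q = v ^ q * y + v * y ^ q := by
      intro v y
      rw [← hσ, map_add, map_mul, map_mul, map_pow, map_pow, hσ, hσ, hq2pow, hq2pow]
      ring
    have hfKvalfix : ∀ j : Fin q,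
        (fK.eval (φ (α j.castSucc))) ^ q = fK.eval (φ (α j.castSucc)) := by
      intro j
      have hval : fK.eval (φ (α j.castSucc))
          = (ω j.castSucc ^ q * h.eval (α j.castSucc)
            + ω j.castSucc * (h.eval (α j.castSucc)) ^ q) / c j.castSucc := by
        rw [eq_div_iff (hc0 _), mul_comm]
        exact (hwcoord _ (hcastlast j)).symm
      rw [hval, div_pow, hwfixgen, hcfix]
    have hmapfix : fK.map σ = fK := by
      have hsub0 : fK.map σ - fK = 0 := by
        apply eq_zero_of_natDegree_lt_card_of_eval_eq_zero _
          (show Function.Injective (fun j : Fin q => φ (α j.castSucc)) from ?_)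
        · intro j
          rw [eval_sub, sub_eq_zero]
          have hfixpt : σ (φ (α j.castSucc)) = φ (α j.castSucc) := by
            rw [hσ]; exact hφfix _ (hcastlast j)
          calc (fK.map σ).eval (φ (α j.castSucc))
              = fK.eval₂ σ (φ (α j.castSucc)) := eval_map _ _
            _ = fK.eval₂ σ (σ (φ (α j.castSucc))) := by rw [hfixpt]
            _ = σ (fK.eval (φ (α j.castSucc))) := eval₂_at_apply σ _
            _ = fK.eval (φ (α j.castSucc)) := by rw [hσ]; exact hfKvalfix j
        · rw [Fintype.card_fin]
          refine lt_of_le_of_lt (le_trans (natDegree_sub_le _ _)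
            (max_le (le_trans natDegree_map_le hfKnat) hfKnat)) ?_
          omega
        · intro j1 j2 hj
          exact Fin.castSucc_injective q
            (hφinj _ _ (hcastlast j1) (hcastlast j2) hj)
      have := sub_eq_zero.1 hsub0
      exact this
    have hlift : ∀ n, fK.coeff n ∈ Set.range (algebraMap F K) := by
      intro n
      apply (hfix _).1
      have h2 := congrArg (fun P : K[X] => P.coeff n) hmapfix
      simpa [coeff_map, hσ] using h2
    obtain ⟨f, hf⟩ : ∃ f : F[X], f.map (algebraMap F K) = fK :=
      (mem_lifts _).1 ((lifts_iff_coeff_lifts _).2 hlift)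
    have hfnat : f.natDegree ≤ 2 * m + 1 := by
      rw [← natDegree_map_eq_of_injective halginj f, hf]
      exact hfKnat
    refine ⟨f, ?_, ?_⟩
    · apply natDegree_le_iff_degree_le.1
      omega
    · funext i
      induction i using Fin.lastCases with
      | last =>
        rw [Fin.snoc_last, map_mul, hθ, hwlast]
        congr 1
        rw [htm, ← hf, coeff_map]
      | cast j =>
        rw [Fin.snoc_castSucc, map_mul, hθ, hwcoord _ (hcastlast j)]
        congr 1
        rw [← ha j, ← hf, eval_map, eval₂_at_apply]
  · -- backward
    rintro ⟨f, hdegf, rfl⟩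
    have hfnat : f.natDegree ≤ 2 * m + 1 := by
      have := natDegree_le_iff_degree_le.2 hdegf
      omega
    obtain ⟨fK, hfKdef⟩ : ∃ fK : K[X], fK = f.map (algebraMap F K) := ⟨_, rfl⟩
    have hfKnat : fK.natDegree ≤ 2 * m + 1 := by
      rw [hfKdef, natDegree_map_eq_of_injective halginj f]
      exact hfnat
    have hfKfixval : ∀ x : K, x ^ q = x → (fK.eval x) ^ q = fK.eval x := by
      intro x hx
      obtain ⟨x₀, rfl⟩ := (hfix x).1 hx
      rw [hfKdef, eval_map, eval₂_at_apply]
      obtain ⟨y, hy⟩ : algebraMap F K (f.eval x₀) ∈ Set.range (algebraMap F K) :=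
        ⟨f.eval x₀, rfl⟩
      exact (hfix _).2 ⟨f.eval x₀, rfl⟩
    have hfKcoefffix : ∀ n, (fK.coeff n) ^ q = fK.coeff n := by
      intro n
      rw [hfKdef, coeff_map]
      exact (hfix _).2 ⟨f.coeff n, rfl⟩
    obtain ⟨gP, hgPdef⟩ : ∃ gP : K[X],
        gP = C E⁻¹ * SubstPoly (2 * m + 1) fK A B δ := ⟨_, rfl⟩
    have hgPnat : gP.natDegree ≤ 2 * m + 1 := by
      rw [hgPdef]
      refine le_trans natDegree_mul_le ?_
      rw [natDegree_C, zero_add]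
      exact SubstPoly_natDegree_le _ _ _ _ _
    have hgPevalx : ∀ i, i ≠ Fin.last q →
        gP.eval (α i) * E = (α i - δ) ^ (2 * m + 1) * fK.eval (φ (α i)) := by
      intro i hi
      rw [hgPdef, eval_mul, eval_C,
        SubstPoly_eval (2 * m + 1) fK hfKnat A B δ (hαδ i hi), ← hφeq]
      field_simp
    have hgPevalδ : gP.eval δ * u = fK.coeff (2 * m + 1) := by
      rw [hgPdef, eval_mul, eval_C, SubstPoly_eval_c]
      rw [show A * δ + B = N from by linear_combination hNAB]
      rw [hEdef]
      field_simp
    have claimfix : ∀ i, (gP.eval (α i)) ^ q * (α i) ^ (2 * m + 1) = gP.eval (α i) := by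
      intro i
      by_cases hi : i = Fin.last q
      · subst hi
        have h1 : gP.eval δ = fK.coeff (2 * m + 1) / u := by
          rw [eq_div_iff hu0]
          exact hgPevalδ
        rw [← hδdef, h1, div_pow, hfKcoefffix, huq]
        field_simp
      · have hM0 : (α i - δ) ^ (2 * m + 1) ≠ 0 :=
          pow_ne_zero _ (sub_ne_zero.2 (hαδ i hi))
        have h1 : gP.eval (α i) = ((α i - δ) ^ (2 * m + 1) / E) * fK.eval (φ (α i)) := by
          rw [div_mul_eq_mul_div, eq_div_iff hE0]
          linear_combination hgPevalx i hi
        rw [h1, mul_pow, hfKfixval _ (hφfix i hi)]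
        linear_combination (fK.eval (φ (α i))) * hratio i hi
    have hstar : gP.map σ = ∑ s ∈ range (2 * m + 2), C (gP.coeff (2 * m + 1 - s)) * X ^ s := by
      have hsub0 : gP.map σ - ∑ s ∈ range (2 * m + 2), C (gP.coeff (2 * m + 1 - s)) * X ^ s
          = 0 := by
        apply eq_zero_of_natDegree_lt_card_of_eval_eq_zero _ hαinj
        · intro i
          rw [eval_sub, sub_eq_zero]
          -- LHS
          have hroot' : ((α i) ^ q) ^ (q + 1) = 1 := by
            rw [pow_right_comm, hαroot, one_pow]
          obtain ⟨i', hi'⟩ := root_mem_range α hαinj hαroot hroot'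
          have hq2i : (α i') ^ q = α i := by rw [hi', hq2pow]
          have hL : (gP.map σ).eval (α i) = gP.eval ((α i) ^ q) * (α i) ^ (2 * m + 1) := by
            calc (gP.map σ).eval (α i) = gP.eval₂ σ (α i) := eval_map _ _
              _ = gP.eval₂ σ (σ ((α i) ^ q)) := by rw [hσ, hq2pow]
              _ = σ (gP.eval ((α i) ^ q)) := eval₂_at_apply σ _
              _ = (gP.eval ((α i) ^ q)) ^ q := by rw [hσ]
              _ = (gP.eval (α i')) ^ q := by rw [hi']
              _ = ((gP.eval (α i')) ^ q * (α i') ^ (2 * m + 1)) * ((α i') ^ q) ^ (2 * m + 1) := by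
                  rw [mul_assoc, ← mul_pow, mul_comm (α i') ((α i') ^ q), hαinv, one_pow, mul_one]
              _ = gP.eval (α i') * ((α i') ^ q) ^ (2 * m + 1) := by rw [claimfix i']
              _ = gP.eval ((α i) ^ q) * (α i) ^ (2 * m + 1) := by rw [hq2i, hi']
          rw [hL]
          -- RHS
          have hR : (∑ s ∈ range (2 * m + 2), C (gP.coeff (2 * m + 1 - s)) * X ^ s).eval (α i)
              = ∑ s ∈ range (2 * m + 2), gP.coeff (2 * m + 1 - s) * (α i) ^ s := by
            rw [eval_finset_sum]
            exact Finset.sum_congr rfl fun s hs => by rw [eval_mul, eval_pow, eval_C, eval_X]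
          rw [hR, ← Finset.sum_range_reflect]
          have hgPev : gP.eval ((α i) ^ q)
              = ∑ s ∈ range (2 * m + 2), gP.coeff s * ((α i) ^ q) ^ s :=
            eval_eq_sum_range' (by omega) _
          rw [hgPev, Finset.sum_mul]
          refine Finset.sum_congr rfl fun s hs => ?_
          have hs' : s ≤ 2 * m + 1 := by
            have := mem_range.1 hs; omega
          have e1 : 2 * m + 2 - 1 - s = 2 * m + 1 - s := by omega
          have e2 : 2 * m + 1 - (2 * m + 1 - s) = s := by omega
          rw [e1, e2]
          have e3 : ((α i) ^ q) ^ s * (α i) ^ (2 * m + 1)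
              = (α i) ^ (2 * m + 1 - s) := by
            have h4 : ((α i) ^ q) ^ s * (α i) ^ s = 1 := by
              rw [← mul_pow, hαinv, one_pow]
            calc ((α i) ^ q) ^ s * (α i) ^ (2 * m + 1)
                = (((α i) ^ q) ^ s * (α i) ^ s) * (α i) ^ (2 * m + 1 - s) := by
                  rw [mul_assoc, ← pow_add]
                  congr 2
                  omega
              _ = (α i) ^ (2 * m + 1 - s) := by rw [h4, one_mul]
          rw [mul_assoc, e3]
        · rw [Fintype.card_fin]
          refine lt_of_le_of_lt (le_trans (natDegree_sub_le _ _) (max_le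
            (le_trans natDegree_map_le hgPnat)
            (natDegree_sum_le_of_forall_le _ _ fun s hs =>
              le_trans (natDegree_C_mul_X_pow_le _ _) (by
                have := mem_range.1 hs; omega)))) ?_
          omega
      exact sub_eq_zero.1 hsub0
    have hrel : ∀ j, j ≤ m → (gP.coeff (m + 1 + j)) ^ q = gP.coeff (m - j) := by
      intro j hj
      have h1 := congrArg (fun P : K[X] => P.coeff (m + 1 + j)) hstar
      simp only [coeff_map] at h1
      rw [hσ] at h1
      rw [coeff_sum_C_mul_X_pow (2 * m + 2) (fun s => gP.coeff (2 * m + 1 - s))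
        (m + 1 + j)] at h1
      rw [if_pos (by omega : m + 1 + j < 2 * m + 2)] at h1
      rw [h1]
      congr 1
      omega
    refine ⟨∑ j ∈ range (m + 1), C (gP.coeff (m + 1 + j)) * X ^ j, ?_, ?_⟩
    · apply natDegree_le_iff_degree_le.1
      exact natDegree_sum_le_of_forall_le _ _ fun j hj =>
        le_trans (natDegree_C_mul_X_pow_le _ _) (Nat.lt_succ_iff.1 (mem_range.1 hj))
    · funext i
      have htr := trace_eval' σ hσ m gP hgPnat hrel (hαinv i) (hωq i)
      have hxm0 : (α i) ^ m ≠ 0 := pow_ne_zero _ (hα0 i)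
      by_cases hi : i = Fin.last q
      · subst hi
        rw [Fin.snoc_last, map_mul, hθ, hclast]
        have hcoeff : algebraMap F K (f.coeff (k - 1)) = fK.coeff (2 * m + 1) := by
          rw [hfKdef, coeff_map, htm]
        rw [hcoeff, ← hgPevalδ]
        have htrδ := htr
        rw [← hδdef] at htrδ ⊢
        have hδm0 : δ ^ m ≠ 0 := pow_ne_zero _ hδ0
        field_simp
        linear_combination -htrδ
      · obtain ⟨j, rfl⟩ : ∃ j : Fin q, j.castSucc = i := by
          rcases Fin.eq_castSucc_or_eq_last i with ⟨j, hj⟩ | hlast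
          · exact ⟨j, hj.symm⟩
          · exact absurd hlast hi
        rw [Fin.snoc_castSucc, map_mul, hθ]
        have hevalf : algebraMap F K (f.eval (a j)) = fK.eval (φ (α j.castSucc)) := by
          rw [hfKdef, ← ha j, eval_map, eval₂_at_apply]
        rw [hevalf, hcne _ hi]
        have hM0 : (α j.castSucc - δ) ^ (2 * m + 1) ≠ 0 :=
          pow_ne_zero _ (sub_ne_zero.2 (hαδ _ hi))
        have hev : fK.eval (φ (α j.castSucc))
            = gP.eval (α j.castSucc) * E / (α j.castSucc - δ) ^ (2 * m + 1) := by
          rw [eq_div_iff hM0]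
          linear_combination (hgPevalx _ hi).symm
        rw [hev]
        field_simp
        linear_combination -htr

end

end

end AuxGRS


/-- Let `q` be a prime power, `F = 𝔽_q ⊆ K = 𝔽_{q²}`, let `α 1, …, α (q+1)`
be the `q+1` distinct `(q+1)`-st roots of unity in `K`, and for each `i` choose `ω i ∈ K` with
`α i = (ω i)^(q−1)`.  If `k` is even with `1 ≤ k ≤ q`, then the code
`C = {(ω₁^q h(α₁)+ω₁ h(α₁)^q, …, ω_{q+1}^q h(α_{q+1})+ω_{q+1} h(α_{q+1})^q) :
      h ∈ K[X], deg h ≤ k/2 − 1}`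
is a `k`-dimensional `F`-linear subspace of `F^{q+1}` (embedded in `K^{q+1}`) with minimum
distance `q+2−k`, i.e. a `[q+1,k,q+2−k]_q` MDS code, and moreover `C` is a generalised
Reed–Solomon code over `F`. -/
theorem grs_of_trace_evaluation_code_even
    (q k : ℕ) (F K : Type*) [Field F] [Fintype F] [Field K] [Fintype K]
    [DecidableEq K] [Algebra F K]
    (hF : Fintype.card F = q) (hK : Fintype.card K = q ^ 2)
    (hkeven : Even k) (hk1 : 1 ≤ k) (hkq : k ≤ q)
    (α : Fin (q + 1) → K) (hαinj : Function.Injective α)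
    (hαroot : ∀ i, α i ^ (q + 1) = 1)
    (ω : Fin (q + 1) → K) (hω : ∀ i, α i = ω i ^ (q - 1))
    (Code : Set (Fin (q + 1) → K))
    (hCode : Code = { w | ∃ h : Polynomial K, h.degree ≤ (k / 2 - 1 : ℕ) ∧
      w = fun i => ω i ^ q * h.eval (α i) + ω i * (h.eval (α i)) ^ q }) :
    (∃ V : Submodule F (Fin (q + 1) → K), (V : Set (Fin (q + 1) → K)) = Code ∧
       Module.finrank F V = k) ∧
    (∀ w ∈ Code, w ≠ 0 → q + 2 - k ≤ hammingNorm w) ∧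
    IsGRSCode q k F K Code := by
  classical
  obtain ⟨a, θ, habij, hθ0, hCodeEq⟩ :=
    grs_aux q k F K hF hK hkeven hk1 hkq α hαinj hαroot ω hω Code hCode
  have hk2 : 2 ≤ k := by obtain ⟨l, hl⟩ := hkeven; omega
  have hq2 : 2 ≤ q := le_trans hk2 hkq
  have halginj := (algebraMap F K).injective
  have hainj : Function.Injective a := habij.1
  -- degree translation
  have hdegiff : ∀ f : F[X], f.degree < (k : ℕ) ↔ f.degree ≤ ((k - 1 : ℕ) : WithBot ℕ) := by
    intro f
    by_cases hf : f = 0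
    · subst hf
      simp only [degree_zero]
      constructor
      · intro _; exact bot_le
      · intro _; exact_mod_cast WithBot.bot_lt_coe k
    · rw [← Polynomial.natDegree_lt_iff_degree_lt hf, ← Polynomial.natDegree_le_iff_degree_le]
      omega
  -- the linear map
  let L : Polynomial.degreeLT F k →ₗ[F] (Fin (q + 1) → K) :=
    { toFun := fun f i => algebraMap F K (θ i *
        (Fin.snoc (fun j : Fin q => Polynomial.eval (a j) (f : F[X]))
          ((f : F[X]).coeff (k - 1)) : Fin (q + 1) → F) i)
      map_add' := by
        intro f g
        funext i
        induction i using Fin.lastCases with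
        | last => simp [Fin.snoc_last, mul_add, map_add]
        | cast j => simp [Fin.snoc_castSucc, mul_add, map_add]
      map_smul' := by
        intro r f
        funext i
        induction i using Fin.lastCases with
        | last =>
          simp [Fin.snoc_last, Algebra.smul_def]
          ring
        | cast j =>
          simp [Fin.snoc_castSucc, Algebra.smul_def]
          ring }
  have hLapp : ∀ (f : Polynomial.degreeLT F k) (i : Fin (q + 1)),
      L f i = algebraMap F K (θ i *
        (Fin.snoc (fun j : Fin q => Polynomial.eval (a j) (f : F[X]))
          ((f : F[X]).coeff (k - 1)) : Fin (q + 1) → F) i) := fun f i => rfl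
  have hrange : (LinearMap.range L : Set (Fin (q + 1) → K)) = Code := by
    rw [hCodeEq]
    ext w
    simp only [SetLike.mem_coe, LinearMap.mem_range, Set.mem_setOf_eq]
    constructor
    · rintro ⟨f, rfl⟩
      refine ⟨(f : F[X]), ?_, ?_⟩
      · exact (hdegiff _).1 (Polynomial.mem_degreeLT.1 f.2)
      · funext i; exact hLapp f i
    · rintro ⟨f, hdeg, rfl⟩
      refine ⟨⟨f, Polynomial.mem_degreeLT.2 ((hdegiff f).2 hdeg)⟩, ?_⟩
      funext i; exact hLapp _ i
  have hLinj : Function.Injective L := by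
    rw [← LinearMap.ker_eq_bot, LinearMap.ker_eq_bot']
    intro f hf0
    have hev : ∀ j : Fin q, (f : F[X]).eval (a j) = 0 := by
      intro j
      have h1 := congrFun hf0 (Fin.castSucc j)
      rw [hLapp, Pi.zero_apply] at h1
      have h2 : θ j.castSucc *
          (Fin.snoc (fun j : Fin q => Polynomial.eval (a j) (f : F[X]))
            ((f : F[X]).coeff (k - 1)) : Fin (q + 1) → F) j.castSucc = 0 :=
        halginj (by rw [h1, map_zero])
      have h3 := (mul_eq_zero.1 h2).resolve_left (hθ0 _)
      rwa [Fin.snoc_castSucc] at h3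
    have hfz : (f : F[X]) = 0 := by
      rcases eq_or_ne (f : F[X]) 0 with h | h
      · exact h
      apply eq_zero_of_natDegree_lt_card_of_eval_eq_zero (f : F[X]) hainj hev
      rw [Fintype.card_fin]
      have hd : (f : F[X]).degree < (k : ℕ) := Polynomial.mem_degreeLT.1 f.2
      have := (Polynomial.natDegree_lt_iff_degree_lt h).2 hd
      omega
    exact Subtype.ext hfz
  have hfin : Module.finrank F (LinearMap.range L) = k := by
    rw [LinearMap.finrank_range_of_inj hLinj]
    have h1 := (Polynomial.degreeLTEquiv F k).finrank_eq
    rw [h1, Module.finrank_pi, Fintype.card_fin]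
  refine ⟨⟨LinearMap.range L, hrange, hfin⟩, ?_, a, θ, habij, hθ0, hCodeEq⟩
  -- distance
  intro w hw hw0
  rw [hCodeEq] at hw
  obtain ⟨f, hdeg, rfl⟩ := hw
  have hnat : f.natDegree ≤ k - 1 := natDegree_le_iff_degree_le.2 hdeg
  have hf0 : f ≠ 0 := by
    rintro rfl
    apply hw0
    funext i
    induction i using Fin.lastCases with
    | last => simp [Fin.snoc_last]
    | cast j => simp [Fin.snoc_castSucc]
  set w : Fin (q + 1) → K := fun i => algebraMap F K (θ i *
    (Fin.snoc (fun j : Fin q => f.eval (a j)) (f.coeff (k - 1)) : Fin (q + 1) → F) i)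
    with hwdef
  set S : Finset (Fin (q + 1)) := Finset.univ.filter (fun i => w i = 0) with hSdef
  have hcard : S.card + hammingNorm w = q + 1 := by
    have h1 := Finset.card_filter_add_card_filter_not
      (s := Finset.univ (α := Fin (q + 1))) (p := fun i => w i = 0)
    rw [Finset.card_univ, Fintype.card_fin] at h1
    convert h1 using 2
    simp only [hammingNorm, ne_eq]
  set T : Finset (Fin q) := Finset.univ.filter (fun j => f.eval (a j) = 0) with hTdef
  have hwz : ∀ j : Fin q, w j.castSucc = 0 ↔ f.eval (a j) = 0 := by
    intro j
    have hcoord : w j.castSucc = algebraMap F K (θ j.castSucc * f.eval (a j)) := by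
      rw [hwdef]
      simp only [Fin.snoc_castSucc]
    rw [hcoord]
    constructor
    · intro h1
      have h2 : θ j.castSucc * f.eval (a j) = 0 := halginj (by rw [h1, map_zero])
      exact (mul_eq_zero.1 h2).resolve_left (hθ0 _)
    · intro h1
      rw [h1, mul_zero, map_zero]
  have hwlast : w (Fin.last q) = 0 ↔ f.coeff (k - 1) = 0 := by
    have hcoord : w (Fin.last q) = algebraMap F K (θ (Fin.last q) * f.coeff (k - 1)) := by
      rw [hwdef]
      simp only [Fin.snoc_last]
    rw [hcoord]
    constructor
    · intro h1
      have h2 : θ (Fin.last q) * f.coeff (k - 1) = 0 := halginj (by rw [h1, map_zero])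
      exact (mul_eq_zero.1 h2).resolve_left (hθ0 _)
    · intro h1
      rw [h1, mul_zero, map_zero]
  have hT : T.card ≤ f.natDegree := by
    have h1 : (T.image a).card ≤ f.natDegree := by
      apply card_le_natDegree_of_eval_zero hf0
      intro x hx
      obtain ⟨j, hj, rfl⟩ := Finset.mem_image.1 hx
      exact (Finset.mem_filter.1 hj).2
    rwa [Finset.card_image_of_injective _ hainj] at h1
  have hScard : S.card ≤ k - 1 := by
    by_cases hc : f.coeff (k - 1) = 0
    · -- natDegree ≤ k - 2
      have hnd : f.natDegree ≤ k - 2 := by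
        have hne : f.natDegree ≠ k - 1 := by
          intro h
          apply hf0
          rw [← h] at hc
          exact leadingCoeff_eq_zero.1 hc
        omega
      have hsub : S ⊆ insert (Fin.last q) (T.image Fin.castSucc) := by
        intro i hi
        have hiz : w i = 0 := (Finset.mem_filter.1 hi).2
        rcases Fin.eq_castSucc_or_eq_last i with ⟨j, rfl⟩ | rfl
        · apply Finset.mem_insert_of_mem
          exact Finset.mem_image_of_mem _ (Finset.mem_filter.2 ⟨Finset.mem_univ _, (hwz j).1 hiz⟩)
        · exact Finset.mem_insert_self _ _
      calc S.card ≤ (insert (Fin.last q) (T.image Fin.castSucc)).card :=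
            Finset.card_le_card hsub
        _ ≤ (T.image Fin.castSucc).card + 1 := Finset.card_insert_le _ _
        _ ≤ T.card + 1 := by
            have := Finset.card_image_le (s := T) (f := Fin.castSucc)
            omega
        _ ≤ k - 1 := by omega
    · have hsub : S ⊆ T.image Fin.castSucc := by
        intro i hi
        have hiz : w i = 0 := (Finset.mem_filter.1 hi).2
        rcases Fin.eq_castSucc_or_eq_last i with ⟨j, rfl⟩ | rfl
        · exact Finset.mem_image_of_mem _ (Finset.mem_filter.2 ⟨Finset.mem_univ _, (hwz j).1 hiz⟩)
        · exact absurd ((hwlast).1 hiz) hc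
      calc S.card ≤ (T.image Fin.castSucc).card := Finset.card_le_card hsub
        _ ≤ T.card := Finset.card_image_le
        _ ≤ k - 1 := by omega
  omega
end

section
/- Let q be an odd prime power, let ω be a primitive element of F_{q²}, let α = ω^{q−1} (a primitive (q+1)-st root of unity), and let k be odd with 1 ≤ k ≤ q; write k = q − 2r. Let g_1(X) = ∏_{i=−r}^{r} (X − α^i), a polynomial with coefficients in F_q dividing X^{q+1} − 1. Then the k-dimensional cyclic code ⟨g_1⟩ of length q+1 over F_q is a generalised Reed–Solomon code (and is a [q+1, k, q+2−k]_q MDS code). -/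
open Polynomial

set_option maxHeartbeats 1600000 in
/-- Let `q` be an odd prime power, `ω` a primitive element of `𝔽_{q²}`,
`α = ω^{q−1}` a primitive `(q+1)`-st root of unity, and let `k` be odd with `1 ≤ k ≤ q`;
write `k = q − 2r`.  Let `g₁(X) = ∏_{i=−r}^{r} (X − α^i)`, a polynomial with coefficients
`c j` in `𝔽_q` dividing `X^{q+1} − 1`.  Then the `k`-dimensional cyclic code `⟨g₁⟩` of length
`q+1` over `𝔽_q` (the span of the `k` cyclic shifts of `(c₀,…,c_{q+1−k},0,…,0)`) is a
generalised Reed–Solomon code, and is a `[q+1,k,q+2−k]_q` MDS code. -/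
theorem grassl_roetteler_cyclic_odd_odd_is_GRS
    (q k r : ℕ) (F K : Type*) [Field F] [Fintype F] [Field K] [Fintype K]
    [DecidableEq F] [Algebra F K]
    (hF : Fintype.card F = q) (hK : Fintype.card K = q ^ 2)
    (hqodd : Odd q) (hkodd : Odd k) (hk1 : 1 ≤ k) (hkq : k ≤ q)
    (hkr : (k : ℤ) = q - 2 * r)
    (ω : K) (hω : orderOf ω = q ^ 2 - 1)
    (α : K) (hα : α = ω ^ (q - 1))
    (g₁ : Polynomial K)
    (hg₁ : g₁ = ∏ i ∈ Finset.Icc (-(r : ℤ)) (r : ℤ), (X - C (α ^ i)))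
    (c : ℕ → F) (hc : ∀ j, algebraMap F K (c j) = g₁.coeff j)
    (Code : Submodule F (Fin (q + 1) → F))
    (hCode : Code = Submodule.span F
      { v | ∃ t : Fin k, v = fun i : Fin (q + 1) =>
          if (t : ℕ) ≤ (i : ℕ) then c ((i : ℕ) - (t : ℕ)) else 0 }) :
    IsGRSCode q k F F (Code : Set (Fin (q + 1) → F)) ∧
    Module.finrank F Code = k ∧
    (∀ w ∈ Code, w ≠ 0 → q + 2 - k ≤ hammingNorm w) := by
  classical
  subst hCode
  -- ### basic numerology
  have hq3 : 3 ≤ q := by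
    obtain ⟨m, hm⟩ := hqodd
    have h2 : 1 < Fintype.card F := Fintype.one_lt_card
    omega
  have hqr : q = k + 2 * r := by omega
  have hq2 : q ^ 2 = q * q := sq q
  have hk1' : ((k - 1 : ℕ) : ℤ) = (k : ℤ) - 1 := by omega
  -- ### the embedding F → K
  have injF : Function.Injective ⇑(algebraMap F K) := (algebraMap F K).injective
  -- ### characteristic and Frobenius
  obtain ⟨p, hpc⟩ := CharP.exists F
  haveI := hpc
  haveI hppF : Fact p.Prime := ⟨CharP.char_is_prime F p⟩
  haveI hKc : CharP K p := charP_of_injective_algebraMap injF p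
  obtain ⟨np, -, hnp⟩ := FiniteField.card F p
  have hqpn : q = p ^ (np : ℕ) := by rw [← hF, hnp]
  have hfrobK : ∀ x y : K, (x - y) ^ q = x ^ q - y ^ q := by
    intro x y; rw [hqpn]; exact sub_pow_char_pow x y (np : ℕ)
  have hKK : ∀ x : K, x ^ (q * q) = x := by
    intro x
    have h := FiniteField.pow_card x
    rwa [hK, hq2] at h
  have hFq : ∀ y : F, y ^ q = y := by
    intro y
    have h := FiniteField.pow_card y
    rwa [hF] at h
  -- ### fixed points of x ↦ x^q are exactly the image of F
  have hFP : ∀ x : K, x ^ q = x → ∃ y : F, algebraMap F K y = x := by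
    intro x hx
    by_contra hcon
    push_neg at hcon
    have hxnotin : x ∉ Finset.univ.image ⇑(algebraMap F K) := by
      simp only [Finset.mem_image, Finset.mem_univ, true_and]
      rintro ⟨y, hy⟩
      exact hcon y hy
    have hcard : (insert x (Finset.univ.image ⇑(algebraMap F K))).card = q + 1 := by
      rw [Finset.card_insert_of_notMem hxnotin,
        Finset.card_image_of_injective _ injF, Finset.card_univ, hF]
    have hP0 : (X ^ q - X : Polynomial K) ≠ 0 := by
      intro h
      have h2 := congrArg (fun pp => Polynomial.coeff pp q) h
      simp only [coeff_sub, coeff_X_pow, if_pos rfl, coeff_zero] at h2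
      rw [Polynomial.coeff_X, if_neg (by omega : ¬ 1 = q)] at h2
      norm_num at h2
    have hsub : insert x (Finset.univ.image ⇑(algebraMap F K)) ⊆
        (X ^ q - X : Polynomial K).roots.toFinset := by
      intro z hz
      rw [Multiset.mem_toFinset, mem_roots']
      refine ⟨hP0, ?_⟩
      have hzq : z ^ q = z := by
        rcases Finset.mem_insert.mp hz with h | h
        · rw [h]; exact hx
        · obtain ⟨y, -, rfl⟩ := Finset.mem_image.mp h
          rw [← map_pow, hFq]
      simp [IsRoot, hzq]
    have h1 := Finset.card_le_card hsub
    have h2 := Multiset.toFinset_card_le (X ^ q - X : Polynomial K).roots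
    have h3 := Polynomial.card_roots' (X ^ q - X : Polynomial K)
    have h4 : (X ^ q - X : Polynomial K).natDegree ≤ q := by
      refine le_trans (natDegree_sub_le _ _) ?_
      simp [natDegree_X_pow, natDegree_X]
      omega
    omega
  -- ### the element b outside the image of F
  have hsur : ¬ Function.Surjective ⇑(algebraMap F K) := by
    intro h
    have h2 := Fintype.card_le_of_surjective _ h
    rw [hF, hK] at h2
    nlinarith
  rw [Function.Surjective] at hsur
  push_neg at hsur
  obtain ⟨b, hb⟩ := hsur
  have hbfix : b ^ q ≠ b := by
    intro h
    obtain ⟨y, hy⟩ := hFP b h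
    exact hb y hy
  have hbb0 : b - b ^ q ≠ 0 := sub_ne_zero.mpr (Ne.symm hbfix)
  -- ### ω and α
  have hωu : ω ^ (q ^ 2 - 1) = 1 := by rw [← hω]; exact pow_orderOf_eq_one ω
  have hω0 : ω ≠ 0 := by
    intro h
    have h9 : 1 < q ^ 2 := by nlinarith
    rw [h, zero_pow (Nat.sub_ne_zero_of_lt h9)] at hωu
    exact zero_ne_one hωu
  have hα0 : α ≠ 0 := by rw [hα]; exact pow_ne_zero _ hω0
  have hza : ∀ x y : ℤ, α ^ x * α ^ y = α ^ (x + y) := fun x y => (zpow_add₀ hα0 x y).symm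
  have hpowz : ∀ (t : ℤ) (m : ℕ), (α ^ t) ^ m = α ^ (t * (m : ℤ)) := by
    intro t m
    rw [← zpow_natCast (α ^ t) m, ← zpow_mul]
  have hαz : ∀ t : ℤ, α ^ t = ω ^ (((q : ℤ) - 1) * t) := by
    intro t
    rw [hα, ← zpow_natCast ω (q - 1), ← zpow_mul]
    congr 1
    have : ((q - 1 : ℕ) : ℤ) = (q : ℤ) - 1 := by omega
    rw [this]
  have hαq1 : α ^ ((q : ℤ) + 1) = 1 := by
    rw [hαz]
    have he : ((q : ℤ) - 1) * ((q : ℤ) + 1) = ((q ^ 2 - 1 : ℕ) : ℤ) := by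
      have h9 : 9 ≤ q ^ 2 := by nlinarith
      push_cast [Nat.cast_sub (by omega : 1 ≤ q ^ 2)]
      ring
    rw [he, zpow_natCast, hωu]
  have hzpow : ∀ s t : ℤ, ((q : ℤ) + 1) ∣ (s - t) → α ^ s = α ^ t := by
    rintro s t ⟨m, hm⟩
    have hst : s = t + ((q : ℤ) + 1) * m := by omega
    rw [hst, ← hza, zpow_mul, hαq1, one_zpow, mul_one]
  have honeN : ∀ m : ℕ, 0 < m → m < q + 1 → α ^ m ≠ 1 := by
    intro m hm0 hmq h
    rw [hα, ← pow_mul] at h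
    have hdvd := orderOf_dvd_of_pow_eq_one h
    rw [hω] at hdvd
    have hq21 : q ^ 2 - 1 = (q - 1) * (q + 1) := by
      obtain ⟨m', hm'⟩ : ∃ m', q = m' + 1 := ⟨q - 1, by omega⟩
      have h1 : q * q = (q - 1) * (q + 1) + 1 := by
        rw [hm', Nat.add_sub_cancel]; ring
      rw [hq2, h1, Nat.add_sub_cancel]
    rw [hq21] at hdvd
    have hdvd2 : (q + 1) ∣ m := by
      have := (Nat.mul_dvd_mul_iff_left (by omega : 0 < q - 1)).mp hdvd
      exact this
    have := Nat.le_of_dvd hm0 hdvd2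
    omega
  have hone : ∀ t : ℤ, 0 < t → t < (q : ℤ) + 1 → α ^ t ≠ 1 := by
    intro t ht0 htq h
    have h2 : α ^ (t.toNat) = 1 := by
      have : α ^ ((t.toNat : ℕ) : ℤ) = 1 := by
        rw [Int.toNat_of_nonneg ht0.le]; exact h
      rwa [zpow_natCast] at this
    exact honeN t.toNat (by omega) (by omega) h2
  have hinjz : ∀ s t : ℤ, s ≠ t → s - t ≤ q → t - s ≤ q → α ^ s ≠ α ^ t := by
    intro s t hst h1 h2 h
    have hzs : α ^ (s - t) = 1 := by
      rw [zpow_sub₀ hα0, h, div_self (zpow_ne_zero _ hα0)]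
    rcases lt_or_gt_of_ne hst with hlt | hgt
    · have hzt : α ^ (t - s) = 1 := by
        rw [show t - s = -(s - t) by ring, zpow_neg, hzs, inv_one]
      exact hone (t - s) (by omega) (by omega) hzt
    · exact hone (s - t) (by omega) (by omega) hzs
  have hqq : α ^ ((q : ℤ) * (q : ℤ)) = α := by
    have h := hzpow ((q : ℤ) * (q : ℤ)) 1 ⟨(q : ℤ) - 1, by ring⟩
    simpa using h
  -- ### μ
  obtain ⟨μ, hμdef⟩ : ∃ μ : K, μ = ω ^ (-((k : ℤ) - 1)) := ⟨_, rfl⟩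
  have hμ0 : μ ≠ 0 := by rw [hμdef]; exact zpow_ne_zero _ hω0
  have hμq : μ ^ q = μ * α ^ (-((k : ℤ) - 1)) := by
    rw [hμdef, hαz]
    rw [← zpow_natCast (ω ^ (-((k : ℤ) - 1))) q, ← zpow_mul, ← zpow_add₀ hω0]
    congr 1
    ring
  -- ### Frobenius conjugation identities
  have hconj1 : ∀ t : ℤ, (α ^ t - α ^ (q : ℤ)) ^ q
      = (-(α ^ (1 - t))) * (α ^ t - α ^ (q : ℤ)) := by
    intro t
    rw [hfrobK, hpowz, hpowz, hqq]
    have e1 : α ^ (t * (q : ℤ)) = α ^ ((q : ℤ) + 1 - t) := hzpow _ _ ⟨t - 1, by ring⟩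
    have h5 : α ^ ((q : ℤ) + 1 - t) = α ^ (1 - t) * α ^ (q : ℤ) := by
      rw [hza]; congr 1; ring
    have h6 : α ^ (1 - t) * α ^ t = α := by
      rw [hza]
      have he : (1 - t) + t = (1 : ℤ) := by ring
      rw [he, zpow_one]
    linear_combination e1 + h5 + h6
  have hconj2 : ∀ t : ℤ, (b * α ^ t - b ^ q * α ^ (q : ℤ)) ^ q
      = (-(α ^ (1 - t))) * (b * α ^ t - b ^ q * α ^ (q : ℤ)) := by
    intro t
    rw [hfrobK, mul_pow, mul_pow, hpowz, hpowz, hqq, ← pow_mul, hKK]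
    have e1 : α ^ (t * (q : ℤ)) = α ^ ((q : ℤ) + 1 - t) := hzpow _ _ ⟨t - 1, by ring⟩
    have h5 : α ^ ((q : ℤ) + 1 - t) = α ^ (1 - t) * α ^ (q : ℤ) := by
      rw [hza]; congr 1; ring
    have h6 : α ^ (1 - t) * α ^ t = α := by
      rw [hza]
      have : (1 - t) + t = (1 : ℤ) := by ring
      rw [this, zpow_one]
    linear_combination (b ^ q) * e1 + (b ^ q) * h5 + b * h6
  -- ### the evaluation points
  have hden : ∀ j : ℕ, j < q → α ^ ((j : ℕ) : ℤ) - α ^ ((q : ℕ) : ℤ) ≠ 0 := by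
    intro j hj
    exact sub_ne_zero.mpr (hinjz _ _ (by omega) (by omega) (by omega))
  obtain ⟨AK, hAK⟩ : ∃ AK : ℕ → K, AK = fun j =>
      (b * α ^ ((j : ℕ) : ℤ) - b ^ q * α ^ ((q : ℕ) : ℤ)) *
        (α ^ ((j : ℕ) : ℤ) - α ^ ((q : ℕ) : ℤ))⁻¹ := ⟨_, rfl⟩
  have hAfixed : ∀ j : ℕ, j < q → (AK j) ^ q = AK j := by
    intro j hj
    have hd := hden j hj
    have hc0 : (-(α ^ (1 - ((j : ℕ) : ℤ)))) ≠ 0 := by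
      simp only [ne_eq, neg_eq_zero]
      exact zpow_ne_zero _ hα0
    have hgen : ∀ cc u v : K, cc ≠ 0 → (cc * u) * (cc * v)⁻¹ = u * v⁻¹ := by
      intro cc u v hcc
      rw [mul_inv]
      calc cc * u * (cc⁻¹ * v⁻¹) = (cc * cc⁻¹) * (u * v⁻¹) := by ring
        _ = u * v⁻¹ := by rw [mul_inv_cancel₀ hcc, one_mul]
    rw [hAK]
    simp only
    rw [mul_pow, inv_pow, hconj2, hconj1]
    exact hgen _ _ _ hc0
  have haex : ∀ j : Fin q, ∃ y : F, algebraMap F K y = AK (j : ℕ) :=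
    fun j => hFP _ (hAfixed _ j.isLt)
  choose a haA using haex
  have hainj : Function.Injective a := by
    intro j j' h
    have hA : AK (j : ℕ) = AK (j' : ℕ) := by rw [← haA, ← haA, h]
    have hdj := hden _ j.isLt
    have hdj' := hden _ j'.isLt
    rw [hAK] at hA
    simp only at hA
    have key : (b - b ^ q) * α ^ ((q : ℕ) : ℤ) *
        (α ^ ((j : ℕ) : ℤ) - α ^ ((j' : ℕ) : ℤ)) = 0 := by
      have h2 : (b * α ^ ((j : ℕ) : ℤ) - b ^ q * α ^ ((q : ℕ) : ℤ)) *
          (α ^ ((j' : ℕ) : ℤ) - α ^ ((q : ℕ) : ℤ)) =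
          (b * α ^ ((j' : ℕ) : ℤ) - b ^ q * α ^ ((q : ℕ) : ℤ)) *
          (α ^ ((j : ℕ) : ℤ) - α ^ ((q : ℕ) : ℤ)) := by
        have h3 := congrArg (fun z : K => z * ((α ^ ((j : ℕ) : ℤ) - α ^ ((q : ℕ) : ℤ)) *
          (α ^ ((j' : ℕ) : ℤ) - α ^ ((q : ℕ) : ℤ)))) hA
        have hcc1 : (α ^ ((j : ℕ) : ℤ) - α ^ ((q : ℕ) : ℤ)) *
            (α ^ ((j : ℕ) : ℤ) - α ^ ((q : ℕ) : ℤ))⁻¹ = 1 := mul_inv_cancel₀ hdj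
        have hcc2 : (α ^ ((j' : ℕ) : ℤ) - α ^ ((q : ℕ) : ℤ)) *
            (α ^ ((j' : ℕ) : ℤ) - α ^ ((q : ℕ) : ℤ))⁻¹ = 1 := mul_inv_cancel₀ hdj'
        linear_combination h3 - ((b * α ^ ((j : ℕ) : ℤ) - b ^ q * α ^ ((q : ℕ) : ℤ)) *
          (α ^ ((j' : ℕ) : ℤ) - α ^ ((q : ℕ) : ℤ))) * hcc1 +
          ((b * α ^ ((j' : ℕ) : ℤ) - b ^ q * α ^ ((q : ℕ) : ℤ)) *
          (α ^ ((j : ℕ) : ℤ) - α ^ ((q : ℕ) : ℤ))) * hcc2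
      linear_combination -h2
    have hαne : α ^ ((j : ℕ) : ℤ) - α ^ ((j' : ℕ) : ℤ) = 0 := by
      rcases mul_eq_zero.mp key with h' | h'
      · rcases mul_eq_zero.mp h' with h'' | h''
        · exact absurd h'' hbb0
        · exact absurd h'' (zpow_ne_zero _ hα0)
      · exact h'
    have : (j : ℕ) = (j' : ℕ) := by
      by_contra hne
      exact hinjz _ _ (by omega) (by omega) (by omega) (sub_eq_zero.mp hαne)
    exact Fin.ext this
  have habij : Function.Bijective a := by
    rw [Fintype.bijective_iff_injective_and_card]
    exact ⟨hainj, by rw [Fintype.card_fin, hF]⟩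
  -- ### the multipliers Θ
  have hkeven : Even (k - 1) := Nat.Odd.sub_odd hkodd odd_one
  obtain ⟨ΘK, hΘK⟩ : ∃ ΘK : ℕ → K, ΘK = fun i =>
      if i = q then μ * α ^ ((q : ℤ) * ((r : ℤ) + 1)) *
        (α ^ ((q : ℕ) : ℤ) * (b - b ^ q)) ^ (k - 1)
      else μ * α ^ (((i : ℕ) : ℤ) * ((r : ℤ) + 1)) *
        (α ^ ((i : ℕ) : ℤ) - α ^ ((q : ℕ) : ℤ)) ^ (k - 1) := ⟨_, rfl⟩
  have hΘ0 : ∀ i : ℕ, i ≤ q → ΘK i ≠ 0 := by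
    intro i hi
    rw [hΘK]
    by_cases hiq : i = q
    · simp only [hiq, if_pos rfl]
      exact mul_ne_zero (mul_ne_zero hμ0 (zpow_ne_zero _ hα0))
        (pow_ne_zero _ (mul_ne_zero (zpow_ne_zero _ hα0) hbb0))
    · simp only [if_neg hiq]
      exact mul_ne_zero (mul_ne_zero hμ0 (zpow_ne_zero _ hα0))
        (pow_ne_zero _ (hden i (by omega)))
  have hΘfixed : ∀ i : ℕ, i ≤ q → (ΘK i) ^ q = ΘK i := by
    intro i hi
    rw [hΘK]
    by_cases hiq : i = q
    · simp only [hiq, if_pos rfl]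
      have e2 : (α ^ ((q : ℕ) : ℤ) * (b - b ^ q)) ^ q = -(α * (b - b ^ q)) := by
        rw [mul_pow, hpowz, hqq, hfrobK, ← pow_mul, hKK]
        ring
      have e3 : ((α ^ ((q : ℕ) : ℤ) * (b - b ^ q)) ^ q) ^ (k - 1)
          = α ^ ((k : ℤ) - 1) * (b - b ^ q) ^ (k - 1) := by
        rw [e2, hkeven.neg_pow, mul_pow, ← zpow_natCast α (k - 1), hk1']
      have e5 : (α ^ ((q : ℕ) : ℤ) * (b - b ^ q)) ^ (k - 1)
          = α ^ ((q : ℤ) * ((k : ℤ) - 1)) * (b - b ^ q) ^ (k - 1) := by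
        rw [mul_pow, hpowz]
        congr 2
        rw [hk1']
      have e4 : α ^ (-((k : ℤ) - 1)) * α ^ ((q : ℤ) * ((r : ℤ) + 1) * (q : ℤ)) *
          α ^ ((k : ℤ) - 1) = α ^ ((q : ℤ) * ((r : ℤ) + 1)) * α ^ ((q : ℤ) * ((k : ℤ) - 1)) := by
        rw [hza, hza, hza]
        refine hzpow _ _ ⟨(q : ℤ) * r, ?_⟩
        linear_combination (-(q : ℤ)) * hkr
      calc (μ * α ^ ((q : ℤ) * ((r : ℤ) + 1)) * (α ^ ((q : ℕ) : ℤ) * (b - b ^ q)) ^ (k - 1)) ^ q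
          = μ ^ q * (α ^ ((q : ℤ) * ((r : ℤ) + 1))) ^ q *
            ((α ^ ((q : ℕ) : ℤ) * (b - b ^ q)) ^ q) ^ (k - 1) := by
            rw [mul_pow, mul_pow, pow_right_comm]
        _ = (μ * α ^ (-((k : ℤ) - 1))) * α ^ ((q : ℤ) * ((r : ℤ) + 1) * (q : ℤ)) *
            (α ^ ((k : ℤ) - 1) * (b - b ^ q) ^ (k - 1)) := by
            rw [hμq, hpowz, e3]
        _ = μ * (α ^ (-((k : ℤ) - 1)) * α ^ ((q : ℤ) * ((r : ℤ) + 1) * (q : ℤ)) *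
            α ^ ((k : ℤ) - 1)) * (b - b ^ q) ^ (k - 1) := by ring
        _ = μ * (α ^ ((q : ℤ) * ((r : ℤ) + 1)) * α ^ ((q : ℤ) * ((k : ℤ) - 1))) *
            (b - b ^ q) ^ (k - 1) := by rw [e4]
        _ = μ * α ^ ((q : ℤ) * ((r : ℤ) + 1)) * (α ^ ((q : ℕ) : ℤ) * (b - b ^ q)) ^ (k - 1) := by
            rw [e5]; ring
    · simp only [if_neg hiq]
      have e2 : ((α ^ ((i : ℕ) : ℤ) - α ^ ((q : ℕ) : ℤ)) ^ q) ^ (k - 1)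
          = α ^ ((1 - (i : ℤ)) * ((k : ℤ) - 1)) *
            (α ^ ((i : ℕ) : ℤ) - α ^ ((q : ℕ) : ℤ)) ^ (k - 1) := by
        rw [hconj1, mul_pow, hkeven.neg_pow, hpowz, hk1']
      have e4 : α ^ (-((k : ℤ) - 1)) * α ^ ((i : ℤ) * ((r : ℤ) + 1) * (q : ℤ)) *
          α ^ ((1 - (i : ℤ)) * ((k : ℤ) - 1)) = α ^ ((i : ℤ) * ((r : ℤ) + 1)) := by
        rw [hza, hza]
        refine hzpow _ _ ⟨(i : ℤ) * r, ?_⟩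
        linear_combination (-(i : ℤ)) * hkr
      calc (μ * α ^ ((i : ℤ) * ((r : ℤ) + 1)) *
            (α ^ ((i : ℕ) : ℤ) - α ^ ((q : ℕ) : ℤ)) ^ (k - 1)) ^ q
          = μ ^ q * (α ^ ((i : ℤ) * ((r : ℤ) + 1))) ^ q *
            ((α ^ ((i : ℕ) : ℤ) - α ^ ((q : ℕ) : ℤ)) ^ q) ^ (k - 1) := by
            rw [mul_pow, mul_pow, pow_right_comm]
        _ = (μ * α ^ (-((k : ℤ) - 1))) * α ^ ((i : ℤ) * ((r : ℤ) + 1) * (q : ℤ)) *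
            (α ^ ((1 - (i : ℤ)) * ((k : ℤ) - 1)) *
              (α ^ ((i : ℕ) : ℤ) - α ^ ((q : ℕ) : ℤ)) ^ (k - 1)) := by
            rw [hμq, hpowz, e2]
        _ = μ * (α ^ (-((k : ℤ) - 1)) * α ^ ((i : ℤ) * ((r : ℤ) + 1) * (q : ℤ)) *
            α ^ ((1 - (i : ℤ)) * ((k : ℤ) - 1))) *
            (α ^ ((i : ℕ) : ℤ) - α ^ ((q : ℕ) : ℤ)) ^ (k - 1) := by ring
        _ = μ * α ^ ((i : ℤ) * ((r : ℤ) + 1)) *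
            (α ^ ((i : ℕ) : ℤ) - α ^ ((q : ℕ) : ℤ)) ^ (k - 1) := by rw [e4]
  have hθex : ∀ i : Fin (q + 1), ∃ y : F, algebraMap F K y = ΘK (i : ℕ) :=
    fun i => hFP _ (hΘfixed _ (Fin.is_le i))
  choose θ hθA using hθex
  have hθ0 : ∀ i : Fin (q + 1), θ i ≠ 0 := by
    intro i h
    have h2 : algebraMap F K (θ i) = 0 := by rw [h, map_zero]
    rw [hθA] at h2
    exact hΘ0 _ (Fin.is_le i) h2
  -- ### the word map
  obtain ⟨wordF, hwordF⟩ : ∃ wordF : Polynomial F → (Fin (q + 1) → F), wordF = fun f i =>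
      θ i * (Fin.snoc (fun j : Fin q => f.eval (a j)) (f.coeff (k - 1)) : Fin (q + 1) → F) i :=
    ⟨_, rfl⟩
  -- ### g₀ and the coefficients c
  have hg₁monic : g₁.Monic := by
    rw [hg₁]; exact monic_prod_of_monic _ _ (fun i _ => monic_X_sub_C _)
  have hg₁deg : g₁.natDegree = 2 * r + 1 := by
    rw [hg₁, natDegree_prod_of_monic _ _ (fun i _ => monic_X_sub_C _)]
    simp only [natDegree_X_sub_C]
    rw [Finset.sum_const, smul_eq_mul, mul_one, Int.card_Icc]
    omega
  have hczero : ∀ j, 2 * r + 1 < j → c j = 0 := by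
    intro j hj
    apply injF
    rw [hc, map_zero]
    exact coeff_eq_zero_of_natDegree_lt (by omega)
  have hc1 : c (2 * r + 1) = 1 := by
    apply injF
    rw [hc, map_one, ← hg₁deg]
    exact hg₁monic.coeff_natDegree
  obtain ⟨g₀, hg₀⟩ : ∃ g₀ : Polynomial F,
      g₀ = ∑ j ∈ Finset.range (2 * r + 2), monomial j (c j) := ⟨_, rfl⟩
  have hg₀coeff : ∀ t, g₀.coeff t = c t := by
    intro t
    rw [hg₀, finset_sum_coeff]
    by_cases ht : t < 2 * r + 2
    · rw [Finset.sum_eq_single t (fun b' _ hb' => by rw [coeff_monomial, if_neg hb'])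
        (fun h => absurd (Finset.mem_range.mpr ht) h)]
      simp [coeff_monomial]
    · rw [Finset.sum_eq_zero fun b' hb' => by
        rw [coeff_monomial, if_neg (by rw [Finset.mem_range] at hb'; omega)]]
      rw [hczero t (by omega)]
  have hg₀map : g₀.map (algebraMap F K) = g₁ := by
    apply Polynomial.ext
    intro t
    rw [coeff_map, hg₀coeff, hc]
  have hg₀monic : g₀.Monic := by
    apply monic_of_natDegree_le_of_coeff_eq_one (2 * r + 1)
    · rw [hg₀]
      apply natDegree_sum_le_of_forall_le
      intro j hj
      exact le_trans (natDegree_monomial_le _) (by rw [Finset.mem_range] at hj; omega)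
    · rw [hg₀coeff]; exact hc1
  have hg₀deg : g₀.natDegree = 2 * r + 1 := by
    have h := hg₀monic.natDegree_map (algebraMap F K)
    rw [hg₀map, hg₁deg] at h
    omega
  -- ### membership of words in the code
  have hmem : ∀ f : Polynomial F, f.natDegree ≤ k - 1 → wordF f ∈
      Submodule.span F { v | ∃ t : Fin k, v = fun i : Fin (q + 1) =>
        if (t : ℕ) ≤ (i : ℕ) then c ((i : ℕ) - (t : ℕ)) else 0 } := by
    intro f hf
    obtain ⟨fK, hfK⟩ : ∃ fK : Polynomial K, fK = f.map (algebraMap F K) := ⟨_, rfl⟩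
    have hfKdeg : fK.natDegree < k := by
      rw [hfK]
      exact lt_of_le_of_lt (le_trans natDegree_map_le hf) (by omega)
    obtain ⟨G, hG⟩ : ∃ G : Polynomial K, G = ∑ s ∈ Finset.range k,
        C (fK.coeff s) * (C b * X - C (b ^ q * α ^ ((q : ℕ) : ℤ))) ^ s *
          (X - C (α ^ ((q : ℕ) : ℤ))) ^ (k - 1 - s) := ⟨_, rfl⟩
    have hGdeg : G.natDegree < k := by
      have h : G.natDegree ≤ k - 1 := by
        rw [hG]
        apply natDegree_sum_le_of_forall_le
        intro s hs
        rw [Finset.mem_range] at hs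
        have h3 : (C b * X - C (b ^ q * α ^ ((q : ℕ) : ℤ))).natDegree ≤ 1 := by
          refine le_trans (natDegree_sub_le _ _) ?_
          simp only [natDegree_C, sup_le_iff]
          constructor
          · exact le_trans (natDegree_C_mul_le _ _) (by simp [natDegree_X])
          · omega
        have h2 : ((C b * X - C (b ^ q * α ^ ((q : ℕ) : ℤ))) ^ s).natDegree ≤ s := by
          refine le_trans natDegree_pow_le ?_
          calc s * (C b * X - C (b ^ q * α ^ ((q : ℕ) : ℤ))).natDegree
              ≤ s * 1 := Nat.mul_le_mul_left s h3
            _ = s := by omega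
        have h1 : (C (fK.coeff s) * (C b * X - C (b ^ q * α ^ ((q : ℕ) : ℤ))) ^ s).natDegree
            ≤ s := le_trans (natDegree_C_mul_le _ _) h2
        have h4 : ((X - C (α ^ ((q : ℕ) : ℤ))) ^ (k - 1 - s)).natDegree ≤ k - 1 - s := by
          refine le_trans natDegree_pow_le ?_
          calc (k - 1 - s) * (X - C (α ^ ((q : ℕ) : ℤ))).natDegree
              ≤ (k - 1 - s) * 1 := Nat.mul_le_mul_left _ (natDegree_X_sub_C_le _)
            _ = k - 1 - s := by omega
        refine le_trans natDegree_mul_le ?_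
        omega
      omega
    -- the two evaluation identities
    have hGev1 : ∀ j : Fin q, algebraMap F K (wordF f (Fin.castSucc j)) =
        μ * α ^ (((j : ℕ) : ℤ) * ((r : ℤ) + 1)) * G.eval (α ^ ((j : ℕ) : ℤ)) := by
      intro j
      have hj := j.isLt
      have hd := hden _ hj
      rw [hwordF]
      simp only [Fin.snoc_castSucc]
      rw [map_mul, hθA]
      have hval : algebraMap F K (f.eval (a j)) = fK.eval (AK (j : ℕ)) := by
        rw [hfK, ← haA j, eval_map, eval₂_at_apply]
      rw [hval]
      have hcoe : ((Fin.castSucc j : Fin (q + 1)) : ℕ) = (j : ℕ) := rfl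
      rw [hcoe, hΘK]
      simp only [if_neg (by omega : ¬ (j : ℕ) = q)]
      have hsuff : (α ^ ((j : ℕ) : ℤ) - α ^ ((q : ℕ) : ℤ)) ^ (k - 1) * fK.eval (AK (j : ℕ))
          = G.eval (α ^ ((j : ℕ) : ℤ)) := by
        rw [eval_eq_sum_range' hfKdeg (AK (j : ℕ)), hG]
        rw [eval_finset_sum]
        rw [Finset.mul_sum]
        apply Finset.sum_congr rfl
        intro s hs
        rw [Finset.mem_range] at hs
        simp only [eval_mul, eval_pow, eval_sub, eval_C, eval_X]
        rw [hAK]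
        simp only
        rw [mul_pow, inv_pow]
        have hds : (α ^ ((j : ℕ) : ℤ) - α ^ ((q : ℕ) : ℤ)) ^ (k - 1)
            = (α ^ ((j : ℕ) : ℤ) - α ^ ((q : ℕ) : ℤ)) ^ (k - 1 - s) *
              (α ^ ((j : ℕ) : ℤ) - α ^ ((q : ℕ) : ℤ)) ^ s := by
          rw [← pow_add]; congr 1; omega
        rw [hds]
        have hps : (α ^ ((j : ℕ) : ℤ) - α ^ ((q : ℕ) : ℤ)) ^ s ≠ 0 := pow_ne_zero _ hd
        have hcan : (α ^ ((j : ℕ) : ℤ) - α ^ ((q : ℕ) : ℤ)) ^ s *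
            ((α ^ ((j : ℕ) : ℤ) - α ^ ((q : ℕ) : ℤ)) ^ s)⁻¹ = 1 := mul_inv_cancel₀ hps
        linear_combination (fK.coeff s *
          (b * α ^ ((j : ℕ) : ℤ) - b ^ q * α ^ ((q : ℕ) : ℤ)) ^ s *
          (α ^ ((j : ℕ) : ℤ) - α ^ ((q : ℕ) : ℤ)) ^ (k - 1 - s)) * hcan
      linear_combination (μ * α ^ (((j : ℕ) : ℤ) * ((r : ℤ) + 1))) * hsuff
    have hGev2 : algebraMap F K (wordF f (Fin.last q)) =
        μ * α ^ ((q : ℤ) * ((r : ℤ) + 1)) * G.eval (α ^ ((q : ℕ) : ℤ)) := by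
      rw [hwordF]
      simp only [Fin.snoc_last]
      rw [map_mul, hθA]
      have hcoe : ((Fin.last q : Fin (q + 1)) : ℕ) = q := rfl
      rw [hcoe, hΘK]
      simp only [eq_self_iff_true, if_true]
      have hGq : G.eval (α ^ ((q : ℕ) : ℤ)) =
          fK.coeff (k - 1) * (α ^ ((q : ℕ) : ℤ) * (b - b ^ q)) ^ (k - 1) := by
        rw [hG, eval_finset_sum]
        rw [Finset.sum_eq_single (k - 1)]
        · simp only [eval_mul, eval_pow, eval_sub, eval_C, eval_X, sub_self,
            Nat.sub_self, pow_zero, mul_one]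
          congr 1
          ring
        · intro s hs hsne
          rw [Finset.mem_range] at hs
          simp only [eval_mul, eval_pow, eval_sub, eval_C, eval_X, sub_self]
          rw [zero_pow (by omega : k - 1 - s ≠ 0), mul_zero]
        · intro h
          exact absurd (Finset.mem_range.mpr (by omega)) h
      rw [hGq]
      have hcoeffmap : algebraMap F K (f.coeff (k - 1)) = fK.coeff (k - 1) := by
        rw [hfK, coeff_map]
      rw [hcoeffmap]
      ring
    have huni : ∀ i : Fin (q + 1), algebraMap F K (wordF f i) =
        μ * α ^ (((i : ℕ) : ℤ) * ((r : ℤ) + 1)) * G.eval (α ^ ((i : ℕ) : ℤ)) := by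
      intro i
      induction i using Fin.lastCases with
      | last => simpa using hGev2
      | cast j => simpa using hGev1 j
    -- the big word polynomial
    obtain ⟨W₀, hW₀⟩ : ∃ W₀ : Polynomial F,
        W₀ = ∑ i : Fin (q + 1), monomial (i : ℕ) (wordF f i) := ⟨_, rfl⟩
    have hW₀coeff : ∀ i : Fin (q + 1), W₀.coeff (i : ℕ) = wordF f i := by
      intro i
      rw [hW₀, finset_sum_coeff]
      rw [Finset.sum_eq_single i (fun i' _ hne' => by
        rw [coeff_monomial, if_neg (fun h => hne' (Fin.ext h))]) (by simp)]
      simp [coeff_monomial]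
    have hW₀deg : W₀.natDegree ≤ q := by
      rw [hW₀]
      apply natDegree_sum_le_of_forall_le
      intro i _
      exact le_trans (natDegree_monomial_le _) (by omega)
    -- vanishing at the roots of g₁
    have hkey : ∀ jz : ℤ, jz ∈ Finset.Icc (-(r : ℤ)) (r : ℤ) →
        (W₀.map (algebraMap F K)).eval (α ^ jz) = 0 := by
      intro jz hjz
      rw [Finset.mem_Icc] at hjz
      rw [hW₀, Polynomial.map_sum]
      simp only [map_monomial]
      rw [eval_finset_sum]
      simp only [eval_monomial]
      have hterm : ∀ i : Fin (q + 1), algebraMap F K (wordF f i) * (α ^ jz) ^ (i : ℕ) =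
          ∑ s ∈ Finset.range k, μ * G.coeff s *
            (α ^ ((r : ℤ) + 1 + (s : ℤ) + jz)) ^ (i : ℕ) := by
        intro i
        rw [huni i, eval_eq_sum_range' hGdeg (α ^ ((i : ℕ) : ℤ))]
        rw [Finset.mul_sum, Finset.sum_mul]
        apply Finset.sum_congr rfl
        intro s hs
        rw [hpowz, hpowz, hpowz]
        have hE : α ^ (((i : ℕ) : ℤ) * ((r : ℤ) + 1)) * α ^ (((i : ℕ) : ℤ) * (s : ℤ)) *
            α ^ (jz * ((i : ℕ) : ℤ)) = α ^ (((r : ℤ) + 1 + (s : ℤ) + jz) * ((i : ℕ) : ℤ)) := by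
          rw [hza, hza]; congr 1; ring
        linear_combination (μ * G.coeff s) * hE
      rw [Finset.sum_congr rfl (fun i _ => hterm i)]
      rw [Finset.sum_comm]
      apply Finset.sum_eq_zero
      intro s hs
      rw [Finset.mem_range] at hs
      rw [← Finset.mul_sum]
      have hT1 : (0 : ℤ) < (r : ℤ) + 1 + (s : ℤ) + jz := by omega
      have hT2 : (r : ℤ) + 1 + (s : ℤ) + jz ≤ (q : ℤ) := by omega
      have hβ1 : α ^ ((r : ℤ) + 1 + (s : ℤ) + jz) ≠ 1 := hone _ hT1 (by omega)
      have hβq : (α ^ ((r : ℤ) + 1 + (s : ℤ) + jz)) ^ (q + 1) = 1 := by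
        rw [hpowz]
        have h := hzpow (((r : ℤ) + 1 + (s : ℤ) + jz) * ((q + 1 : ℕ) : ℤ)) 0
          ⟨(r : ℤ) + 1 + (s : ℤ) + jz, by push_cast; ring⟩
        rw [h, zpow_zero]
      rw [Fin.sum_univ_eq_sum_range (fun i => (α ^ ((r : ℤ) + 1 + (s : ℤ) + jz)) ^ i) (q + 1)]
      rw [geom_sum_eq hβ1, hβq, sub_self, zero_div, mul_zero]
    -- divisibility
    have hdvd1 : g₁ ∣ W₀.map (algebraMap F K) := by
      rw [hg₁]
      apply Finset.prod_dvd_of_coprime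
      · intro s hs t ht hst
        apply isCoprime_X_sub_C_of_isUnit_sub
        apply isUnit_iff_ne_zero.mpr
        rw [sub_ne_zero]
        rw [Finset.mem_coe, Finset.mem_Icc] at hs ht
        exact hinjz _ _ hst (by omega) (by omega)
      · intro i hi
        rw [Polynomial.dvd_iff_isRoot]
        exact hkey i hi
    have hdvd0 : g₀ ∣ W₀ := by
      rw [← map_dvd_map (algebraMap F K) injF hg₀monic, hg₀map]
      exact hdvd1
    obtain ⟨u₀, hu₀⟩ : ∃ u₀ : Polynomial F, u₀ = W₀ /ₘ g₀ := ⟨_, rfl⟩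
    have hWeq : W₀ = g₀ * u₀ := by
      have h := modByMonic_add_div W₀ g₀
      rw [(modByMonic_eq_zero_iff_dvd hg₀monic).mpr hdvd0, zero_add] at h
      rw [hu₀]; exact h.symm
    have hu₀z : ∀ t : ℕ, k ≤ t → u₀.coeff t = 0 := by
      intro t ht
      apply coeff_eq_zero_of_natDegree_lt
      rw [hu₀, natDegree_divByMonic _ hg₀monic, hg₀deg]
      omega
    -- expressing the word as a combination of shifts
    have hrepr : wordF f = ∑ t : Fin k, u₀.coeff (t : ℕ) •
        (fun i : Fin (q + 1) => if (t : ℕ) ≤ (i : ℕ) then c ((i : ℕ) - (t : ℕ)) else 0) := by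
      funext i
      rw [← hW₀coeff i, hWeq, mul_comm g₀ u₀, coeff_mul]
      rw [Finset.Nat.sum_antidiagonal_eq_sum_range_succ (fun x y => u₀.coeff x * g₀.coeff y)]
      rw [Finset.sum_apply]
      simp only [Pi.smul_apply, smul_eq_mul]
      rw [Fin.sum_univ_eq_sum_range
        (fun t => u₀.coeff t * (if t ≤ (i : ℕ) then c ((i : ℕ) - t) else 0)) k]
      have e1 : ∑ y ∈ Finset.range ((i : ℕ) + 1), u₀.coeff y * g₀.coeff ((i : ℕ) - y)
          = ∑ y ∈ Finset.range (q + 1),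
            u₀.coeff y * (if y ≤ (i : ℕ) then c ((i : ℕ) - y) else 0) := by
        have step1 : ∑ y ∈ Finset.range ((i : ℕ) + 1), u₀.coeff y * g₀.coeff ((i : ℕ) - y)
            = ∑ y ∈ Finset.range ((i : ℕ) + 1),
              u₀.coeff y * (if y ≤ (i : ℕ) then c ((i : ℕ) - y) else 0) := by
          apply Finset.sum_congr rfl
          intro y hy
          rw [Finset.mem_range] at hy
          rw [hg₀coeff, if_pos (by omega : y ≤ (i : ℕ))]
        rw [step1]
        apply Finset.sum_subset (Finset.range_subset_range.mpr (by omega : (i : ℕ) + 1 ≤ q + 1))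
        intro y hy hny
        rw [Finset.mem_range] at hy hny
        rw [if_neg (by omega : ¬ y ≤ (i : ℕ)), mul_zero]
      have e2 : ∑ t ∈ Finset.range k,
            u₀.coeff t * (if t ≤ (i : ℕ) then c ((i : ℕ) - t) else 0)
          = ∑ y ∈ Finset.range (q + 1),
            u₀.coeff y * (if y ≤ (i : ℕ) then c ((i : ℕ) - y) else 0) := by
        apply Finset.sum_subset (Finset.range_subset_range.mpr (by omega : k ≤ q + 1))
        intro y hy hny
        rw [Finset.mem_range] at hy hny
        rw [hu₀z y (by omega), zero_mul]
      simp only [Nat.succ_eq_add_one]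
      rw [e1]
      exact e2.symm
    rw [hrepr]
    apply Submodule.sum_smul_mem
    intro t _
    apply Submodule.subset_span
    exact ⟨t, rfl⟩
  -- ### the linear parametrisation by coefficient vectors
  obtain ⟨px, hpx⟩ : ∃ px : (Fin k → F) → Polynomial F,
      px = fun x => ∑ s : Fin k, monomial (s : ℕ) (x s) := ⟨_, rfl⟩
  have hpxcoeff : ∀ (x : Fin k → F) (s : Fin k), (px x).coeff (s : ℕ) = x s := by
    intro x s
    rw [hpx]
    simp only
    rw [finset_sum_coeff]
    rw [Finset.sum_eq_single s (fun s' _ hne' => by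
      rw [coeff_monomial, if_neg (fun h => hne' (Fin.ext h))]) (by simp)]
    simp [coeff_monomial]
  have hpxcoeff0 : ∀ (x : Fin k → F) (t : ℕ), k ≤ t → (px x).coeff t = 0 := by
    intro x t ht
    rw [hpx]
    simp only
    rw [finset_sum_coeff]
    apply Finset.sum_eq_zero
    intro s _
    rw [coeff_monomial, if_neg (by omega : ¬ ((s : ℕ) = t))]
  have hpxdeg : ∀ x : Fin k → F, (px x).natDegree ≤ k - 1 := by
    intro x
    rw [hpx]
    simp only
    apply natDegree_sum_le_of_forall_le
    intro s _
    exact le_trans (natDegree_monomial_le _) (by omega)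
  have hpxadd : ∀ x y : Fin k → F, px (x + y) = px x + px y := by
    intro x y
    rw [hpx]
    simp only [Pi.add_apply]
    rw [← Finset.sum_add_distrib]
    apply Finset.sum_congr rfl
    intro s _
    rw [map_add]
  have hpxsmul : ∀ (m : F) (x : Fin k → F), px (m • x) = m • px x := by
    intro m x
    rw [hpx]
    simp only [Pi.smul_apply]
    rw [Finset.smul_sum]
    apply Finset.sum_congr rfl
    intro s _
    rw [smul_monomial]
  have hwadd : ∀ f g : Polynomial F, wordF (f + g) = wordF f + wordF g := by
    intro f g
    funext i
    rw [hwordF]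
    simp only [Pi.add_apply]
    induction i using Fin.lastCases with
    | last => simp [Fin.snoc_last, coeff_add, mul_add]
    | cast j => simp [Fin.snoc_castSucc, eval_add, mul_add]
  have hwsmul : ∀ (m : F) (f : Polynomial F), wordF (m • f) = m • wordF f := by
    intro m f
    funext i
    rw [hwordF]
    simp only [Pi.smul_apply, smul_eq_mul]
    induction i using Fin.lastCases with
    | last => simp [Fin.snoc_last, coeff_smul, smul_eq_mul]; ring
    | cast j => simp [Fin.snoc_castSucc, eval_smul, smul_eq_mul]; ring
  obtain ⟨M, hM⟩ : ∃ M : (Fin k → F) →ₗ[F] (Fin (q + 1) → F),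
      ⇑M = fun x => wordF (px x) := by
    refine ⟨{ toFun := fun x => wordF (px x), map_add' := ?_, map_smul' := ?_ }, rfl⟩
    · intro x y
      show wordF (px (x + y)) = wordF (px x) + wordF (px y)
      rw [hpxadd, hwadd]
    · intro m x
      show wordF (px (m • x)) = (RingHom.id F) m • wordF (px x)
      rw [hpxsmul, hwsmul]
      rfl
  -- injectivity of M
  have hMker : ∀ x : Fin k → F, M x = 0 → x = 0 := by
    intro x hx
    have hfz : px x = 0 := by
      apply eq_zero_of_natDegree_lt_card_of_eval_eq_zero (px x) (f := fun y : F => y)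
        Function.injective_id
      · intro y
        obtain ⟨j, hj⟩ := habij.2 y
        have h := congrFun hx (Fin.castSucc j)
        rw [hM] at h
        simp only at h
        rw [hwordF] at h
        simp only [Fin.snoc_castSucc, Pi.zero_apply] at h
        rcases mul_eq_zero.mp h with h' | h'
        · exact absurd h' (hθ0 _)
        · rw [← hj]; exact h'
      · rw [hF]
        exact lt_of_le_of_lt (hpxdeg x) (by omega)
    funext s
    have h := hpxcoeff x s
    rw [hfz, coeff_zero] at h
    exact h.symm
  have hMinj : Function.Injective M := by
    intro x y hxy
    have h : M (x - y) = 0 := by rw [map_sub, hxy, sub_self]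
    have h2 := hMker _ h
    funext s
    have h3 := congrFun h2 s
    simp only [Pi.sub_apply, Pi.zero_apply, sub_eq_zero] at h3
    exact h3
  -- rank computations
  have hfrM : Module.finrank F ↥(LinearMap.range M) = k := by
    rw [LinearMap.finrank_range_of_inj hMinj, Module.finrank_pi, Fintype.card_fin]
  have hle : LinearMap.range M ≤ Submodule.span F
      { v | ∃ t : Fin k, v = fun i : Fin (q + 1) =>
          if (t : ℕ) ≤ (i : ℕ) then c ((i : ℕ) - (t : ℕ)) else 0 } := by
    rintro w ⟨x, rfl⟩
    rw [hM]
    exact hmem (px x) (hpxdeg x)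
  have hCodele : Module.finrank F ↥(Submodule.span F
      { v | ∃ t : Fin k, v = fun i : Fin (q + 1) =>
          if (t : ℕ) ≤ (i : ℕ) then c ((i : ℕ) - (t : ℕ)) else 0 }) ≤ k := by
    have hset : { v : Fin (q + 1) → F | ∃ t : Fin k, v = fun i : Fin (q + 1) =>
        if (t : ℕ) ≤ (i : ℕ) then c ((i : ℕ) - (t : ℕ)) else 0 }
        = Set.range (fun t : Fin k => (fun i : Fin (q + 1) =>
          if (t : ℕ) ≤ (i : ℕ) then c ((i : ℕ) - (t : ℕ)) else 0)) := by
      ext v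
      simp only [Set.mem_setOf_eq, Set.mem_range]
      constructor
      · rintro ⟨t, rfl⟩; exact ⟨t, rfl⟩
      · rintro ⟨t, rfl⟩; exact ⟨t, rfl⟩
    rw [hset, ← Fintype.range_linearCombination F
      (fun t : Fin k => (fun i : Fin (q + 1) =>
        if (t : ℕ) ≤ (i : ℕ) then c ((i : ℕ) - (t : ℕ)) else 0))]
    exact le_trans (LinearMap.finrank_range_le _)
      (by rw [Module.finrank_pi, Fintype.card_fin])
  have hEq : LinearMap.range M = Submodule.span F
      { v | ∃ t : Fin k, v = fun i : Fin (q + 1) =>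
          if (t : ℕ) ≤ (i : ℕ) then c ((i : ℕ) - (t : ℕ)) else 0 } :=
    Submodule.eq_of_le_of_finrank_le hle (le_trans hCodele (le_of_eq hfrM.symm))
  -- ### the three conclusions
  refine ⟨⟨a, θ, habij, hθ0, ?_⟩, ?_, ?_⟩
  · -- set equality
    rw [← hEq]
    ext w
    simp only [SetLike.mem_coe, LinearMap.mem_range, Set.mem_setOf_eq]
    constructor
    · rintro ⟨x, rfl⟩
      refine ⟨px x, natDegree_le_iff_degree_le.mp (hpxdeg x), ?_⟩
      rw [hM]
      simp only
      rw [hwordF]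
      funext i
      simp [Algebra.algebraMap_self]
    · rintro ⟨f, hfd, rfl⟩
      refine ⟨fun s => f.coeff (s : ℕ), ?_⟩
      have hfdeg : f.natDegree ≤ k - 1 := natDegree_le_iff_degree_le.mpr hfd
      have hfx : px (fun s => f.coeff (s : ℕ)) = f := by
        apply Polynomial.ext
        intro t
        by_cases ht : t < k
        · exact hpxcoeff _ ⟨t, ht⟩
        · rw [hpxcoeff0 _ _ (by omega),
            coeff_eq_zero_of_natDegree_lt (by omega : f.natDegree < t)]
      rw [hM]
      simp only
      rw [hfx, hwordF]
      funext i
      simp [Algebra.algebraMap_self]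
  · rw [← hEq]
    exact hfrM
  · -- the distance bound
    intro w hw hw0
    rw [← hEq] at hw
    obtain ⟨x, rfl⟩ := hw
    have hf0 : px x ≠ 0 := by
      intro h
      apply hw0
      rw [hM]
      simp only
      funext i
      rw [hwordF]
      simp only
      induction i using Fin.lastCases with
      | last => simp [Fin.snoc_last, h]
      | cast j => simp [Fin.snoc_castSucc, h]
    -- zero sets
    have hZc : (Finset.univ.filter
        (fun j : Fin q => (px x).eval (a j) = 0)).card ≤ (px x).natDegree := by
      refine le_trans (Finset.card_le_card_of_injOn
        (t := (px x).roots.toFinset) a ?_ ?_) ?_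
      · intro j hj
        rw [Finset.mem_coe, Finset.mem_filter] at hj
        rw [Finset.mem_coe, Multiset.mem_toFinset, mem_roots']
        exact ⟨hf0, hj.2⟩
      · intro j _ j' _ h
        exact hainj h
      · exact le_trans (Multiset.toFinset_card_le _) (Polynomial.card_roots' _)
    have hlastval : M x (Fin.last q) = θ (Fin.last q) * (px x).coeff (k - 1) := by
      rw [hM]
      simp only
      rw [hwordF]
      simp [Fin.snoc_last]
    have hcastval : ∀ j : Fin q,
        M x (Fin.castSucc j) = θ (Fin.castSucc j) * (px x).eval (a j) := by
      intro j
      rw [hM]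
      simp only
      rw [hwordF]
      simp [Fin.snoc_castSucc]
    have hZk : (Finset.univ.filter (fun i : Fin (q + 1) => M x i = 0)).card ≤ k - 1 := by
      set Zc := Finset.univ.filter (fun j : Fin q => (px x).eval (a j) = 0) with hZcdef
      have hsub2 : ∀ i ∈ Finset.univ.filter (fun i : Fin (q + 1) => M x i = 0),
          i ≠ Fin.last q → i ∈ Zc.image Fin.castSucc := by
        intro i hi hne
        rw [Finset.mem_filter] at hi
        obtain ⟨j, rfl⟩ : ∃ j : Fin q, i = Fin.castSucc j := by
          refine ⟨⟨(i : ℕ), ?_⟩, ?_⟩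
          · have h1 := Fin.is_le i
            have h2 : (i : ℕ) ≠ q := fun h => hne (Fin.ext (by simp [h]))
            omega
          · apply Fin.ext
            simp
        rw [Finset.mem_image]
        refine ⟨j, ?_, rfl⟩
        rw [hZcdef, Finset.mem_filter]
        refine ⟨Finset.mem_univ _, ?_⟩
        have h := hi.2
        rw [hcastval] at h
        rcases mul_eq_zero.mp h with h' | h'
        · exact absurd h' (hθ0 _)
        · exact h'
      by_cases hck : (px x).coeff (k - 1) = 0
      · -- low degree case
        have hk2' : 2 ≤ k := by
          by_contra hcon
          push_neg at hcon
          apply hf0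
          have hk1eq : k = 1 := by omega
          have hC := eq_C_of_natDegree_le_zero (p := px x)
            (by have := hpxdeg x; omega)
          rw [hC]
          have hcz : (px x).coeff 0 = 0 := by rwa [hk1eq] at hck
          simp [hcz]
        have hdeg2 : (px x).natDegree ≤ k - 2 := by
          by_contra hcon
          push_neg at hcon
          have hnd : (px x).natDegree = k - 1 := by
            have := hpxdeg x
            omega
          apply hf0
          apply leadingCoeff_eq_zero.mp
          rw [leadingCoeff, hnd]
          exact hck
        have hsub3 : Finset.univ.filter (fun i : Fin (q + 1) => M x i = 0)
            ⊆ insert (Fin.last q) (Zc.image Fin.castSucc) := by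
          intro i hi
          by_cases hil : i = Fin.last q
          · rw [hil]; exact Finset.mem_insert_self _ _
          · exact Finset.mem_insert_of_mem (hsub2 i hi hil)
        refine le_trans (Finset.card_le_card hsub3) ?_
        refine le_trans (Finset.card_insert_le _ _) ?_
        have h4 := Finset.card_image_le (s := Zc) (f := Fin.castSucc)
        omega
      · -- top coefficient nonzero
        have hsub3 : Finset.univ.filter (fun i : Fin (q + 1) => M x i = 0)
            ⊆ Zc.image Fin.castSucc := by
          intro i hi
          apply hsub2 i hi
          intro hil
          rw [Finset.mem_filter] at hi
          have h := hi.2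
          rw [hil, hlastval] at h
          rcases mul_eq_zero.mp h with h' | h'
          · exact absurd h' (hθ0 _)
          · exact hck h'
        refine le_trans (Finset.card_le_card hsub3) ?_
        refine le_trans Finset.card_image_le ?_
        refine le_trans hZc ?_
        exact le_trans (hpxdeg x) (le_refl _)
    have hcompl := Finset.card_filter_add_card_filter_not
      (s := (Finset.univ : Finset (Fin (q + 1)))) (p := fun i => M x i ≠ 0)
    rw [hammingNorm]
    have hcard : (Finset.univ.filter (fun i : Fin (q + 1) => ¬ M x i ≠ 0)).card
        = (Finset.univ.filter (fun i : Fin (q + 1) => M x i = 0)).card := by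
      congr 1
      apply Finset.filter_congr
      intro i _
      simp [not_not]
    rw [Finset.card_univ, Fintype.card_fin] at hcompl
    rw [hcard] at hcompl
    omega
end

section
/- Let q be an even prime power, let ω be a primitive element of F_{q²}, let α = ω^{q−1} (a primitive (q+1)-st root of unity), and let k be even with 1 ≤ k ≤ q; write k = q − 2r. Let g_1(X) = ∏_{i=−r}^{r} (X − α^i), a polynomial with coefficients in F_q dividing X^{q+1} − 1. Then the k-dimensional cyclic code ⟨g_1⟩ of length q+1 over F_q is a generalised Reed–Solomon code (and is a [q+1, k, q+2−k]_q MDS code). -/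
open Polynomial

private lemma fixed_field_range {F K : Type*} [Field F] [Fintype F] [Field K] [Fintype K]
    [Algebra F K] {q : ℕ} (hF : Fintype.card F = q) (x : K) :
    x ^ q = x ↔ x ∈ Set.range (algebraMap F K) := by
  have hq2 : 2 ≤ q := hF ▸ Fintype.one_lt_card
  have hinj : Function.Injective (algebraMap F K) := (algebraMap F K).injective
  classical
  constructor
  · intro hx
    set P : K[X] := X ^ q - X with hP
    have hPne : P ≠ 0 := by
      intro h
      have := congrArg (fun p => Polynomial.coeff p q) h
      simp only [hP, Polynomial.coeff_sub, Polynomial.coeff_X_pow, Polynomial.coeff_X, if_pos rfl,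
        Polynomial.coeff_zero] at this
      rw [if_neg (by omega : ¬ (1 = q))] at this
      norm_num at this
    have hdeg : P.natDegree ≤ q := by
      refine le_trans (Polynomial.natDegree_sub_le _ _) ?_
      simp [Polynomial.natDegree_X_pow, Polynomial.natDegree_X]
      omega
    set T : Finset K := P.roots.toFinset with hT
    have hTcard : T.card ≤ q := by
      refine le_trans (Multiset.toFinset_card_le _) (le_trans ?_ hdeg)
      exact_mod_cast Polynomial.card_roots' P
    set Rng : Finset K := Finset.univ.image (algebraMap F K) with hR
    have hRcard : Rng.card = q := by
      rw [hR, Finset.card_image_of_injective _ hinj, Finset.card_univ, hF]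
    have hsub : Rng ⊆ T := by
      intro y hy
      rw [hR, Finset.mem_image] at hy
      obtain ⟨z, -, rfl⟩ := hy
      rw [hT, Multiset.mem_toFinset, Polynomial.mem_roots hPne]
      have : (z : F) ^ q = z := by rw [← hF]; exact FiniteField.pow_card z
      simp [hP, Polynomial.IsRoot, ← map_pow, this]
    have hTR : Rng = T := Finset.eq_of_subset_of_card_le hsub (by omega)
    have hxT : x ∈ T := by
      rw [hT, Multiset.mem_toFinset, Polynomial.mem_roots hPne]
      simp [hP, Polynomial.IsRoot, hx]
    rw [← hTR, hR, Finset.mem_image] at hxT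
    obtain ⟨z, -, rfl⟩ := hxT
    exact ⟨z, rfl⟩
  · rintro ⟨y, rfl⟩
    rw [← map_pow, ← hF, FiniteField.pow_card]

private lemma char_two_of_even_card {K : Type*} [Field K] [Fintype K]
    (h : Even (Fintype.card K)) : CharP K 2 := by
  set p := ringChar K with hp
  haveI : CharP K p := ringChar.charP K
  obtain ⟨n, hprime, hcard⟩ := FiniteField.card K p
  have h2 : 2 ∣ p ^ (n : ℕ) := hcard ▸ h.two_dvd
  have hp2 : p = 2 := ((Nat.prime_dvd_prime_iff_eq Nat.prime_two hprime).mp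
    (Nat.Prime.dvd_of_dvd_pow Nat.prime_two h2)).symm
  rw [← hp2]; exact ringChar.charP K

/-- Let `q` be an even prime power, `ω` a primitive element of `𝔽_{q²}`,
`α = ω^{q−1}` a primitive `(q+1)`-st root of unity, and let `k` be even with `1 ≤ k ≤ q`;
write `k = q − 2r`.  Let `g₁(X) = ∏_{i=−r}^{r} (X − α^i)`, a polynomial with coefficients
`c j` in `𝔽_q` dividing `X^{q+1} − 1`.  Then the `k`-dimensional cyclic code `⟨g₁⟩` of length
`q+1` over `𝔽_q` (the span of the `k` cyclic shifts of `(c₀,…,c_{q+1−k},0,…,0)`) is a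
generalised Reed–Solomon code, and is a `[q+1,k,q+2−k]_q` MDS code. -/
theorem grassl_roetteler_cyclic_even_even_is_GRS
    (q k r : ℕ) (F K : Type*) [Field F] [Fintype F] [Field K] [Fintype K]
    [DecidableEq F] [Algebra F K]
    (hF : Fintype.card F = q) (hK : Fintype.card K = q ^ 2)
    (hqeven : Even q) (hkeven : Even k) (hk1 : 1 ≤ k) (hkq : k ≤ q)
    (hkr : (k : ℤ) = q - 2 * r)
    (ω : K) (hω : orderOf ω = q ^ 2 - 1)
    (α : K) (hα : α = ω ^ (q - 1))
    (g₁ : Polynomial K)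
    (hg₁ : g₁ = ∏ i ∈ Finset.Icc (-(r : ℤ)) (r : ℤ), (X - C (α ^ i)))
    (c : ℕ → F) (hc : ∀ j, algebraMap F K (c j) = g₁.coeff j)
    (Code : Submodule F (Fin (q + 1) → F))
    (hCode : Code = Submodule.span F
      { v | ∃ t : Fin k, v = fun i : Fin (q + 1) =>
          if (t : ℕ) ≤ (i : ℕ) then c ((i : ℕ) - (t : ℕ)) else 0 }) :
    IsGRSCode q k F F (Code : Set (Fin (q + 1) → F)) ∧
    Module.finrank F Code = k ∧
    (∀ w ∈ Code, w ≠ 0 → q + 2 - k ≤ hammingNorm w) := by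
  classical
  have hq2 : 2 ≤ q := hF ▸ Fintype.one_lt_card
  have hq2r : k + 2 * r = q := by omega
  have hk2 : 2 ≤ k := by have := hkeven.two_dvd; omega
  -- char 2
  haveI hchar : CharP K 2 := char_two_of_even_card (by
    rw [hK, sq]; exact hqeven.mul_right q)
  obtain ⟨m, hmprime, hqm⟩ : ∃ n : ℕ+, Nat.Prime 2 ∧ Fintype.card F = 2 ^ (n:ℕ) := by
    haveI : CharP F 2 := char_two_of_even_card (hF ▸ hqeven)
    exact FiniteField.card F 2
  rw [hF] at hqm
  have h2K : (2 : K) = 0 := CharTwo.two_eq_zero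
  have frob_add : ∀ x y : K, (x + y) ^ q = x ^ q + y ^ q := by
    intro x y; rw [hqm]; exact add_pow_char_pow (p := 2) (n := (m : ℕ)) (x := x) (y := y)
  -- ω, α basics
  have hq21 : q ^ 2 - 1 = (q + 1) * (q - 1) := by
    obtain ⟨t, rfl⟩ : ∃ t, q = t + 2 := ⟨q - 2, by omega⟩
    have h1 : (t + 2) ^ 2 = t ^ 2 + 4 * t + 4 := by ring
    have h2 : (t + 2 + 1) * (t + 2 - 1) = t ^ 2 + 4 * t + 3 := by
      have : t + 2 - 1 = t + 1 := by omega
      rw [this]; ring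
    omega
  have hωpow : ω ^ (q ^ 2 - 1) = 1 := by rw [← hω]; exact pow_orderOf_eq_one ω
  have hω0 : ω ≠ 0 := by
    intro h; rw [h, zero_pow (by rw [hq21]; exact Nat.mul_ne_zero (by omega) (by omega))] at hωpow; exact one_ne_zero hωpow.symm
  have hαord : orderOf α = q + 1 := by
    have hgcd : Nat.gcd ((q + 1) * (q - 1)) (q - 1) = q - 1 :=
      Nat.gcd_eq_right (dvd_mul_left (q - 1) (q + 1))
    rw [hα, orderOf_pow' (n := q - 1) ω (by omega : q - 1 ≠ 0), hω, hq21, hgcd,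
      Nat.mul_div_cancel _ (by omega : 0 < q - 1)]
  have hαprim : IsPrimitiveRoot α (q + 1) := hαord ▸ IsPrimitiveRoot.orderOf α
  have hαq1 : α ^ (q + 1) = 1 := by rw [← hαord]; exact pow_orderOf_eq_one α
  have hα0 : α ≠ 0 := by
    intro h; rw [h, zero_pow (by omega : q + 1 ≠ 0)] at hαq1; exact one_ne_zero hαq1.symm
  have hKpow : ∀ x : K, x ^ q ^ 2 = x := fun x => hK ▸ FiniteField.pow_card x
  have hωq2 : (ω ^ q) ^ q = ω := by rw [← pow_mul, ← sq]; exact hKpow ω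
  -- δ
  set δ : K := ω + ω ^ q with hδdef
  have hδq : δ ^ q = δ := by rw [hδdef, frob_add, hωq2, add_comm]
  have hδ0 : δ ≠ 0 := by
    intro h
    have hωq : ω ^ q = ω := by
      have h2 : ω ^ q = -ω := by linear_combination h
      rw [h2, CharTwo.neg_eq]
    have hmul : ω ^ (q - 1) * ω = ω := by
      rw [← pow_succ, Nat.sub_add_cancel (by omega)]; exact hωq
    have hpow : ω ^ (q - 1) = 1 := by
      have := mul_right_cancel₀ hω0 (hmul.trans (one_mul ω).symm)
      exact this
    have hdvd := orderOf_dvd_of_pow_eq_one hpow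
    rw [hω] at hdvd
    have h1 := Nat.le_of_dvd (by omega) hdvd
    have hqq : q < q ^ 2 := by nlinarith
    omega
  have hfix : ∀ x : K, x ^ q = x ↔ x ∈ Set.range (algebraMap F K) := fun x =>
    fixed_field_range hF x
  set B : Fin q → K := fun j => α ^ ((j : ℕ) + 1) with hBdef
  have hB0 : ∀ j, B j ≠ 0 := fun j => pow_ne_zero _ hα0
  have hB1 : ∀ j, B j ≠ 1 := by
    intro j h
    have hdvd := (hαprim.pow_eq_one_iff_dvd _).mp h
    have hj := j.isLt
    have := Nat.le_of_dvd (by omega) hdvd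
    omega
  have hBq1 : ∀ j, B j ^ q * B j = 1 := by
    intro j
    rw [← pow_succ, hBdef]
    simp only
    rw [pow_right_comm, hαq1, one_pow]
  have hBplus : ∀ j, B j + 1 ≠ 0 := by
    intro j h
    apply hB1 j
    have h2 : B j = -1 := by linear_combination h
    rw [h2, CharTwo.neg_eq]
  have hB1q : ∀ j, (B j + 1) ^ q * B j = B j + 1 := by
    intro j
    rw [frob_add, one_pow]
    linear_combination hBq1 j
  set AK : Fin q → K := fun j => (ω + B j * ω ^ q) / (B j + 1) with hAKdef
  have hAKmul : ∀ j, AK j * (B j + 1) = ω + B j * ω ^ q := fun j =>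
    div_mul_cancel₀ _ (hBplus j)
  have hBqplus : ∀ j, B j ^ q + 1 ≠ 0 := by
    intro j h
    have hBq : B j ^ q = 1 := by
      rw [← CharTwo.neg_eq 1]; linear_combination h
    apply hB1 j
    have := hBq1 j
    rw [hBq, one_mul] at this
    exact this
  have hAKq : ∀ j, AK j ^ q = AK j := by
    intro j
    have hnum : (ω + B j * ω ^ q) ^ q = ω ^ q + B j ^ q * ω := by
      rw [frob_add, mul_pow, hωq2]
    have hden : (B j + 1) ^ q = B j ^ q + 1 := by rw [frob_add, one_pow]
    rw [hAKdef]
    simp only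
    rw [div_pow, hnum, hden, div_eq_div_iff (hBqplus j) (hBplus j)]
    linear_combination (ω - ω ^ q) * hBq1 j
  set ΘK : Fin (q + 1) → K := fun i =>
    if h : (i : ℕ) < q then (B ⟨i, h⟩ + 1) ^ (k - 1) * B ⟨i, h⟩ ^ (r + 1) else δ ^ (k - 1)
    with hΘKdef
  have hΘK0 : ∀ i, ΘK i ≠ 0 := by
    intro i
    rw [hΘKdef]
    simp only
    split
    · exact mul_ne_zero (pow_ne_zero _ (hBplus _)) (pow_ne_zero _ (hB0 _))
    · exact pow_ne_zero _ hδ0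
  have hΘKq : ∀ i, ΘK i ^ q = ΘK i := by
    intro i
    rw [hΘKdef]
    simp only
    split
    · rename_i hi
      set b := B ⟨i, hi⟩ with hb
      have hpow : b ^ (q + 1) = 1 := by rw [pow_succ]; exact hBq1 _
      have e1 : q + 1 = (k - 1) + ((r + 1) + (r + 1)) := by omega
      have key : ((b + 1) ^ (k - 1) * b ^ (r + 1)) ^ q * b ^ (q + 1)
          = ((b + 1) ^ q * b) ^ (k - 1) * ((b ^ q * b) ^ (r + 1) * b ^ (r + 1)) := by
        rw [e1]
        ring
      rw [hB1q, hBq1, one_pow, one_mul] at key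
      rw [hpow, mul_one] at key
      exact key
    · rw [← pow_right_comm, hδq]
  have haex := fun j => (hfix (AK j)).mp (hAKq j)
  choose a ha using haex
  have hθex := fun i => (hfix (ΘK i)).mp (hΘKq i)
  choose θ hθ using hθex
  have hθ0 : ∀ i, θ i ≠ 0 := by
    intro i h
    apply hΘK0 i
    rw [← hθ i, h, map_zero]
  have hAKne : ∀ j, AK j + ω ^ q ≠ 0 := by
    intro j h
    have h1 : AK j = ω ^ q := by
      rw [← CharTwo.neg_eq (ω ^ q)]; linear_combination h
    have h2 := hAKq j
    rw [h1, hωq2] at h2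
    apply hδ0
    rw [hδdef, ← h2, CharTwo.add_self_eq_zero]
  have hBsolve : ∀ jj, B jj * (AK jj + ω ^ q) = ω + AK jj := by
    intro jj
    linear_combination hAKmul jj + (B jj * ω ^ q - AK jj) * h2K
  have hainj : Function.Injective a := by
    intro j j' h
    have hAK : AK j = AK j' := by rw [← ha j, ← ha j', h]
    have hBeq : B j = B j' := by
      have e1 := hBsolve j
      have e2 := hBsolve j'
      rw [hAK] at e1
      rw [← e2] at e1
      exact mul_right_cancel₀ (hAKne j') e1
    have := hαprim.pow_inj (by omega : (j : ℕ) + 1 < q + 1)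
      (by omega : (j' : ℕ) + 1 < q + 1) hBeq
    exact Fin.ext (by omega)
  have habij : Function.Bijective a :=
    (Fintype.bijective_iff_injective_and_card a).mpr ⟨hainj, by rw [Fintype.card_fin, hF]⟩
  -- polynomial infrastructure
  have hinjF : Function.Injective (algebraMap F K) := (algebraMap F K).injective
  have hg₁monic : g₁.Monic := by
    rw [hg₁]; exact monic_prod_of_monic _ _ fun i _ => monic_X_sub_C _
  have hIcc : (Finset.Icc (-(r : ℤ)) (r : ℤ)).card = q + 1 - k := by
    rw [Int.card_Icc]
    omega
  have hg₁deg : g₁.natDegree = q + 1 - k := by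
    rw [hg₁, natDegree_prod_of_monic _ _ fun i _ => monic_X_sub_C _]
    rw [Finset.sum_congr rfl fun i _ => natDegree_X_sub_C (α ^ i)]
    rw [Finset.sum_const, smul_eq_mul, mul_one, hIcc]
  have hczero : ∀ n, q + 1 - k < n → c n = 0 := by
    intro n hn
    apply hinjF
    rw [map_zero, hc n, coeff_eq_zero_of_natDegree_lt (by omega : g₁.natDegree < n)]
  set g₀ : F[X] := ∑ j ∈ Finset.range (q + 2), (Polynomial.monomial j) (c j) with hg₀def
  have hcoeffg₀ : ∀ n, g₀.coeff n = c n := by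
    intro n
    rw [hg₀def, Polynomial.finset_sum_coeff]
    rw [Finset.sum_congr rfl fun j _ => Polynomial.coeff_monomial]
    rw [Finset.sum_ite_eq' (Finset.range (q + 2)) n c]
    split
    · rfl
    · rename_i hn
      rw [Finset.mem_range] at hn
      exact (hczero n (by omega)).symm
  have hmapg₀ : g₀.map (algebraMap F K) = g₁ := by
    ext n
    rw [Polynomial.coeff_map, hcoeffg₀, hc]
  have hg₀monic : g₀.Monic := by
    rw [hinjF.monic_map_iff, hmapg₀]
    exact hg₁monic
  have hg₀deg : g₀.natDegree = q + 1 - k := by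
    rw [← hg₁deg, ← hmapg₀, hg₀monic.natDegree_map]
  set toPoly : (Fin (q + 1) → F) → F[X] :=
    fun w => ∑ j : Fin (q + 1), (Polynomial.monomial (j : ℕ)) (w j) with htoPdef
  have htoPcoeff : ∀ w (j : Fin (q + 1)), (toPoly w).coeff (j : ℕ) = w j := by
    intro w j
    simp only [htoPdef, Polynomial.finset_sum_coeff, Polynomial.coeff_monomial]
    rw [Finset.sum_eq_single j]
    · rw [if_pos rfl]
    · intro b _ hbj
      rw [if_neg (fun h => hbj (Fin.ext h))]
    · intro h
      exact absurd (Finset.mem_univ j) h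
  have htoPdeg : ∀ w, (toPoly w).natDegree ≤ q := by
    intro w
    simp only [htoPdef]
    refine Polynomial.natDegree_sum_le_of_forall_le _ _ fun j _ => ?_
    exact le_trans (Polynomial.natDegree_monomial_le _) (by omega)
  set wfun : F[X] → (Fin (q + 1) → F) := fun f i =>
    θ i * (Fin.snoc (fun j : Fin q => f.eval (a j)) (f.coeff (k - 1)) : Fin (q + 1) → F) i
    with hwdef
  -- the key evaluation
  have hkey : ∀ f : F[X], f.natDegree < k → ∀ i ∈ Finset.Icc (-(r : ℤ)) (r : ℤ),
      Polynomial.eval (α ^ i) ((toPoly (wfun f)).map (algebraMap F K)) = 0 := by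
    intro f hf i hi
    rw [Finset.mem_Icc] at hi
    set x : K := α ^ i with hxdef
    have hev : Polynomial.eval x ((toPoly (wfun f)).map (algebraMap F K))
        = ∑ j : Fin (q + 1), algebraMap F K (wfun f j) * x ^ (j : ℕ) := by
      simp only [htoPdef, Polynomial.map_sum, Polynomial.eval_finset_sum,
        Polynomial.map_monomial, Polynomial.eval_monomial]
    set FK := f.map (algebraMap F K) with hFKdef
    have hFKdeg : FK.natDegree < k := lt_of_le_of_lt Polynomial.natDegree_map_le hf
    have hevalmap : ∀ j, algebraMap F K (f.eval (a j)) = FK.eval (AK j) := by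
      intro j
      rw [← ha j, hFKdef, Polynomial.eval_map]
      exact (Polynomial.eval₂_hom _ _).symm
    set G : K[X] := ∑ s ∈ Finset.range k,
        Polynomial.C (FK.coeff s) * (Polynomial.C ω + Polynomial.X * Polynomial.C (ω ^ q)) ^ s
          * (Polynomial.X + 1) ^ (k - 1 - s) with hGdef
    have hGdeg : G.natDegree < k := by
      have hb : ∀ s ∈ Finset.range k,
          (Polynomial.C (FK.coeff s) * (Polynomial.C ω + Polynomial.X * Polynomial.C (ω ^ q)) ^ s
            * (Polynomial.X + 1) ^ (k - 1 - s)).natDegree ≤ k - 1 := by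
        intro s hs
        rw [Finset.mem_range] at hs
        refine le_trans (Polynomial.natDegree_mul_le) ?_
        have h1 : (Polynomial.C (FK.coeff s)
            * (Polynomial.C ω + Polynomial.X * Polynomial.C (ω ^ q)) ^ s).natDegree ≤ s := by
          refine le_trans (Polynomial.natDegree_mul_le) ?_
          rw [Polynomial.natDegree_C]
          refine le_trans (Nat.zero_add _).le ?_
          refine le_trans (Polynomial.natDegree_pow_le) ?_
          have : (Polynomial.C ω + Polynomial.X * Polynomial.C (ω ^ q)).natDegree ≤ 1 := by
            refine le_trans (Polynomial.natDegree_add_le _ _) ?_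
            simp [Polynomial.natDegree_C]
            refine le_trans (Polynomial.natDegree_mul_le) ?_
            simp [Polynomial.natDegree_X, Polynomial.natDegree_C]
          calc s * (Polynomial.C ω + Polynomial.X * Polynomial.C (ω ^ q)).natDegree
              ≤ s * 1 := Nat.mul_le_mul_left s this
            _ = s := Nat.mul_one s
        have h2 : (((Polynomial.X + 1 : K[X])) ^ (k - 1 - s)).natDegree ≤ k - 1 - s := by
          refine le_trans (Polynomial.natDegree_pow_le) ?_
          have : (Polynomial.X + 1 : K[X]).natDegree ≤ 1 := by
            refine le_trans (Polynomial.natDegree_add_le _ _) ?_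
            simp [Polynomial.natDegree_X, Polynomial.natDegree_one]
          calc (k - 1 - s) * (Polynomial.X + 1 : K[X]).natDegree ≤ (k - 1 - s) * 1 :=
              Nat.mul_le_mul_left _ this
            _ = k - 1 - s := Nat.mul_one _
        omega
      exact lt_of_le_of_lt (Polynomial.natDegree_sum_le_of_forall_le _ _ hb) (by omega)
    have hGeval : ∀ y : K, G.eval y
        = ∑ s ∈ Finset.range k, FK.coeff s * (ω + y * ω ^ q) ^ s * (y + 1) ^ (k - 1 - s) := by
      intro y
      rw [hGdef, Polynomial.eval_finset_sum]
      refine Finset.sum_congr rfl fun s _ => ?_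
      simp [Polynomial.eval_mul, Polynomial.eval_pow, Polynomial.eval_add, Polynomial.eval_C,
        Polynomial.eval_X, Polynomial.eval_one]
    have hG1 : ∀ j : Fin q, (B j + 1) ^ (k - 1) * FK.eval (AK j) = G.eval (B j) := by
      intro j
      rw [hGeval, Polynomial.eval_eq_sum_range' hFKdeg, Finset.mul_sum]
      refine Finset.sum_congr rfl fun s hs => ?_
      rw [Finset.mem_range] at hs
      have hsplit : (B j + 1) ^ (k - 1) = (B j + 1) ^ (k - 1 - s) * (B j + 1) ^ s := by
        rw [← pow_add]
        congr 1
        omega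
      have hAB : (B j + 1) ^ s * AK j ^ s = (ω + B j * ω ^ q) ^ s := by
        rw [← mul_pow]
        congr 1
        rw [mul_comm]
        exact hAKmul j
      rw [hsplit, ← hAB]
      ring
    have hG1e : G.eval 1 = FK.coeff (k - 1) * δ ^ (k - 1) := by
      rw [hGeval]
      have h11 : (1 : K) + 1 = 0 := CharTwo.add_self_eq_zero 1
      rw [Finset.sum_eq_single (k - 1)]
      · rw [Nat.sub_self, pow_zero, mul_one, one_mul, hδdef]
      · intro s hs hne
        rw [Finset.mem_range] at hs
        rw [h11, zero_pow (by omega : k - 1 - s ≠ 0), mul_zero]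
      · intro h
        exact absurd (Finset.mem_range.mpr (by omega)) h
    -- geometric sums
    have hgeom : ∀ e : ℕ, e < k →
        ∑ n ∈ Finset.range (q + 1), (α ^ (((r + 1 + e : ℕ) : ℤ) + i)) ^ n = 0 := by
      intro e he
      set E : ℤ := ((r + 1 + e : ℕ) : ℤ) + i with hEdef
      have hE1 : 1 ≤ E := by rw [hEdef]; push_cast; omega
      have hEq : E ≤ q := by rw [hEdef]; push_cast; omega
      have hζ1 : α ^ E ≠ 1 := by
        intro h
        have hdvd := (hαprim.zpow_eq_one_iff_dvd E).mp h
        have := Int.le_of_dvd (by omega) hdvd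
        push_cast at this
        omega
      have hζq : (α ^ E) ^ (q + 1) = 1 := by
        rw [← zpow_natCast (α ^ E) (q + 1), ← zpow_mul, mul_comm, zpow_mul, zpow_natCast, hαq1,
          one_zpow]
      rw [geom_sum_eq hζ1, hζq, sub_self, zero_div]
    -- the combined function on the circle
    set φ : ℕ → K := fun n => (α ^ n) ^ (r + 1) * G.eval (α ^ n) * (α ^ n) ^ i with hφdef
    have hφsum : ∑ n ∈ Finset.range (q + 1), φ n = 0 := by
      have hφn : ∀ n, φ n = ∑ e ∈ Finset.range k,
          G.coeff e * (α ^ (((r + 1 + e : ℕ) : ℤ) + i)) ^ n := by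
        intro n
        rw [hφdef]
        simp only
        rw [Polynomial.eval_eq_sum_range' hGdeg, Finset.mul_sum, Finset.sum_mul]
        refine Finset.sum_congr rfl fun e _ => ?_
        have hαn0 : (α ^ n : K) ≠ 0 := pow_ne_zero _ hα0
        have h1 : (α ^ n) ^ (r + 1) * (G.coeff e * (α ^ n) ^ e) * (α ^ n) ^ i
            = G.coeff e * ((α ^ n) ^ (((r + 1 + e : ℕ) : ℤ) + i)) := by
          have h2 : (α ^ n) ^ (((r + 1 + e : ℕ) : ℤ) + i)
              = (α ^ n) ^ (r + 1) * (α ^ n) ^ e * (α ^ n) ^ i := by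
            rw [zpow_add₀ hαn0, zpow_natCast, pow_add]
          rw [h2]
          ring
        rw [h1]
        congr 1
        rw [← zpow_natCast α n, ← zpow_mul, mul_comm, zpow_mul, zpow_natCast]
      rw [Finset.sum_congr rfl fun n _ => hφn n, Finset.sum_comm]
      rw [Finset.sum_congr rfl fun e he => ?_, Finset.sum_const_zero]
      rw [← Finset.mul_sum, hgeom e (Finset.mem_range.mp he), mul_zero]
    -- per-term rewriting
    have hxj : ∀ j : Fin q, x ^ (j : ℕ) = α ^ (-i) * B j ^ i := by
      intro j
      rw [hxdef, ← zpow_natCast (α ^ i) (j : ℕ), ← zpow_mul, hBdef]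
      simp only
      rw [← zpow_natCast α ((j : ℕ) + 1), ← zpow_mul, ← zpow_add₀ hα0]
      congr 1
      push_cast
      ring
    have hxq : x ^ q = α ^ (-i) := by
      rw [hxdef, ← zpow_natCast (α ^ i) q, ← zpow_mul]
      have h1 : i * (q : ℤ) = -i + ((q : ℤ) + 1) * i := by ring
      rw [h1, zpow_add₀ hα0, zpow_mul]
      have h2 : (α : K) ^ ((q : ℤ) + 1) = 1 := by
        rw [(by push_cast; ring : ((q : ℤ) + 1) = ((q + 1 : ℕ) : ℤ)), zpow_natCast, hαq1]
      rw [h2, one_zpow, mul_one]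
    have hterm1 : ∀ j : Fin q,
        algebraMap F K (wfun f (Fin.castSucc j)) * x ^ ((Fin.castSucc j : Fin (q + 1)) : ℕ)
          = α ^ (-i) * φ ((j : ℕ) + 1) := by
      intro j
      have hw1 : wfun f (Fin.castSucc j) = θ (Fin.castSucc j) * f.eval (a j) := by
        simp only [hwdef, Fin.snoc_castSucc]
      have hΘ : ΘK (Fin.castSucc j) = (B j + 1) ^ (k - 1) * B j ^ (r + 1) := by
        simp only [hΘKdef, Fin.coe_castSucc, j.isLt, dif_pos, Fin.eta]
      have hφj : φ ((j : ℕ) + 1) = B j ^ (r + 1) * G.eval (B j) * B j ^ i := by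
        simp only [hφdef, hBdef]
      rw [hw1, map_mul, hθ, hevalmap, hΘ, Fin.coe_castSucc, hxj j, hφj, ← hG1 j]
      ring
    have hterm2 : algebraMap F K (wfun f (Fin.last q)) * x ^ ((Fin.last q : Fin (q + 1)) : ℕ)
        = α ^ (-i) * φ 0 := by
      have hw1 : wfun f (Fin.last q) = θ (Fin.last q) * f.coeff (k - 1) := by
        simp only [hwdef, Fin.snoc_last]
      have hΘ : ΘK (Fin.last q) = δ ^ (k - 1) := by
        simp only [hΘKdef, Fin.val_last]
        rw [dif_neg (by omega)]
      have hφ0 : φ 0 = G.eval 1 := by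
        simp only [hφdef, pow_zero, one_pow, one_zpow, one_mul, mul_one]
      rw [hw1, map_mul, hθ, hΘ]
      rw [Fin.val_last, hxq, hφ0, hG1e]
      have : algebraMap F K (f.coeff (k - 1)) = FK.coeff (k - 1) := by
        rw [hFKdef, Polynomial.coeff_map]
      rw [this]
      ring
    rw [hev, Fin.sum_univ_castSucc]
    rw [Finset.sum_congr rfl fun j _ => hterm1 j, hterm2, ← Finset.mul_sum]
    rw [← mul_add]
    have hfin : ∑ j : Fin q, φ ((j : ℕ) + 1) + φ 0 = 0 := by
      rw [Fin.sum_univ_eq_sum_range (fun n => φ (n + 1)) q]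
      rw [← Finset.sum_range_succ']
      exact hφsum
    rw [hfin, mul_zero]
  -- divisibility by g₀
  have hIccInj : ∀ i ∈ Finset.Icc (-(r : ℤ)) (r : ℤ), ∀ j ∈ Finset.Icc (-(r : ℤ)) (r : ℤ),
      α ^ i = α ^ j → i = j := by
    intro i hi j hj h
    rw [Finset.mem_Icc] at hi hj
    have e1 : (((i + (r : ℤ)).toNat : ℤ)) = i + r := Int.toNat_of_nonneg (by omega)
    have e2 : (((j + (r : ℤ)).toNat : ℤ)) = j + r := Int.toNat_of_nonneg (by omega)
    have h2 : α ^ ((i + (r : ℤ)).toNat) = α ^ ((j + (r : ℤ)).toNat) := by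
      rw [← zpow_natCast α, ← zpow_natCast α, e1, e2, zpow_add₀ hα0, zpow_add₀ hα0, h]
    have h3 := hαprim.pow_inj (by omega : (i + (r : ℤ)).toNat < q + 1)
      (by omega : (j + (r : ℤ)).toNat < q + 1) h2
    omega
  have hdvd : ∀ f : F[X], f.natDegree < k → g₀ ∣ toPoly (wfun f) := by
    intro f hf
    rw [← Polynomial.map_dvd_map (algebraMap F K) hinjF hg₀monic, hmapg₀]
    have hcop : (↑(Finset.Icc (-(r : ℤ)) (r : ℤ)) : Set ℤ).Pairwise
        (Function.onFun IsCoprime fun i : ℤ => X - C (α ^ i)) := by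
      intro i hi j hj hij
      rw [Finset.mem_coe] at hi hj
      exact Polynomial.isCoprime_X_sub_C_of_isUnit_sub
        (IsUnit.mk0 _ (sub_ne_zero_of_ne fun h => hij (hIccInj i hi j hj h)))
    rw [hg₁]
    refine Finset.prod_dvd_of_coprime hcop fun i hi => ?_
    rw [Polynomial.dvd_iff_isRoot]
    exact hkey f hf i hi
  -- membership in the span
  have hspan : ∀ w : Fin (q + 1) → F, g₀ ∣ toPoly w → w ∈ Code := by
    intro w hdv
    obtain ⟨mm, hmm⟩ := hdv
    by_cases hmm0 : mm = 0
    · have h0 : toPoly w = 0 := by rw [hmm, hmm0, mul_zero]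
      have hw0 : w = 0 := by
        funext j
        rw [Pi.zero_apply, ← htoPcoeff w j, h0, Polynomial.coeff_zero]
      rw [hw0]
      exact Code.zero_mem
    · have hmmdeg : mm.natDegree ≤ k - 1 := by
        have h1 : (toPoly w).natDegree = g₀.natDegree + mm.natDegree := by
          rw [hmm]
          exact Polynomial.natDegree_mul hg₀monic.ne_zero hmm0
        have h2 := htoPdeg w
        omega
      have hcoeffw : ∀ i : Fin (q + 1), w i = ∑ t ∈ Finset.range k,
          mm.coeff t * (if (t : ℕ) ≤ (i : ℕ) then c ((i : ℕ) - t) else 0) := by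
        intro i
        have h1 : w i = (mm * g₀).coeff (i : ℕ) := by
          rw [mul_comm, ← hmm, htoPcoeff]
        rw [h1, Polynomial.coeff_mul, Finset.Nat.sum_antidiagonal_eq_sum_range_succ_mk]
        have e1 : ∑ t ∈ Finset.range ((i : ℕ) + 1), mm.coeff t * g₀.coeff ((i : ℕ) - t)
            = ∑ t ∈ Finset.range ((i : ℕ) + 1),
              mm.coeff t * (if t ≤ (i : ℕ) then c ((i : ℕ) - t) else 0) := by
          refine Finset.sum_congr rfl fun t ht => ?_
          rw [Finset.mem_range] at ht
          rw [if_pos (by omega), hcoeffg₀]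
        rw [e1]
        rw [Finset.sum_subset (Finset.range_subset_range.mpr (by omega : (i : ℕ) + 1 ≤ q + 1))
          (fun t _ hnt => by
            rw [Finset.mem_range, not_lt] at hnt
            rw [if_neg (by omega), mul_zero])]
        rw [(Finset.sum_subset (Finset.range_subset_range.mpr (by omega : k ≤ q + 1))
          (fun t _ hnt => by
            rw [Finset.mem_range, not_lt] at hnt
            rw [Polynomial.coeff_eq_zero_of_natDegree_lt (by omega : mm.natDegree < t), zero_mul])).symm]
      rw [hCode]
      have hwsum : w = ∑ t ∈ Finset.range k, mm.coeff t •
          (fun i : Fin (q + 1) => if (t : ℕ) ≤ (i : ℕ) then c ((i : ℕ) - t) else 0) := by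
        funext i
        rw [Finset.sum_apply, hcoeffw i]
        exact Finset.sum_congr rfl fun t _ => rfl
      rw [hwsum]
      refine Submodule.sum_mem _ fun t ht => ?_
      refine Submodule.smul_mem _ _ (Submodule.subset_span ?_)
      exact ⟨⟨t, Finset.mem_range.mp ht⟩, rfl⟩
  -- the linear map
  obtain ⟨Φ, hΦapp⟩ : ∃ Φ : F[X] →ₗ[F] (Fin (q + 1) → F), ∀ f, Φ f = wfun f := by
    refine ⟨⟨⟨wfun, ?_⟩, ?_⟩, fun f => rfl⟩
    · intro f g
      funext i
      simp only [hwdef]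
      induction i using Fin.lastCases with
      | last => simp only [Fin.snoc_last, Polynomial.coeff_add, Pi.add_apply]; ring
      | cast j => simp only [Fin.snoc_castSucc, Polynomial.eval_add, Pi.add_apply]; ring
    · intro s f
      funext i
      simp only [hwdef, RingHom.id_apply]
      induction i using Fin.lastCases with
      | last =>
        simp only [Fin.snoc_last, Polynomial.coeff_smul, Pi.smul_apply, smul_eq_mul]
        ring
      | cast j =>
        simp only [Fin.snoc_castSucc, Polynomial.eval_smul, Pi.smul_apply, smul_eq_mul]
        ring
  have hnatdeg : ∀ f ∈ Polynomial.degreeLT F k, f.natDegree < k := by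
    intro f hf
    rw [Polynomial.mem_degreeLT] at hf
    by_cases h0 : f = 0
    · rw [h0, Polynomial.natDegree_zero]
      omega
    · exact (Polynomial.natDegree_lt_iff_degree_lt h0).mpr hf
  set V : Submodule F (Fin (q + 1) → F) := Submodule.map Φ (Polynomial.degreeLT F k) with hVdef
  have hVle : V ≤ Code := by
    rintro w ⟨f, hf, rfl⟩
    rw [hΦapp]
    exact hspan _ (hdvd f (hnatdeg f hf))
  have hVrank : Module.finrank F V = k := by
    have h2 : Function.Injective (Φ ∘ₗ (Polynomial.degreeLT F k).subtype) := by
      rw [← LinearMap.ker_eq_bot, eq_bot_iff]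
      rintro ⟨f, hf⟩ hker
      rw [LinearMap.mem_ker, LinearMap.comp_apply, Submodule.subtype_apply] at hker
      have heval : ∀ j : Fin q, f.eval (a j) = 0 := by
        intro j
        have hc1 := congrFun ((hΦapp f) ▸ hker) (Fin.castSucc j)
        simp only [hwdef, Fin.snoc_castSucc, Pi.zero_apply] at hc1
        exact (mul_eq_zero.mp hc1).resolve_left (hθ0 _)
      have hf0 : f = 0 := by
        refine Polynomial.eq_zero_of_natDegree_lt_card_of_eval_eq_zero' f
          (Finset.univ.image a) ?_ ?_
        · intro x hx
          rw [Finset.mem_image] at hx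
          obtain ⟨j, -, rfl⟩ := hx
          exact heval j
        · rw [Finset.card_image_of_injective _ hainj, Finset.card_univ, Fintype.card_fin]
          exact lt_of_lt_of_le (hnatdeg f hf) hkq
      simp only [Submodule.mem_bot, Submodule.mk_eq_zero]
      exact hf0
    have h3 := LinearMap.finrank_range_of_inj h2
    rw [LinearMap.range_comp, Submodule.range_subtype, ← hVdef] at h3
    rw [h3, (Polynomial.degreeLTEquiv F k).finrank_eq, Module.finrank_pi, Fintype.card_fin]
  have hCrank : Module.finrank F Code ≤ k := by
    rw [hCode]
    set vfun : Fin k → (Fin (q + 1) → F) := fun t =>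
      fun i : Fin (q + 1) => if (t : ℕ) ≤ (i : ℕ) then c ((i : ℕ) - (t : ℕ)) else 0 with hvdef
    have hset : { v | ∃ t : Fin k, v = fun i : Fin (q + 1) =>
        if (t : ℕ) ≤ (i : ℕ) then c ((i : ℕ) - (t : ℕ)) else 0 } = Set.range vfun := by
      ext v
      simp only [Set.mem_setOf_eq, Set.mem_range, hvdef]
      exact ⟨fun ⟨t, ht⟩ => ⟨t, ht.symm⟩, fun ⟨t, ht⟩ => ⟨t, ht.symm⟩⟩
    rw [hset]
    refine le_trans (finrank_span_le_card _) ?_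
    rw [Set.toFinset_range]
    exact le_trans (Finset.card_image_le) (by rw [Finset.card_univ, Fintype.card_fin])
  have hVC : V = Code :=
    Submodule.eq_of_le_of_finrank_le hVle (by rw [hVrank]; exact hCrank)
  have hdegiff : ∀ f : F[X], f ∈ Polynomial.degreeLT F k ↔ f.degree ≤ ((k - 1 : ℕ) : WithBot ℕ) := by
    intro f
    rw [Polynomial.mem_degreeLT]
    constructor
    · intro h
      by_cases h0 : f = 0
      · rw [h0, Polynomial.degree_zero]
        exact bot_le
      · have h1 := (Polynomial.natDegree_lt_iff_degree_lt h0).mpr h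
        refine le_trans Polynomial.degree_le_natDegree ?_
        exact_mod_cast Nat.cast_le.mpr (by omega : f.natDegree ≤ k - 1)
    · intro h
      refine lt_of_le_of_lt h ?_
      exact_mod_cast Nat.cast_lt.mpr (by omega : k - 1 < k)
  refine ⟨⟨a, θ, habij, hθ0, ?_⟩, ?_, ?_⟩
  · -- set equality
    rw [← hVC]
    ext w
    simp only [hVdef, Submodule.map_coe, Set.mem_image, SetLike.mem_coe, Set.mem_setOf_eq]
    constructor
    · rintro ⟨f, hf, rfl⟩
      refine ⟨f, (hdegiff f).mp hf, ?_⟩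
      funext i
      rw [hΦapp]
      simp only [hwdef, Algebra.algebraMap_self_apply]
    · rintro ⟨f, hfd, rfl⟩
      refine ⟨f, (hdegiff f).mpr hfd, ?_⟩
      funext i
      rw [hΦapp]
      simp only [hwdef, Algebra.algebraMap_self_apply]
  · rw [← hVC]
    exact hVrank
  · -- minimum distance
    intro w hw hw0
    rw [← hVC] at hw
    obtain ⟨f, hf, rfl⟩ := hw
    have hfne : f ≠ 0 := by
      rintro rfl
      exact hw0 (map_zero Φ)
    have hfdeg : f.natDegree ≤ k - 1 := by
      have := hnatdeg f hf
      omega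
    set Z := Finset.univ.filter (fun j : Fin q => f.eval (a j) = 0) with hZdef
    have hZcard : Z.card ≤ f.natDegree := by
      have himg : Z.image a ⊆ f.roots.toFinset := by
        intro x hx
        rw [Finset.mem_image] at hx
        obtain ⟨j, hj, rfl⟩ := hx
        rw [hZdef, Finset.mem_filter] at hj
        rw [Multiset.mem_toFinset, Polynomial.mem_roots hfne]
        exact hj.2
      calc Z.card = (Z.image a).card := (Finset.card_image_of_injective _ hainj).symm
        _ ≤ f.roots.toFinset.card := Finset.card_le_card himg
        _ ≤ Multiset.card f.roots := Multiset.toFinset_card_le _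
        _ ≤ f.natDegree := Polynomial.card_roots' f
    have hcompl : Z.card + (Finset.univ.filter (fun j : Fin q => ¬ (f.eval (a j) = 0))).card
        = q := by
      rw [hZdef, Finset.card_filter_add_card_filter_not, Finset.card_univ,
        Fintype.card_fin]
    set NZq := Finset.univ.filter (fun j : Fin q => ¬ (f.eval (a j) = 0)) with hNZqdef
    have hnorm : ∀ s : Finset (Fin (q + 1)), (∀ i ∈ s, Φ f i ≠ 0) → s.card ≤ hammingNorm (Φ f) := by
      intro s hs
      refine Finset.card_le_card ?_
      intro i hi
      simp only [Finset.mem_filter, Finset.mem_univ, true_and]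
      exact hs i hi
    have hnz1 : ∀ i ∈ NZq.image Fin.castSucc, Φ f i ≠ 0 := by
      intro x hx
      rw [Finset.mem_image] at hx
      obtain ⟨j, hj, rfl⟩ := hx
      rw [hNZqdef, Finset.mem_filter] at hj
      rw [hΦapp]
      simp only [hwdef, Fin.snoc_castSucc]
      exact mul_ne_zero (hθ0 _) hj.2
    have himgcard : (NZq.image Fin.castSucc).card = NZq.card :=
      Finset.card_image_of_injective _ (Fin.castSucc_injective q)
    by_cases hckk : f.coeff (k - 1) = 0
    · have hfdeg2 : f.natDegree ≤ k - 2 := by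
        by_contra hgt
        push_neg at hgt
        have hnd : f.natDegree = k - 1 := by omega
        have hlc := Polynomial.leadingCoeff_ne_zero.mpr hfne
        rw [Polynomial.leadingCoeff, hnd] at hlc
        exact hlc hckk
      have h1 := hnorm _ hnz1
      rw [himgcard] at h1
      omega
    · have hnotin : Fin.last q ∉ NZq.image Fin.castSucc := by
        intro h
        rw [Finset.mem_image] at h
        obtain ⟨j, -, hj⟩ := h
        exact absurd hj (Fin.castSucc_lt_last j).ne
      have hnz2 : ∀ i ∈ insert (Fin.last q) (NZq.image Fin.castSucc), Φ f i ≠ 0 := by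
        intro x hx
        rcases Finset.mem_insert.mp hx with rfl | hx'
        · rw [hΦapp]
          simp only [hwdef, Fin.snoc_last]
          exact mul_ne_zero (hθ0 _) hckk
        · exact hnz1 x hx'
      have h1 := hnorm _ hnz2
      rw [Finset.card_insert_of_notMem hnotin, himgcard] at h1
      omega
end
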